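/- arXiv:math/9811094 — 7 statements merged into one kernel-verified Lean document; each statement's English description precedes it below -/
import Mathlib

section
/- The map Φ : C(Γ̃_A, ℂ) → ℓ^∞(𝒢) defined by Φ(f)(j) = f(j, c_j) for j ∈ 𝒢 is an isometric unital *-algebra homomorphism (in particular injective) whose range is exactly R̃_A. Consequently, every function in R̃_A (viewed on the dense copy {(j,c_j) : j ∈ 𝒢} of 𝒢 in Γ̃_A) has a unique continuous extension to Γ̃_A, and R̃_A is isomorphic as a C*-algebra to C(Γ̃_A, ℂ). -/
open scoped BoundedContinuousFunction
open OnePoint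

noncomputable section

namespace CK

variable {G : Type*}

/-- The `i`-th row of `A` as a complex-valued function on `G`. -/
def rho (A : G → G → Bool) (i : G) : G → ℂ := fun j => if A i j then 1 else 0

/-- The `i`-th row of the identity matrix as a complex-valued function on `G`. -/
def del [DecidableEq G] (i : G) : G → ℂ := fun j => if j = i then 1 else 0

/-- The `j`-th column of `A` as an element of `{0,1}^G`. -/
def col (A : G → G → Bool) (j : G) : G → Bool := fun i => A i j

variable [TopologicalSpace G] [DiscreteTopology G]

/-- `rho A i` as an element of `ℓ^∞(G)`, realized as bounded (continuous) functions on the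
discrete space `G`. -/
def rhoB (A : G → G → Bool) (i : G) : G →ᵇ ℂ :=
  BoundedContinuousFunction.ofNormedAddCommGroupDiscrete (rho A i) 1
    (by intro j; simp only [rho]; split <;> simp)

/-- `del i` as an element of `ℓ^∞(G)`. -/
def delB [DecidableEq G] (i : G) : G →ᵇ ℂ :=
  BoundedContinuousFunction.ofNormedAddCommGroupDiscrete (del i) 1
    (by intro j; simp only [del]; split <;> simp)

/-- The space `Γ̃_A`: the closure of `{(j, c_j) : j ∈ G}` in `G̃ × {0,1}^G`. -/
def GammaT (A : G → G → Bool) : Set (OnePoint G × (G → Bool)) :=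
  closure {p | ∃ j : G, p = ((j : OnePoint G), col A j)}

instance GammaT.compactSpace (A : G → G → Bool) : CompactSpace (GammaT A) :=
  isCompact_iff_compactSpace.mp (isClosed_closure).isCompact

variable [DecidableEq G]

/-- The generators of `R_A`: the rows of `A` and of the identity matrix. -/
def gens (A : G → G → Bool) : Set (G →ᵇ ℂ) :=
  Set.range (rhoB A) ∪ Set.range (delB (G := G))

/-- `R_A`, the smallest closed *-subalgebra of `ℓ^∞(G)` containing the rows of `A` and of the
identity matrix: the closure of the non-unital star subalgebra generated by them. -/
def RA (A : G → G → Bool) : Set (G →ᵇ ℂ) :=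
  closure (NonUnitalStarAlgebra.adjoin ℂ (gens A) : Set (G →ᵇ ℂ))

/-- `R̃_A`, the smallest closed unital *-subalgebra of `ℓ^∞(G)` containing `R_A` and `1`. -/
def RtA (A : G → G → Bool) : StarSubalgebra ℂ (G →ᵇ ℂ) :=
  (StarAlgebra.adjoin ℂ (gens A)).topologicalClosure

/-- The restriction map `Φ : C(Γ̃_A, ℂ) → ℓ^∞(G)`, `Φ(f)(j) = f(j, c_j)`. -/
def Phi (A : G → G → Bool) (f : C(GammaT A, ℂ)) : G →ᵇ ℂ :=
  BoundedContinuousFunction.ofNormedAddCommGroupDiscrete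
    (fun j => f ⟨((j : OnePoint G), col A j), subset_closure ⟨j, rfl⟩⟩) ‖f‖
    (fun j => f.norm_coe_le_norm _)

end CK
section Aux

open CK

variable {G : Type*} [TopologicalSpace G] [DiscreteTopology G] [DecidableEq G] (A : G → G → Bool)

/-- The canonical dense points of `Γ̃_A`. -/
def CKpt (j : G) : GammaT A := ⟨((j : OnePoint G), col A j), subset_closure ⟨j, rfl⟩⟩

lemma CKPhi_apply (f : C(GammaT A, ℂ)) (j : G) : Phi A f j = f (CKpt A j) := rfl

lemma CKdense_pt : Dense (Set.range (CKpt A)) := by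
  intro x
  rw [closure_subtype]
  have himg : Subtype.val '' (Set.range (CKpt A)) =
      {p : OnePoint G × (G → Bool) | ∃ j : G, p = ((j : OnePoint G), col A j)} := by
    ext p
    constructor
    · rintro ⟨q, ⟨j, rfl⟩, rfl⟩; exact ⟨j, rfl⟩
    · rintro ⟨j, rfl⟩; exact ⟨CKpt A j, ⟨j, rfl⟩, rfl⟩
  rw [himg]
  exact x.2

/-- Pullback of `rho` to `Γ̃_A`. -/
def CKP (i : G) : C(GammaT A, ℂ) :=
  ⟨fun x => if x.1.2 i then 1 else 0, by
    have h1 : Continuous fun x : GammaT A => x.1.2 i :=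
      (continuous_apply i).comp (continuous_snd.comp continuous_subtype_val)
    exact (continuous_of_discreteTopology
      (f := fun b : Bool => if b then (1 : ℂ) else 0)).comp h1⟩

open scoped Classical

/-- Pullback of `del` to `Γ̃_A`. -/
def CKD (i : G) : C(GammaT A, ℂ) :=
  ⟨fun x => if x.1.1 = (i : OnePoint G) then 1 else 0, by
    have hclopen : IsClopen {x : GammaT A | x.1.1 = (i : OnePoint G)} := by
      have h1 : IsClopen ({(i : OnePoint G)} : Set (OnePoint G)) := by
        constructor
        · exact isClosed_singleton
        · rw [← Set.image_singleton]
          exact OnePoint.isOpen_image_coe.2 (isOpen_discrete _)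
      exact h1.preimage (continuous_fst.comp continuous_subtype_val)
    apply Continuous.if
    · intro a ha
      rw [hclopen.frontier_eq] at ha
      exact absurd ha (Set.notMem_empty a)
    · exact continuous_const
    · exact continuous_const⟩

lemma CKPhi_P (i : G) : Phi A (CKP A i) = rhoB A i := by
  ext j
  simp [CKPhi_apply, CKP, CKpt, rhoB, rho, col,
    BoundedContinuousFunction.coe_ofNormedAddCommGroupDiscrete]
  exact if_congr Iff.rfl rfl rfl

lemma CKPhi_D (i : G) : Phi A (CKD A i) = delB i := by
  ext j
  simp [CKPhi_apply, CKD, CKpt, delB, del,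
    BoundedContinuousFunction.coe_ofNormedAddCommGroupDiscrete, OnePoint.coe_eq_coe]

/-- `Φ` as a star algebra homomorphism. -/
def CKPhiHom : C(GammaT A, ℂ) →⋆ₐ[ℂ] (G →ᵇ ℂ) where
  toFun := Phi A
  map_one' := by ext j; simp [CKPhi_apply]
  map_mul' f g := by ext j; simp [CKPhi_apply]
  map_zero' := by ext j; simp [CKPhi_apply]
  map_add' f g := by ext j; simp [CKPhi_apply]
  commutes' c := by ext j; simp [CKPhi_apply]
  map_star' f := by ext j; simp [CKPhi_apply]

lemma CKnorm_Phi (f : C(GammaT A, ℂ)) : ‖Phi A f‖ = ‖f‖ := by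
  refine le_antisymm
    ((BoundedContinuousFunction.norm_le (norm_nonneg f)).2 fun j => f.norm_coe_le_norm _) ?_
  have hsub : Set.range (CKpt A) ⊆ {x : GammaT A | ‖f x‖ ≤ ‖Phi A f‖} := by
    rintro _ ⟨j, rfl⟩
    exact (Phi A f).norm_coe_le_norm j
  have hclosed : IsClosed {x : GammaT A | ‖f x‖ ≤ ‖Phi A f‖} :=
    isClosed_le (f.continuous.norm) continuous_const
  have hall : ∀ x : GammaT A, ‖f x‖ ≤ ‖Phi A f‖ := by
    intro x
    have h1 : closure (Set.range (CKpt A)) ⊆ {x : GammaT A | ‖f x‖ ≤ ‖Phi A f‖} :=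
      hclosed.closure_subset_iff.2 hsub
    exact h1 (by rw [(CKdense_pt A).closure_eq]; trivial)
  exact (ContinuousMap.norm_le f (norm_nonneg _)).2 hall

lemma CKisom : Isometry (Phi A) :=
  AddMonoidHomClass.isometry_of_norm (CKPhiHom A) (CKnorm_Phi A)

lemma CKsep : (StarAlgebra.adjoin ℂ
    (Set.range (CKP A) ∪ Set.range (CKD A))).SeparatesPoints := by
  rintro ⟨⟨a, c⟩, hx⟩ ⟨⟨b, d⟩, hy⟩ hxy
  by_cases hab : a = b
  · subst hab
    have hcd : c ≠ d := by
      rintro rfl; exact hxy rfl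
    obtain ⟨i, hi⟩ : ∃ i, c i ≠ d i := by
      by_contra h; push_neg at h; exact hcd (funext h)
    refine ⟨_, ⟨CKP A i, StarAlgebra.subset_adjoin ℂ _ (Or.inl ⟨i, rfl⟩), rfl⟩, ?_⟩
    show CKP A i ⟨(a, c), hx⟩ ≠ CKP A i ⟨(a, d), hy⟩
    simp only [CKP, ContinuousMap.coe_mk]
    rcases Bool.eq_false_or_eq_true (c i) with hc | hc <;>
      rcases Bool.eq_false_or_eq_true (d i) with hd | hd <;>
      simp only [hc, hd] at hi ⊢ <;> simp at hi ⊢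
  · rcases a with _ | j
    · rcases b with _ | j
      · exact absurd rfl hab
      · refine ⟨_, ⟨CKD A j, StarAlgebra.subset_adjoin ℂ _ (Or.inr ⟨j, rfl⟩), rfl⟩, ?_⟩
        show CKD A j ⟨(none, c), hx⟩ ≠ CKD A j ⟨((j : OnePoint G), d), hy⟩
        simp only [CKD, ContinuousMap.coe_mk]
        have h0 : (none : OnePoint G) ≠ (j : OnePoint G) := hab
        simp [h0]
        exact h0
    · refine ⟨_, ⟨CKD A j, StarAlgebra.subset_adjoin ℂ _ (Or.inr ⟨j, rfl⟩), rfl⟩, ?_⟩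
      show CKD A j ⟨((j : OnePoint G), c), hx⟩ ≠ CKD A j ⟨(b, d), hy⟩
      simp only [CKD, ContinuousMap.coe_mk]
      have h0 : b ≠ (j : OnePoint G) := fun h => hab h.symm
      simp [h0]

lemma CKmem_RtA (f : C(GammaT A, ℂ)) : Phi A f ∈ RtA A := by
  have htop := ContinuousMap.starSubalgebra_topologicalClosure_eq_top_of_separatesPoints
    _ (CKsep A)
  have hle : (StarAlgebra.adjoin ℂ
      (Set.range (CKP A) ∪ Set.range (CKD A))).topologicalClosure ≤
      StarSubalgebra.comap (CKPhiHom A) (RtA A) := by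
    apply StarSubalgebra.topologicalClosure_minimal
    · apply StarAlgebra.adjoin_le
      rintro g (⟨i, rfl⟩ | ⟨i, rfl⟩)
      · rw [SetLike.mem_coe, StarSubalgebra.mem_comap]
        show Phi A (CKP A i) ∈ RtA A
        rw [CKPhi_P]
        exact (StarAlgebra.adjoin ℂ (gens A)).le_topologicalClosure
          (StarAlgebra.subset_adjoin ℂ _ (Or.inl ⟨i, rfl⟩))
      · rw [SetLike.mem_coe, StarSubalgebra.mem_comap]
        show Phi A (CKD A i) ∈ RtA A
        rw [CKPhi_D]
        exact (StarAlgebra.adjoin ℂ (gens A)).le_topologicalClosure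
          (StarAlgebra.subset_adjoin ℂ _ (Or.inr ⟨i, rfl⟩))
    · show IsClosed (⇑(CKPhiHom A) ⁻¹' (RtA A : Set (G →ᵇ ℂ)))
      exact ((StarAlgebra.adjoin ℂ (gens A)).isClosed_topologicalClosure).preimage
        (CKisom A).continuous
  have hf : f ∈ (StarAlgebra.adjoin ℂ
      (Set.range (CKP A) ∪ Set.range (CKD A))).topologicalClosure := by
    rw [htop]; trivial
  exact (StarSubalgebra.mem_comap _ _ _).1 (hle hf)

lemma CKRtA_le_range : (RtA A : Set (G →ᵇ ℂ)) ⊆ Set.range (Phi A) := by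
  have h : RtA A ≤ (CKPhiHom A).range := by
    apply StarSubalgebra.topologicalClosure_minimal
    · apply StarAlgebra.adjoin_le
      rintro g (⟨i, rfl⟩ | ⟨i, rfl⟩)
      · exact ⟨CKP A i, CKPhi_P A i⟩
      · exact ⟨CKD A i, CKPhi_D A i⟩
    · show IsClosed (Set.range (Phi A))
      exact (CKisom A).isClosedEmbedding.isClosed_range
  exact fun g hg => h hg

end Aux
/-- The map `Φ : C(Γ̃_A, ℂ) → ℓ^∞(G)`, `Φ(f)(j) = f(j, c_j)`, is an isometric
unital *-algebra homomorphism (in particular injective) whose range is exactly `R̃_A`;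
consequently every function in `R̃_A` has a unique continuous extension to `Γ̃_A`, and
`R̃_A ≅ C(Γ̃_A, ℂ)`. -/
theorem stmt_0 {G : Type*} [Nonempty G] [TopologicalSpace G] [DiscreteTopology G]
    [DecidableEq G] (A : G → G → Bool) (hA : ∀ i : G, ∃ j : G, A i j = true) :
    (∀ f g : C(CK.GammaT A, ℂ), CK.Phi A (f * g) = CK.Phi A f * CK.Phi A g) ∧
    (∀ f g : C(CK.GammaT A, ℂ), CK.Phi A (f + g) = CK.Phi A f + CK.Phi A g) ∧
    (∀ (c : ℂ) (f : C(CK.GammaT A, ℂ)), CK.Phi A (c • f) = c • CK.Phi A f) ∧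
    CK.Phi A 1 = 1 ∧
    (∀ f : C(CK.GammaT A, ℂ), CK.Phi A (star f) = star (CK.Phi A f)) ∧
    (∀ f : C(CK.GammaT A, ℂ), ‖CK.Phi A f‖ = ‖f‖) ∧
    Function.Injective (CK.Phi A) ∧
    Set.range (CK.Phi A) = (CK.RtA A : Set (G →ᵇ ℂ)) ∧
    (∀ g : G →ᵇ ℂ, g ∈ CK.RtA A →
      ∃! f : C(CK.GammaT A, ℂ), ∀ j : G,
        f ⟨((j : OnePoint G), CK.col A j), subset_closure ⟨j, rfl⟩⟩ = g j) := by

  refine ⟨fun f g => map_mul (CKPhiHom A) f g,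
    fun f g => map_add (CKPhiHom A) f g,
    fun c f => by ext j; simp [CKPhi_apply],
    map_one (CKPhiHom A),
    fun f => map_star (CKPhiHom A) f,
    CKnorm_Phi A,
    (CKisom A).injective,
    Set.Subset.antisymm (by rintro _ ⟨f, rfl⟩; exact CKmem_RtA A f) (CKRtA_le_range A),
    ?_⟩
  intro g hg
  obtain ⟨f, hf⟩ := CKRtA_le_range A hg
  refine ⟨f, fun j => ?_, fun f' hf' => ?_⟩
  · exact congrArg (fun h : G →ᵇ ℂ => h j) hf
  · refine (CKisom A).injective ?_
    rw [hf]
    ext j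
    exact hf' j
end
end

section
/- Let Φ : C(Γ̃_A, ℂ) → ℓ^∞(𝒢) be the isometric unital *-homomorphism Φ(f)(j) = f(j, c_j), whose range is R̃_A. Then Φ maps the ideal {f ∈ C(Γ̃_A, ℂ) : f(p) = 0 for every p ∈ Γ̃_A with p = (⋆, 𝟎)} (where 𝟎 denotes the identically zero element of {0,1}^𝒢; this condition is vacuous if (⋆,𝟎) ∉ Γ̃_A) onto R_A. In particular R_A is isomorphic as a C*-algebra to C₀(Γ_A), where Γ_A := Γ̃_A \ {(⋆, 𝟎)}. -/
open scoped BoundedContinuousFunction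
open OnePoint

noncomputable section

namespace CKProof
open CK
open scoped Classical
set_option linter.unusedSectionVars false

variable {G : Type*} [TopologicalSpace G] [DiscreteTopology G]

lemma continuous_indicator_clopen {Y : Type*} [TopologicalSpace Y] {s : Set Y}
    (hs : IsClopen s) [DecidablePred (· ∈ s)] :
    Continuous fun y => if y ∈ s then (1 : ℂ) else 0 := by
  apply IsLocallyConstant.continuous
  intro t
  by_cases h1 : (1 : ℂ) ∈ t <;> by_cases h0 : (0 : ℂ) ∈ t
  · convert isOpen_univ using 1
    ext y; by_cases hy : y ∈ s <;> simp [hy, h1, h0]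
  · convert hs.isOpen using 1
    ext y; by_cases hy : y ∈ s <;> simp [hy, h1, h0]
  · convert hs.compl.isOpen using 1
    ext y; by_cases hy : y ∈ s <;> simp [hy, h1, h0]
  · convert isOpen_empty using 1
    ext y; by_cases hy : y ∈ s <;> simp [hy, h1, h0]

lemma isClopen_coe_singleton (j : G) : IsClopen {(j : OnePoint G)} := by
  rw [← Set.image_singleton]
  exact ⟨OnePoint.isClosed_image_coe.2 ⟨isClosed_discrete _, isCompact_singleton⟩,
    OnePoint.isOpen_image_coe.2 (isOpen_discrete _)⟩

variable (A : G → G → Bool)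

/-- `f_i(p) = p.2(i)` as a continuous function on `Γ̃_A`. -/
def fi (i : G) : C(GammaT A, ℂ) :=
  ⟨fun p => if (p : OnePoint G × (G → Bool)).2 i then 1 else 0, by
    have h : Continuous fun p : GammaT A => (p : OnePoint G × (G → Bool)).2 i :=
      (continuous_apply i).comp (continuous_snd.comp continuous_subtype_val)
    exact (continuous_of_discreteTopology (f := fun b : Bool => if b then (1:ℂ) else 0)).comp h⟩

/-- `g_j(p) = [p.1 = j]` as a continuous function on `Γ̃_A`. -/
def gj (j : G) : C(GammaT A, ℂ) :=
  ⟨fun p => if (p : OnePoint G × (G → Bool)).1 ∈ ({(j : OnePoint G)} : Set (OnePoint G)) then 1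
      else 0, by
    classical
    exact (continuous_indicator_clopen (isClopen_coe_singleton j)).comp
      (continuous_fst.comp continuous_subtype_val)⟩

lemma fi_apply (i : G) (p : GammaT A) :
    fi A i p = if (p : OnePoint G × (G → Bool)).2 i then 1 else 0 := rfl

lemma gj_apply (j : G) (p : GammaT A) :
    gj A j p = if (p : OnePoint G × (G → Bool)).1 = (j : OnePoint G) then 1 else 0 := by
  simp [gj]

/-- the generating set upstairs -/
def S : Set C(GammaT A, ℂ) := Set.range (fi A) ∪ Set.range (gj A)

lemma Phi_apply (f : C(GammaT A, ℂ)) (j : G) :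
    Phi A f j = f ⟨((j : OnePoint G), col A j), subset_closure ⟨j, rfl⟩⟩ := rfl

lemma Phi_fi (i : G) : Phi A (fi A i) = rhoB A i := by
  ext j
  simp only [Phi_apply, fi_apply, rhoB, BoundedContinuousFunction.coe_ofNormedAddCommGroupDiscrete,
    rho, col]
  by_cases h : A i j = true <;> simp [h]

variable [DecidableEq G]

lemma Phi_gj (i : G) : Phi A (gj A i) = delB i := by
  ext j
  simp only [Phi_apply, gj_apply, delB, BoundedContinuousFunction.coe_ofNormedAddCommGroupDiscrete,
    del, OnePoint.coe_eq_coe]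

/-- `Φ` as a star algebra homomorphism. -/
def PhiHom : C(GammaT A, ℂ) →⋆ₐ[ℂ] (G →ᵇ ℂ) where
  toFun := Phi A
  map_one' := by ext j; simp [Phi_apply]
  map_mul' f g := by ext j; simp [Phi_apply]
  map_zero' := by ext j; simp [Phi_apply]
  map_add' f g := by ext j; simp [Phi_apply]
  commutes' c := by ext j; simp [Phi_apply]
  map_star' f := by ext j; simp [Phi_apply]

lemma PhiHom_apply (f : C(GammaT A, ℂ)) : PhiHom A f = Phi A f := rfl

/-- the subtype points corresponding to columns are dense in `Γ̃_A` -/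
lemma dense_cols : Dense {x : GammaT A | ∃ j : G, (x : OnePoint G × (G → Bool)) =
    ((j : OnePoint G), col A j)} := by
  intro x
  rw [closure_subtype]
  have : Subtype.val '' {x : GammaT A | ∃ j : G, (x : OnePoint G × (G → Bool)) =
      ((j : OnePoint G), col A j)} = {p | ∃ j : G, p = ((j : OnePoint G), col A j)} := by
    ext p
    constructor
    · rintro ⟨y, ⟨j, hy⟩, rfl⟩; exact ⟨j, hy⟩
    · rintro ⟨j, rfl⟩
      exact ⟨⟨_, subset_closure ⟨j, rfl⟩⟩, ⟨j, rfl⟩, rfl⟩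
  rw [this]
  exact x.2

lemma norm_Phi (f : C(GammaT A, ℂ)) : ‖Phi A f‖ = ‖f‖ := by
  refine le_antisymm ?_ ?_
  · refine (BoundedContinuousFunction.norm_le (norm_nonneg f)).2 fun j => ?_
    exact f.norm_coe_le_norm _
  · refine (ContinuousMap.norm_le f (norm_nonneg _)).2 fun x => ?_
    have hcl : IsClosed {x : GammaT A | ‖f x‖ ≤ ‖Phi A f‖} :=
      isClosed_le (by continuity) continuous_const
    have hsub : {x : GammaT A | ∃ j : G, (x : OnePoint G × (G → Bool)) =
        ((j : OnePoint G), col A j)} ⊆ {x : GammaT A | ‖f x‖ ≤ ‖Phi A f‖} := by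
      rintro y ⟨j, hy⟩
      have : y = ⟨((j : OnePoint G), col A j), subset_closure ⟨j, rfl⟩⟩ := Subtype.ext hy
      rw [this]
      exact (Phi A f).norm_coe_le_norm j
    have := closure_minimal hsub hcl
    exact this (by rw [(dense_cols A).closure_eq]; trivial)

lemma isometry_Phi : Isometry (Phi A) := by
  refine Isometry.of_dist_eq fun f g => ?_
  rw [dist_eq_norm, dist_eq_norm, ← PhiHom_apply, ← PhiHom_apply, ← map_sub, PhiHom_apply, norm_Phi]

lemma Phi_image_closure (s : Set C(GammaT A, ℂ)) :
    Phi A '' closure s = closure (Phi A '' s) :=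
  ((isometry_Phi A).isClosedEmbedding.closure_image_eq s).symm

lemma ite_ne {a b : Bool} (h : a ≠ b) :
    (if a then (1 : ℂ) else 0) ≠ (if b then (1 : ℂ) else 0) := by
  cases a <;> cases b <;> simp_all

lemma sep : ((StarAlgebra.adjoin ℂ (S A)).toSubalgebra).SeparatesPoints := by
  intro x y hxy
  suffices h : ∃ s ∈ S A, s x ≠ s y by
    obtain ⟨s, hs, hne⟩ := h
    exact ⟨⇑s, ⟨s, StarAlgebra.subset_adjoin ℂ _ hs, rfl⟩, hne⟩
  by_cases h : (x : OnePoint G × (G → Bool)).1 = (y : OnePoint G × (G → Bool)).1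
  · have h2 : (x : OnePoint G × (G → Bool)).2 ≠ (y : OnePoint G × (G → Bool)).2 := by
      intro h2
      exact hxy (Subtype.ext (Prod.ext h h2))
    have : ∃ i, (x : OnePoint G × (G → Bool)).2 i ≠ (y : OnePoint G × (G → Bool)).2 i := by
      by_contra hc
      push_neg at hc
      exact h2 (funext hc)
    obtain ⟨i, hi⟩ := this
    exact ⟨fi A i, Or.inl ⟨i, rfl⟩, by rw [fi_apply, fi_apply]; exact ite_ne hi⟩
  · rcases hx1 : (x : OnePoint G × (G → Bool)).1 with _ | j
    · rcases hy1 : (y : OnePoint G × (G → Bool)).1 with _ | j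
      · exact absurd (hx1.trans hy1.symm) h
      · refine ⟨gj A j, Or.inr ⟨j, rfl⟩, ?_⟩
        rw [gj_apply, gj_apply, hx1, hy1]
        have h1 : (none : OnePoint G) ≠ (j : OnePoint G) := OnePoint.infty_ne_coe j
        have h2 : (Option.some j : OnePoint G) = (j : OnePoint G) := rfl
        simp [h1, h2]
        exact h1
    · refine ⟨gj A j, Or.inr ⟨j, rfl⟩, ?_⟩
      rw [gj_apply, gj_apply, hx1]
      have : (y : OnePoint G × (G → Bool)).1 ≠ (j : OnePoint G) := by
        intro hc
        exact h (by rw [hx1, hc]; rfl)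
      have hj : (Option.some j : OnePoint G) = (j : OnePoint G) := rfl
      simp [this, hj]

lemma closure_B : closure ((StarAlgebra.adjoin ℂ (S A)) : Set C(GammaT A, ℂ)) = Set.univ := by
  have h := ContinuousMap.starSubalgebra_topologicalClosure_eq_top_of_separatesPoints
      (StarAlgebra.adjoin ℂ (S A)) (sep A)
  rw [← StarSubalgebra.topologicalClosure_coe, h, StarSubalgebra.coe_top]

/-- the distinguished point -/
def p0 : OnePoint G × (G → Bool) := (∞, fun _ => false)

lemma gen_vanish (hp : p0 (G := G) ∈ GammaT A) {s : C(GammaT A, ℂ)} (hs : s ∈ S A) :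
    s ⟨p0, hp⟩ = 0 := by
  rcases hs with ⟨i, rfl⟩ | ⟨j, rfl⟩
  · rw [fi_apply]
    simp [p0]
  · rw [gj_apply]
    have : (p0 (G := G)).1 ≠ (j : OnePoint G) := OnePoint.infty_ne_coe j
    simp [this]

lemma sub_smul_mem (hp : p0 (G := G) ∈ GammaT A) {b : C(GammaT A, ℂ)}
    (hb : b ∈ StarAlgebra.adjoin ℂ (S A)) :
    b - (b ⟨p0, hp⟩) • 1 ∈ NonUnitalStarAlgebra.adjoin ℂ (S A) := by
  induction hb using StarAlgebra.adjoin_induction with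
  | mem s hs =>
    rw [gen_vanish A hp hs, zero_smul, sub_zero]
    exact NonUnitalStarAlgebra.subset_adjoin ℂ _ hs
  | algebraMap r =>
    have h : (algebraMap ℂ C(GammaT A, ℂ) r) ⟨p0, hp⟩ = r := rfl
    rw [h, Algebra.algebraMap_eq_smul_one, sub_self]
    exact zero_mem _
  | add x y hx hy ihx ihy =>
    have key : (x + y) - ((x + y) ⟨p0, hp⟩) • 1
        = (x - (x ⟨p0, hp⟩) • 1) + (y - (y ⟨p0, hp⟩) • 1) := by
      rw [ContinuousMap.add_apply, add_smul]; ring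
    rw [key]; exact add_mem ihx ihy
  | mul x y hx hy ihx ihy =>
    have key : (x * y) - ((x * y) ⟨p0, hp⟩) • 1
        = (x - (x ⟨p0, hp⟩) • 1) * (y - (y ⟨p0, hp⟩) • 1)
          + (x ⟨p0, hp⟩) • (y - (y ⟨p0, hp⟩) • 1)
          + (y ⟨p0, hp⟩) • (x - (x ⟨p0, hp⟩) • 1) := by
      rw [ContinuousMap.mul_apply]
      simp only [Algebra.smul_def, map_mul]
      ring
    rw [key]
    exact add_mem (add_mem (mul_mem ihx ihy) (SMulMemClass.smul_mem _ ihy))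
      (SMulMemClass.smul_mem _ ihx)
  | star x hx ihx =>
    have key : star x - ((star x) ⟨p0, hp⟩) • 1 = star (x - (x ⟨p0, hp⟩) • 1) := by
      rw [star_sub, star_smul, star_one, ContinuousMap.star_apply]
    rw [key]; exact star_mem ihx

lemma mem_N_vanish (hp : p0 (G := G) ∈ GammaT A) {b : C(GammaT A, ℂ)}
    (hb : b ∈ NonUnitalStarAlgebra.adjoin ℂ (S A)) : b ⟨p0, hp⟩ = 0 := by
  induction hb using NonUnitalStarAlgebra.adjoin_induction with
  | mem s hs => exact gen_vanish A hp hs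
  | add x y hx hy ihx ihy => simp [ihx, ihy]
  | zero => simp
  | mul x y hx hy ihx ihy => simp [ihx]
  | smul r x hx ihx => simp [ihx]
  | star x hx ihx => simp [ihx]

lemma N_eq (hp : p0 (G := G) ∈ GammaT A) :
    (NonUnitalStarAlgebra.adjoin ℂ (S A) : Set C(GammaT A, ℂ)) =
      (StarAlgebra.adjoin ℂ (S A) : Set C(GammaT A, ℂ)) ∩ {f | f ⟨p0, hp⟩ = 0} := by
  ext b
  constructor
  · intro hb
    exact ⟨NonUnitalStarAlgebra.adjoin_le_starAlgebra_adjoin ℂ _ hb, mem_N_vanish A hp hb⟩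
  · rintro ⟨hb, hb0⟩
    have h := sub_smul_mem A hp hb
    rwa [hb0, zero_smul, sub_zero] at h

lemma prod_one_sub_mem {ι : Type*} (e : ι → C(GammaT A, ℂ)) (t : Finset ι) :
    (∀ i ∈ t, e i ∈ NonUnitalStarAlgebra.adjoin ℂ (S A)) →
      (1 : C(GammaT A, ℂ)) - ∏ i ∈ t, (1 - e i) ∈ NonUnitalStarAlgebra.adjoin ℂ (S A) := by
  classical
  induction t using Finset.induction_on with
  | empty => intro _; simpa using zero_mem _
  | @insert a t ha ih =>
    intro he
    rw [Finset.prod_insert ha]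
    have h1 := ih fun i hi => he i (Finset.mem_insert_of_mem hi)
    have hea := he a (Finset.mem_insert_self a t)
    have key : (1 : C(GammaT A, ℂ)) - (1 - e a) * ∏ i ∈ t, (1 - e i)
        = ((1 - ∏ i ∈ t, (1 - e i)) + e a) - e a * (1 - ∏ i ∈ t, (1 - e i)) := by
      ring
    rw [key]
    exact sub_mem (add_mem h1 hea) (mul_mem hea h1)

lemma one_mem_N (hp : p0 (G := G) ∉ GammaT A) :
    (1 : C(GammaT A, ℂ)) ∈ NonUnitalStarAlgebra.adjoin ℂ (S A) := by
  classical
  have hcover : ∀ x : GammaT A, ∃ s : C(GammaT A, ℂ), s ∈ S A ∧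
      ∃ U : Set (GammaT A), IsOpen U ∧ x ∈ U ∧ ∀ y ∈ U, s y = 1 := by
    intro x
    rcases hx1 : (x : OnePoint G × (G → Bool)).1 with _ | j
    · have hex : ∃ i, (x : OnePoint G × (G → Bool)).2 i = true := by
        by_contra hc
        push_neg at hc
        apply hp
        have hxp : (x : OnePoint G × (G → Bool)) = p0 := by
          apply Prod.ext
          · exact hx1
          · funext i
            have := hc i
            simp only [p0]
            exact Bool.not_eq_true _ |>.mp this
        rw [← hxp]
        exact x.2
      obtain ⟨i, hi⟩ := hex
      refine ⟨fi A i, Or.inl ⟨i, rfl⟩, {y : GammaT A | (y : OnePoint G × (G → Bool)).2 i = true},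
        ?_, hi, ?_⟩
      · have hc : Continuous fun y : GammaT A => (y : OnePoint G × (G → Bool)).2 i :=
          (continuous_apply i).comp (continuous_snd.comp continuous_subtype_val)
        exact hc.isOpen_preimage ({true} : Set Bool) (isOpen_discrete _)
      · intro y hy
        rw [fi_apply]
        simp [Set.mem_setOf_eq.mp hy]
    · refine ⟨gj A j, Or.inr ⟨j, rfl⟩,
        {y : GammaT A | (y : OnePoint G × (G → Bool)).1 = (j : OnePoint G)}, ?_, ?_, ?_⟩
      · have hc : Continuous fun y : GammaT A => (y : OnePoint G × (G → Bool)).1 :=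
          continuous_fst.comp continuous_subtype_val
        exact hc.isOpen_preimage ({(j : OnePoint G)} : Set (OnePoint G))
          (isClopen_coe_singleton j).isOpen
      · exact hx1
      · intro y hy
        rw [gj_apply]
        simp [Set.mem_setOf_eq.mp hy]
  choose s hsS U hUopen hxU hsU using hcover
  obtain ⟨t, ht⟩ := isCompact_univ.elim_finite_subcover U hUopen
    (fun x _ => Set.mem_iUnion.2 ⟨x, hxU x⟩)
  have h1 : (1 : C(GammaT A, ℂ)) = 1 - ∏ x ∈ t, (1 - s x) := by
    ext y
    obtain ⟨x, hxt, hyx⟩ : ∃ x ∈ t, y ∈ U x := by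
      simpa using ht (Set.mem_univ y)
    have hz : (∏ x ∈ t, ((1 : C(GammaT A, ℂ)) - s x)) y = 0 := by
      rw [ContinuousMap.prod_apply]
      refine Finset.prod_eq_zero hxt ?_
      simp [hsU x y hyx]
    simp [hz]
  rw [h1]
  exact prod_one_sub_mem A _ t fun x _ => NonUnitalStarAlgebra.subset_adjoin ℂ _ (hsS x)

lemma Phi_image_S : Phi A '' S A = gens A := by
  have h1 : Phi A ∘ fi A = rhoB A := funext (Phi_fi A)
  have h2 : Phi A ∘ gj A = delB (G := G) := funext (Phi_gj A)
  rw [S, gens, Set.image_union, ← Set.range_comp, ← Set.range_comp, h1, h2]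

lemma Phi_image_N :
    Phi A '' (NonUnitalStarAlgebra.adjoin ℂ (S A) : Set C(GammaT A, ℂ))
      = (NonUnitalStarAlgebra.adjoin ℂ (gens A) : Set (G →ᵇ ℂ)) := by
  have hcoe : ⇑(PhiHom A) = Phi A := rfl
  rw [← hcoe, ← NonUnitalStarSubalgebra.coe_map,
    NonUnitalStarAlgHom.map_adjoin (PhiHom A) (S A), hcoe, Phi_image_S]

lemma Iset_eq_closure_N :
    {f : C(GammaT A, ℂ) | ∀ p : GammaT A,
        (p : OnePoint G × (G → Bool)) = (∞, fun _ => false) → f p = 0}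
      = closure (NonUnitalStarAlgebra.adjoin ℂ (S A) : Set C(GammaT A, ℂ)) := by
  by_cases hp : p0 (G := G) ∈ GammaT A
  · have hq : {f : C(GammaT A, ℂ) | ∀ p : GammaT A,
        (p : OnePoint G × (G → Bool)) = (∞, fun _ => false) → f p = 0}
        = (RingHom.ker (ContinuousMap.evalStarAlgHom ℂ ℂ (⟨p0, hp⟩ : GammaT A)) :
            Set C(GammaT A, ℂ)) := by
      ext f
      simp only [Set.mem_setOf_eq, SetLike.mem_coe, RingHom.mem_ker]
      constructor
      · intro h
        exact h ⟨p0, hp⟩ rfl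
      · intro h p hp'
        have : p = ⟨p0, hp⟩ := Subtype.ext hp'
        rw [this]; exact h
    rw [hq]
    have hNeq : (NonUnitalStarAlgebra.adjoin ℂ (S A) : Set C(GammaT A, ℂ))
        = (StarAlgebra.adjoin ℂ (S A) : Set C(GammaT A, ℂ)) ∩
          (RingHom.ker (ContinuousMap.evalStarAlgHom ℂ ℂ (⟨p0, hp⟩ : GammaT A)) :
            Set C(GammaT A, ℂ)) := by
      rw [N_eq A hp]
      congr 1
    have hk := ContinuousMap.AlgHom.closure_ker_inter (φ := ContinuousMap.evalStarAlgHom ℂ ℂ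
      (⟨p0, hp⟩ : GammaT A)) (continuous_eval_const _)
      (StarAlgebra.adjoin ℂ (S A))
    rw [hNeq, hk, closure_B, Set.univ_inter]
  · have hIuniv : {f : C(GammaT A, ℂ) | ∀ p : GammaT A,
        (p : OnePoint G × (G → Bool)) = (∞, fun _ => false) → f p = 0} = Set.univ := by
      ext f
      simp only [Set.mem_setOf_eq, Set.mem_univ, iff_true]
      intro p hp'
      exfalso
      apply hp
      show (∞, fun _ => false) ∈ GammaT A
      rw [← hp']
      exact p.2
    have hNB : (NonUnitalStarAlgebra.adjoin ℂ (S A) : Set C(GammaT A, ℂ))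
        = (StarAlgebra.adjoin ℂ (S A) : Set C(GammaT A, ℂ)) := by
      apply Set.Subset.antisymm
      · exact fun b hb => NonUnitalStarAlgebra.adjoin_le_starAlgebra_adjoin ℂ _ hb
      · intro b hb
        simp only [SetLike.mem_coe] at hb ⊢
        induction hb using StarAlgebra.adjoin_induction with
        | mem s hs => exact NonUnitalStarAlgebra.subset_adjoin ℂ _ hs
        | algebraMap r =>
          rw [Algebra.algebraMap_eq_smul_one]
          exact SMulMemClass.smul_mem _ (one_mem_N A hp)
        | add x y hx hy ihx ihy => exact add_mem ihx ihy
        | mul x y hx hy ihx ihy => exact mul_mem ihx ihy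
        | star x hx ihx => exact star_mem ihx
    rw [hIuniv, hNB, closure_B]

end CKProof

/-- `Φ` maps the ideal of functions in `C(Γ̃_A, ℂ)` vanishing at the point
`(⋆, 𝟎)` (a vacuous condition if `(⋆,𝟎) ∉ Γ̃_A`) onto `R_A`; in particular
`R_A ≅ C₀(Γ_A)` where `Γ_A = Γ̃_A \ {(⋆,𝟎)}`. -/
theorem stmt_1 {G : Type*} [Nonempty G] [TopologicalSpace G] [DiscreteTopology G]
    [DecidableEq G] (A : G → G → Bool) (hA : ∀ i : G, ∃ j : G, A i j = true) :
    CK.Phi A '' {f : C(CK.GammaT A, ℂ) |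
        ∀ p : CK.GammaT A,
          (p : OnePoint G × (G → Bool)) = (∞, fun _ => false) → f p = 0} =
      CK.RA A := by
  rw [CKProof.Iset_eq_closure_N A, CKProof.Phi_image_closure A, CKProof.Phi_image_N A, CK.RA]
end
end

section
/- Assume 𝒢 is infinite and A is row-finite, i.e. every row ρ_i is finitely supported (for each i the set {j : A(i,j)=1} is finite). Then: (a) Γ̃_A = {(j, c_j) : j ∈ 𝒢} ∪ {(⋆, 𝟎)}, where 𝟎 is the identically zero element of {0,1}^𝒢; and (b) R_A equals the closure in ℓ^∞(𝒢) of the complex linear span of {δ_i : i ∈ 𝒢}, which is exactly the algebra c₀(𝒢) of functions on 𝒢 vanishing at infinity. -/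
open scoped BoundedContinuousFunction
open OnePoint

noncomputable section

namespace CKAux

open CK Filter

variable {G : Type*} [TopologicalSpace G] [DiscreteTopology G] [DecidableEq G]

lemma delB_apply (i j : G) : delB (G := G) i j = if j = i then 1 else 0 := rfl

lemma star_delB (i : G) : star (delB (G := G) i) = delB i := by
  ext j
  simp only [BoundedContinuousFunction.star_apply, delB_apply]
  split <;> simp

lemma mul_delB (i j : G) :
    delB (G := G) i * delB j = if i = j then delB i else 0 := by
  ext k
  rcases eq_or_ne i j with rfl | h
  · simp only [if_pos rfl, BoundedContinuousFunction.mul_apply, delB_apply]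
    split <;> simp_all [delB_apply]
  · rw [if_neg h]
    simp only [BoundedContinuousFunction.mul_apply, delB_apply,
      BoundedContinuousFunction.coe_zero, Pi.zero_apply]
    split_ifs with h1 h2 <;> simp_all

lemma mul_mem_spanDel {x y : G →ᵇ ℂ}
    (hx : x ∈ Submodule.span ℂ (Set.range (delB (G := G))))
    (hy : y ∈ Submodule.span ℂ (Set.range (delB (G := G)))) :
    x * y ∈ Submodule.span ℂ (Set.range (delB (G := G))) := by
  induction hx, hy using Submodule.span_induction₂ with
  | mem_mem x y hx hy =>
    obtain ⟨i, rfl⟩ := hx; obtain ⟨j, rfl⟩ := hy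
    rw [mul_delB]
    split
    · exact Submodule.subset_span ⟨i, rfl⟩
    · exact zero_mem _
  | zero_left y hy => rw [zero_mul]; exact zero_mem _
  | zero_right x hx => rw [mul_zero]; exact zero_mem _
  | add_left x y z hx hy hz h1 h2 => rw [add_mul]; exact add_mem h1 h2
  | add_right x y z hx hy hz h1 h2 => rw [mul_add]; exact add_mem h1 h2
  | smul_left r x y hx hy h => rw [smul_mul_assoc]; exact Submodule.smul_mem _ _ h
  | smul_right r x y hx hy h => rw [mul_smul_comm]; exact Submodule.smul_mem _ _ h

lemma star_mem_spanDel {x : G →ᵇ ℂ}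
    (hx : x ∈ Submodule.span ℂ (Set.range (delB (G := G)))) :
    star x ∈ Submodule.span ℂ (Set.range (delB (G := G))) := by
  induction hx using Submodule.span_induction with
  | mem x hx => obtain ⟨i, rfl⟩ := hx; rw [star_delB]; exact Submodule.subset_span ⟨i, rfl⟩
  | zero => rw [star_zero]; exact zero_mem _
  | add x y hx hy h1 h2 => rw [star_add]; exact add_mem h1 h2
  | smul c x hx h => rw [star_smul]; exact Submodule.smul_mem _ _ h

lemma rhoB_mem (A : G → G → Bool) (i : G) (hfin : {j : G | A i j = true}.Finite) :
    rhoB A i ∈ Submodule.span ℂ (Set.range (delB (G := G))) := by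
  have he : rhoB A i = ∑ j ∈ hfin.toFinset, delB j := by
    ext k
    rw [BoundedContinuousFunction.sum_apply]
    simp only [delB_apply]
    rw [Finset.sum_ite_eq hfin.toFinset k (fun _ => (1 : ℂ))]
    simp [rhoB, rho, BoundedContinuousFunction.coe_ofNormedAddCommGroupDiscrete,
      Set.Finite.mem_toFinset]
  rw [he]
  exact Submodule.sum_mem _ fun j _ => Submodule.subset_span ⟨j, rfl⟩

lemma adjoin_eq_span (A : G → G → Bool) (hrowfin : ∀ i : G, {j : G | A i j = true}.Finite) :
    (NonUnitalStarAlgebra.adjoin ℂ (CK.gens A) : Set (G →ᵇ ℂ)) =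
      ((Submodule.span ℂ (Set.range (delB (G := G)))) : Set (G →ᵇ ℂ)) := by
  apply Set.Subset.antisymm
  · intro x hx
    rw [SetLike.mem_coe] at hx
    rw [SetLike.mem_coe]
    induction hx using NonUnitalStarAlgebra.adjoin_induction with
    | mem x hx =>
      rcases hx with ⟨i, rfl⟩ | ⟨i, rfl⟩
      · exact rhoB_mem A i (hrowfin i)
      · exact Submodule.subset_span ⟨i, rfl⟩
    | add x y hx hy h1 h2 => exact add_mem h1 h2
    | zero => exact zero_mem _
    | mul x y hx hy h1 h2 => exact mul_mem_spanDel h1 h2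
    | smul r x hx h => exact Submodule.smul_mem _ _ h
    | star x hx h => exact star_mem_spanDel h
  · intro x hx
    rw [SetLike.mem_coe] at hx
    rw [SetLike.mem_coe]
    induction hx using Submodule.span_induction with
    | mem x hx => exact NonUnitalStarAlgebra.subset_adjoin ℂ _ (Or.inr hx)
    | zero => exact zero_mem _
    | add x y hx hy h1 h2 => exact add_mem h1 h2
    | smul c x hx h => exact SMulMemClass.smul_mem c h

lemma gamma_eq {G : Type*} [Infinite G] [TopologicalSpace G] [DiscreteTopology G]
    (A : G → G → Bool) (hrowfin : ∀ i : G, {j : G | A i j = true}.Finite) :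
    CK.GammaT A =
      {p : OnePoint G × (G → Bool) | ∃ j : G, p = ((j : OnePoint G), CK.col A j)} ∪
        {((∞ : OnePoint G), fun _ => false)} := by
  apply Set.Subset.antisymm
  · rintro ⟨x, f⟩ hp
    cases x with
    | infty =>
      right
      have hf : f = fun _ => false := by
        funext i
        by_contra hfi
        have hfi' : f i = true := by
          cases hh : f i
          · exact absurd hh hfi
          · rfl
        set U : Set (OnePoint G × (G → Bool)) :=
          (((↑) '' ((hrowfin i).toFinset : Set G) : Set (OnePoint G))ᶜ) ×ˢ
            ((fun g : G → Bool => g i) ⁻¹' {true}) with hU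
        have hUopen : IsOpen U := by
          apply IsOpen.prod
          · exact OnePoint.isOpen_compl_image_coe.2
              ⟨isClosed_discrete _, Set.Finite.isCompact (by simp [Set.Finite.coe_toFinset,
                hrowfin i])⟩
          · exact (isOpen_discrete _).preimage (continuous_apply i)
        have hmem : ((∞ : OnePoint G), f) ∈ U := by
          constructor
          · exact fun h => OnePoint.infty_notMem_image_coe h
          · simpa using hfi'
        obtain ⟨q, hqU, j, rfl⟩ := mem_closure_iff.1 hp U hUopen hmem
        have h1 : (j : OnePoint G) ∉ ((↑) '' ((hrowfin i).toFinset : Set G) : Set (OnePoint G)) :=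
          hqU.1
        have h2 : A i j = true := by simpa [CK.col] using hqU.2
        exact h1 ⟨j, by simp [Set.Finite.mem_toFinset, h2], rfl⟩
      exact Set.mem_singleton_iff.2 (by rw [hf])
    | coe j =>
      left
      refine ⟨j, ?_⟩
      have hf : f = CK.col A j := by
        funext i
        set U : Set (OnePoint G × (G → Bool)) :=
          ({(j : OnePoint G)}) ×ˢ ((fun g : G → Bool => g i) ⁻¹' {f i}) with hU
        have hUopen : IsOpen U := by
          apply IsOpen.prod
          · have : ({(j : OnePoint G)} : Set (OnePoint G)) = (↑) '' {j} := by
              simp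
            rw [this]
            exact OnePoint.isOpenMap_coe _ (isOpen_discrete _)
          · exact (isOpen_discrete _).preimage (continuous_apply i)
        have hmem : ((j : OnePoint G), f) ∈ U := ⟨rfl, rfl⟩
        obtain ⟨q, hqU, j', rfl⟩ := mem_closure_iff.1 hp U hUopen hmem
        have h1 : j' = j := OnePoint.coe_eq_coe.1 hqU.1
        have h2 : CK.col A j' i = f i := hqU.2
        rw [← h1, h2]
      rw [hf]
  · rintro p (hp | hp)
    · exact subset_closure hp
    · rw [Set.mem_singleton_iff.1 hp]
      have hne : (Filter.cofinite : Filter G).NeBot := Filter.cofinite_neBot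
      apply mem_closure_of_tendsto (f := fun j : G => ((j : OnePoint G), CK.col A j))
        (b := (Filter.cofinite : Filter G))
      · apply Filter.Tendsto.prodMk_nhds
        · rw [← cocompact_eq_cofinite G, OnePoint.nhds_infty_eq]
          exact (Filter.tendsto_map.mono_left cocompact_le_coclosedCompact).mono_right
            le_sup_left
        · rw [tendsto_pi_nhds]
          intro i
          apply Filter.Tendsto.congr' _ (tendsto_const_nhds (x := false))
          filter_upwards [(hrowfin i).eventually_cofinite_notMem] with j hj
          have : A i j = false := Bool.of_not_eq_true hj
          simp [CK.col, this]
      · exact Filter.Eventually.of_forall fun j => ⟨j, rfl⟩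

lemma closure_span_eq_c0 :
    closure ((Submodule.span ℂ (Set.range (delB (G := G)))) : Set (G →ᵇ ℂ)) =
      {f : G →ᵇ ℂ | Filter.Tendsto (fun j => f j) Filter.cofinite (nhds 0)} := by
  apply Set.Subset.antisymm
  · apply closure_minimal
    · intro x hx
      rw [SetLike.mem_coe] at hx
      induction hx using Submodule.span_induction with
      | mem x hx =>
        obtain ⟨i, rfl⟩ := hx
        apply Filter.Tendsto.congr' _ (tendsto_const_nhds (x := (0 : ℂ)))
        filter_upwards [(Set.finite_singleton i).eventually_cofinite_notMem] with j hj
        have : j ≠ i := by simpa using hj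
        simp [delB_apply, this]
      | zero => simpa using tendsto_const_nhds
      | add x y hx hy h1 h2 => simpa using h1.add h2
      | smul c x hx h => simpa using h.const_smul c
    · apply isClosed_of_closure_subset
      intro f hf
      rw [Set.mem_setOf_eq, Metric.tendsto_nhds]
      intro ε hε
      obtain ⟨g, hgT, hfg⟩ := Metric.mem_closure_iff.1 hf (ε / 2) (by positivity)
      have hg := Metric.tendsto_nhds.1 hgT (ε / 2) (by positivity)
      filter_upwards [hg] with j hj
      calc dist (f j) 0 ≤ dist (f j) (g j) + dist (g j) 0 := dist_triangle _ _ _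
        _ ≤ dist f g + dist (g j) 0 :=
            add_le_add (BoundedContinuousFunction.dist_coe_le_dist j) le_rfl
        _ < ε / 2 + ε / 2 := add_lt_add hfg hj
        _ = ε := add_halves ε
  · intro f hf
    rw [Metric.mem_closure_iff]
    intro ε hε
    have hfin : {j : G | ¬ dist (f j) 0 < ε / 2}.Finite := by
      have := Metric.tendsto_nhds.1 hf (ε / 2) (by positivity)
      rwa [Filter.eventually_cofinite] at this
    refine ⟨∑ j ∈ hfin.toFinset, f j • delB j,
      Submodule.sum_mem _ fun j _ => Submodule.smul_mem _ _ (Submodule.subset_span ⟨j, rfl⟩), ?_⟩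
    have hle : dist f (∑ j ∈ hfin.toFinset, f j • delB j) ≤ ε / 2 := by
      rw [BoundedContinuousFunction.dist_le (by positivity)]
      intro k
      have hsum : (∑ j ∈ hfin.toFinset, f j • delB j) k
          = if k ∈ hfin.toFinset then f k else 0 := by
        rw [BoundedContinuousFunction.sum_apply]
        simp only [BoundedContinuousFunction.coe_smul, Pi.smul_apply, delB_apply,
          smul_eq_mul, mul_ite, mul_one, mul_zero]
        exact Finset.sum_ite_eq hfin.toFinset k (fun j => f j)
      rw [hsum]
      by_cases hk : k ∈ hfin.toFinset
      · rw [if_pos hk, dist_self]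
        positivity
      · rw [if_neg hk]
        have hlt : dist (f k) 0 < ε / 2 := by
          have := (Set.Finite.mem_toFinset hfin).not.1 hk
          simpa [not_not] using this
        exact le_of_lt hlt
    linarith

end CKAux

/-- For infinite `G` and row-finite `A`: (a) `Γ̃_A` consists of the points
`(j, c_j)` together with `(⋆, 𝟎)`; (b) `R_A` is the closed linear span of the `δ_i`, namely
the algebra `c₀(G)` of functions vanishing at infinity. -/
theorem stmt_4 {G : Type*} [Infinite G] [TopologicalSpace G] [DiscreteTopology G]
    [DecidableEq G] (A : G → G → Bool) (hA : ∀ i : G, ∃ j : G, A i j = true)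
    (hrowfin : ∀ i : G, {j : G | A i j = true}.Finite) :
    CK.GammaT A =
      {p : OnePoint G × (G → Bool) | ∃ j : G, p = ((j : OnePoint G), CK.col A j)} ∪
        {((∞ : OnePoint G), fun _ => false)} ∧
    CK.RA A = closure ((Submodule.span ℂ (Set.range (CK.delB (G := G)))) : Set (G →ᵇ ℂ)) ∧
    CK.RA A = {f : G →ᵇ ℂ | Filter.Tendsto (fun j => f j) Filter.cofinite (nhds 0)} := by
  have h1 : CK.RA A =
      closure ((Submodule.span ℂ (Set.range (CK.delB (G := G)))) : Set (G →ᵇ ℂ)) := by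
    rw [CK.RA, CKAux.adjoin_eq_span A hrowfin]
  exact ⟨CKAux.gamma_eq A hrowfin, h1, h1.trans CKAux.closure_span_eq_c0⟩
end
end

section
/- The map π : Ω̃_A → 𝒢̃ × {0,1}^𝒢 defined by π(ξ) = (σ(ξ)₁, R_ξ(e)) is continuous, its range is exactly Γ̃_A, and moreover π maps Ω_A := Ω̃_A \ {{e}} (where {e} denotes the singleton subset of 𝔽 consisting of the identity) onto Γ_A := Γ̃_A \ {(⋆, 𝟎)}, where 𝟎 is the identically zero element of {0,1}^𝒢. -/
open OnePoint

noncomputable section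

namespace CKO

variable {G : Type*}

/-- The submonoid `𝔽⁺` of the free group generated by the generators. -/
def pos (G : Type*) : Submonoid (FreeGroup G) :=
  Submonoid.closure (Set.range (FreeGroup.of : G → FreeGroup G))

/-- The defining relations of `Ω_A^τ` for a subset `ξ ⊆ 𝔽`, identified with a point of
`{0,1}^𝔽`: (a) `e ∈ ξ` and `ξ` contains every initial subword (prefix of the reduced word) of
each of its elements; (b) each `ω ∈ ξ` has at most one `y ∈ G` with `ωy ∈ ξ`; (c) if
`ω, ωy ∈ ξ` then `ωx⁻¹ ∈ ξ ↔ A(x,y) = 1`. -/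
def IsCK [DecidableEq G] (A : G → G → Bool) (ξ : FreeGroup G → Bool) : Prop :=
  ξ 1 = true ∧
  (∀ ω : FreeGroup G, ξ ω = true → ∀ p : List (G × Bool), p <+: ω.toWord →
    ξ (FreeGroup.mk p) = true) ∧
  (∀ ω : FreeGroup G, ξ ω = true → ∀ y z : G,
    ξ (ω * FreeGroup.of y) = true → ξ (ω * FreeGroup.of z) = true → y = z) ∧
  (∀ ω : FreeGroup G, ξ ω = true → ∀ y : G, ξ (ω * FreeGroup.of y) = true →
    ∀ x : G, (ξ (ω * (FreeGroup.of x)⁻¹) = true ↔ A x y = true))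

/-- `ξ` is unbounded: it has no upper bound in `𝔽` for the left order `s ≤ t ↔ s⁻¹t ∈ 𝔽⁺`. -/
def Unbounded (ξ : FreeGroup G → Bool) : Prop :=
  ¬ ∃ t : FreeGroup G, ∀ s : FreeGroup G, ξ s = true → s⁻¹ * t ∈ pos G

/-- `Ω̃_A`: the closure in `{0,1}^𝔽` of the set of unbounded elements of `Ω_A^τ`. -/
def OmegaT [DecidableEq G] (A : G → G → Bool) : Set (FreeGroup G → Bool) :=
  closure {ξ | IsCK A ξ ∧ Unbounded ξ}

end CKO

namespace CKO

open scoped Classical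

/-- The `j`-th column of `A` as an element of `{0,1}^G`. -/
def col {G : Type*} (A : G → G → Bool) (j : G) : G → Bool := fun i => A i j

/-- The space `Γ̃_A`: the closure of `{(j, c_j) : j ∈ G}` in `G̃ × {0,1}^G`. -/
def GammaT {G : Type*} [TopologicalSpace G] (A : G → G → Bool) :
    Set (OnePoint G × (G → Bool)) :=
  closure {p | ∃ j : G, p = ((j : OnePoint G), col A j)}

/-- The initial letter `σ(ξ)₁` of the stem of `ξ`: the unique element of `ξ ∩ G` when
`ξ ∩ G ≠ ∅` (for `ξ ∈ Ω̃_A` there is at most one such element), and `⋆` otherwise. -/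
def sigma1 {G : Type*} (ξ : FreeGroup G → Bool) : OnePoint G :=
  if h : ∃ x : G, ξ (FreeGroup.of x) = true then (h.choose : OnePoint G) else ∞

/-- The characteristic function of the singleton `{e} ⊆ 𝔽`. -/
def chiE {G : Type*} : FreeGroup G → Bool := fun ω => if ω = 1 then true else false

/-- The map `π(ξ) = (σ(ξ)₁, R_ξ(e))` on `Ω̃_A`. -/
def piMap {G : Type*} [DecidableEq G] (A : G → G → Bool) :
    OmegaT A → OnePoint G × (G → Bool) :=
  fun ξ => (sigma1 ξ.1, fun x => ξ.1 ((FreeGroup.of x)⁻¹))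

end CKO
namespace CKOAux

open FreeGroup List

variable {G : Type*} [DecidableEq G]

/-- adjacency relation of reduced words -/
def RedRel : (G × Bool) → (G × Bool) → Prop := fun a b => ¬(a.1 = b.1 ∧ a.2 = !b.2)

theorem reduced_iff_chain' {w : List (G × Bool)} :
    FreeGroup.reduce w = w ↔ List.Chain' RedRel w := by
  constructor
  · induction w with
    | nil => intro _; exact List.isChain_nil
    | cons a t ih =>
      intro h
      rw [FreeGroup.reduce.cons] at h
      rcases ht : FreeGroup.reduce t with _ | ⟨b, t'⟩ <;> rw [ht] at h
      · simp only [List.cons.injEq, true_and] at h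
        rw [← h]
        exact List.isChain_singleton a
      · change (if a.1 = b.1 ∧ a.2 = !b.2 then t' else a :: b :: t') = a :: t at h
        by_cases hc : a.1 = b.1 ∧ a.2 = !b.2
        · rw [if_pos hc] at h
          exfalso
          have h1 : (FreeGroup.reduce t).length ≤ t.length :=
            (FreeGroup.Red.length_le (FreeGroup.reduce.red))
          rw [ht, h] at h1
          simp at h1
        · rw [if_neg hc] at h
          simp only [List.cons.injEq, true_and] at h
          have ht' : t = b :: t' := h.symm
          have hred : FreeGroup.reduce t = t := by rw [ht, ht']
          have := ih hred
          rw [ht']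
          exact List.isChain_cons_cons.mpr ⟨hc, ht' ▸ this⟩
  · induction w with
    | nil => intro _; rfl
    | cons a t ih =>
      intro hch
      have hrt : FreeGroup.reduce t = t := ih hch.tail
      rw [FreeGroup.reduce.cons, hrt]
      cases t with
      | nil => rfl
      | cons b t' =>
        have hab : RedRel a b := (List.isChain_cons_cons.mp hch).1
        show (if a.1 = b.1 ∧ a.2 = !b.2 then t' else a :: b :: t') = a :: b :: t'
        rw [if_neg hab]

theorem reduced_of_prefix {w p : List (G × Bool)} (hw : FreeGroup.reduce w = w)
    (hp : p <+: w) : FreeGroup.reduce p = p :=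
  reduced_iff_chain'.mpr ((reduced_iff_chain'.mp hw).prefix hp)

theorem reduced_of_forall_snd {w : List (G × Bool)} (b : Bool) (h : ∀ l ∈ w, l.2 = b) :
    FreeGroup.reduce w = w := by
  refine reduced_iff_chain'.mpr (List.Pairwise.isChain (List.pairwise_of_forall_mem_list ?_))
  intro x hx y hy
  simp [RedRel, h x hx, h y hy]

theorem reduced_concat {w : List (G × Bool)} {l : G × Bool} (hw : FreeGroup.reduce w = w)
    (h : ∀ a, w.getLast? = Option.some a → RedRel a l) :
    FreeGroup.reduce (w ++ [l]) = w ++ [l] := by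
  rw [reduced_iff_chain'] at hw ⊢
  refine List.isChain_append.mpr ⟨hw, List.isChain_singleton l, ?_⟩
  intro a ha b hb
  simp only [List.head?_cons, Option.mem_def, Option.some.injEq] at hb
  subst hb
  exact h a ha

theorem mk_concat_true (w : List (G × Bool)) (a : G) :
    FreeGroup.mk (w ++ [(a, true)]) = FreeGroup.mk w * FreeGroup.of a := by
  rw [show FreeGroup.of a = FreeGroup.mk [(a, true)] from rfl, FreeGroup.mul_mk]

theorem inv_of_eq (a : G) : (FreeGroup.of a)⁻¹ = FreeGroup.mk [(a, false)] := by
  rw [show FreeGroup.of a = FreeGroup.mk [(a, true)] from rfl, FreeGroup.inv_mk]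
  rfl

theorem mk_concat_false (w : List (G × Bool)) (a : G) :
    FreeGroup.mk (w ++ [(a, false)]) = FreeGroup.mk w * (FreeGroup.of a)⁻¹ := by
  rw [inv_of_eq, FreeGroup.mul_mk]

theorem mk_concat_false_cancel (w : List (G × Bool)) (a : G) :
    FreeGroup.mk (w ++ [(a, false)]) * FreeGroup.of a = FreeGroup.mk w := by
  rw [mk_concat_false, inv_mul_cancel_right]

theorem mk_concat_true_cancel (w : List (G × Bool)) (a : G) :
    FreeGroup.mk (w ++ [(a, true)]) * (FreeGroup.of a)⁻¹ = FreeGroup.mk w := by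
  rw [mk_concat_true, mul_inv_cancel_right]

end CKOAux

namespace CKOAux

open FreeGroup List CKO

variable {G : Type*} [DecidableEq G]

theorem mem_pos_iff {u : FreeGroup G} : u ∈ pos G ↔ ∀ l ∈ u.toWord, l.2 = true := by
  constructor
  · intro hu
    induction hu using Submonoid.closure_induction with
    | mem x hx => obtain ⟨a, rfl⟩ := hx; rw [FreeGroup.toWord_of]; simp
    | one => rw [FreeGroup.toWord_one]; simp
    | mul x y hx hy ihx ihy =>
      have hall : ∀ l ∈ x.toWord ++ y.toWord, l.2 = true := by
        intro l hl
        rcases List.mem_append.mp hl with h | h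
        exacts [ihx l h, ihy l h]
      have hxy : (x * y).toWord = x.toWord ++ y.toWord := by
        conv_lhs => rw [← FreeGroup.mk_toWord (x := x), ← FreeGroup.mk_toWord (x := y)]
        rw [FreeGroup.mul_mk, FreeGroup.toWord_mk, reduced_of_forall_snd true hall]
      rw [hxy]; exact hall
  · intro h
    rw [← FreeGroup.mk_toWord (x := u)]
    revert h
    generalize u.toWord = w
    intro h
    induction w with
    | nil =>
      have : FreeGroup.mk ([] : List (G × Bool)) = 1 := by
        rw [← FreeGroup.toWord_one (α := G), FreeGroup.mk_toWord]
      rw [this]; exact one_mem _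
    | cons l t ih =>
      obtain ⟨a, b⟩ := l
      have hb : b = true := h _ List.mem_cons_self
      subst hb
      have hmk : FreeGroup.mk ((a, true) :: t) = FreeGroup.of a * FreeGroup.mk t := by
        rw [show FreeGroup.of a = FreeGroup.mk [(a, true)] from rfl, FreeGroup.mul_mk]; rfl
      rw [hmk]
      exact mul_mem (Submonoid.subset_closure ⟨a, rfl⟩)
        (ih fun l hl => h l (List.mem_cons_of_mem _ hl))

theorem inv_mem_pos_of_allFalse {u : FreeGroup G} (h : ∀ l ∈ u.toWord, l.2 = false) :
    u⁻¹ ∈ pos G := by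
  rw [mem_pos_iff, FreeGroup.toWord_inv]
  intro l hl
  simp only [FreeGroup.invRev, List.mem_reverse, List.mem_map] at hl
  obtain ⟨x, hx, rfl⟩ := hl
  simp [h x hx]

theorem exists_approx {S : Set (FreeGroup G → Bool)} {ξ : FreeGroup G → Bool}
    (hξ : ξ ∈ closure S) (l : List (FreeGroup G)) :
    ∃ η ∈ S, ∀ w ∈ l, η w = ξ w := by
  have hU : IsOpen {η : FreeGroup G → Bool | ∀ w ∈ l, η w = ξ w} := by
    induction l with
    | nil => simpa using isOpen_univ
    | cons a t ih =>
      have heq : {η : FreeGroup G → Bool | ∀ w ∈ a :: t, η w = ξ w}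
          = ((fun η : FreeGroup G → Bool => η a) ⁻¹' {ξ a}) ∩ {η | ∀ w ∈ t, η w = ξ w} := by
        ext η; simp [List.forall_mem_cons]
      rw [heq]
      exact (IsOpen.preimage (continuous_apply a) (isOpen_discrete _)).inter ih
  obtain ⟨η, hη1, hη2⟩ := mem_closure_iff.mp hξ _ hU (fun w _ => rfl)
  exact ⟨η, hη2, hη1⟩

theorem isCK_of_mem_omegaT {A : G → G → Bool} {ξ : FreeGroup G → Bool}
    (hξ : ξ ∈ OmegaT A) : IsCK A ξ := by
  have hcl : ξ ∈ closure {ξ : FreeGroup G → Bool | IsCK A ξ ∧ Unbounded ξ} := hξ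
  refine ⟨?_, ?_, ?_, ?_⟩
  · obtain ⟨η, hS, hag⟩ := exists_approx hcl [1]
    rw [← hag 1 (by simp)]; exact hS.1.1
  · intro ω hω p hp
    obtain ⟨η, hS, hag⟩ := exists_approx hcl [ω, FreeGroup.mk p]
    rw [← hag (FreeGroup.mk p) (by simp)]
    exact hS.1.2.1 ω (by rw [hag ω (by simp)]; exact hω) p hp
  · intro ω hω y z hy hz
    obtain ⟨η, hS, hag⟩ := exists_approx hcl [ω, ω * FreeGroup.of y, ω * FreeGroup.of z]
    exact hS.1.2.2.1 ω (by rw [hag ω (by simp)]; exact hω) y z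
      (by rw [hag _ (by simp)]; exact hy) (by rw [hag _ (by simp)]; exact hz)
  · intro ω hω y hy x
    obtain ⟨η, hS, hag⟩ := exists_approx hcl [ω, ω * FreeGroup.of y, ω * (FreeGroup.of x)⁻¹]
    rw [← hag (ω * (FreeGroup.of x)⁻¹) (by simp)]
    exact hS.1.2.2.2 ω (by rw [hag ω (by simp)]; exact hω) y
      (by rw [hag _ (by simp)]; exact hy) x

theorem letters_false {A : G → G → Bool} {ξ : FreeGroup G → Bool} (hCK : IsCK A ξ)
    (hno : ∀ x : G, ξ (FreeGroup.of x) = false) :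
    ∀ w : List (G × Bool), FreeGroup.reduce w = w → ξ (FreeGroup.mk w) = true →
      ∀ l ∈ w, l.2 = false := by
  intro w
  induction w using List.reverseRecOn with
  | nil => simp
  | append_singleton w l ih =>
    intro hred hmem a ha
    have htw : (FreeGroup.mk (w ++ [l])).toWord = w ++ [l] := by
      rw [FreeGroup.toWord_mk, hred]
    have hw_red : FreeGroup.reduce w = w := reduced_of_prefix hred (List.prefix_append _ _)
    have hw_mem : ξ (FreeGroup.mk w) = true :=
      hCK.2.1 _ hmem w (by rw [htw]; exact List.prefix_append _ _)
    have hw_false := ih hw_red hw_mem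
    have hl2 : l.2 = false := by
      obtain ⟨c, b⟩ := l
      cases b
      · rfl
      · exfalso
        rcases eq_or_ne w [] with rfl | hw0
        · have h1 : ξ (FreeGroup.of c) = true := by
            have heq : FreeGroup.mk ([] ++ [(c, true)]) = FreeGroup.of c := by
              rw [mk_concat_true]
              have h0 : FreeGroup.mk ([] : List (G × Bool)) = 1 := by
                rw [← FreeGroup.toWord_one (α := G), FreeGroup.mk_toWord]
              rw [h0, one_mul]
            rw [← heq]; exact hmem
          rw [hno c] at h1; exact Bool.false_ne_true h1
        · set x := w.getLast hw0 with hxdef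
          have hx2 : x.2 = false := hw_false x (List.getLast_mem hw0)
          have hdecomp : w.dropLast ++ [x] = w := List.dropLast_append_getLast hw0
          have h1 : ξ (FreeGroup.mk w * FreeGroup.of c) = true := by
            rw [← mk_concat_true]; exact hmem
          have h2 : ξ (FreeGroup.mk w * FreeGroup.of x.1) = true := by
            have hxpair : x = (x.1, false) := by
              rw [← hx2]
            have hcalc : FreeGroup.mk w * FreeGroup.of x.1 = FreeGroup.mk w.dropLast := by
              conv_lhs => rw [← hdecomp, hxpair]
              exact mk_concat_false_cancel _ _
            rw [hcalc]
            refine hCK.2.1 _ hmem w.dropLast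
              (by rw [htw]; exact (List.dropLast_prefix w).trans (List.prefix_append _ _))
          have hceq : c = x.1 := hCK.2.2.1 (FreeGroup.mk w) hw_mem c x.1 h1 h2
          have hch := reduced_iff_chain'.mp hred
          have hjct := (List.isChain_append.mp hch).2.2
          have hR : RedRel x (c, true) := by
            refine hjct x ?_ (c, true) rfl
            exact List.getLast?_eq_getLast hw0
          exact hR ⟨hceq.symm, by simp [hx2]⟩
    rcases List.mem_append.mp ha with h | h
    · exact hw_false a h
    · rw [List.mem_singleton.mp h]; exact hl2

theorem stem_exists {A : G → G → Bool} {ξ : FreeGroup G → Bool} (hCK : IsCK A ξ)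
    (hUB : Unbounded ξ) :
    ∃ j : G, ξ (FreeGroup.of j) = true ∧ ∀ x : G, ξ ((FreeGroup.of x)⁻¹) = A x j := by
  by_cases hno : ∀ x : G, ξ (FreeGroup.of x) = false
  · exfalso
    apply hUB
    refine ⟨1, fun s hs => ?_⟩
    have hsf := letters_false hCK hno s.toWord (FreeGroup.reduce_toWord s)
      (by rw [FreeGroup.mk_toWord]; exact hs)
    rw [mul_one]
    exact inv_mem_pos_of_allFalse hsf
  · push_neg at hno
    obtain ⟨j, hj⟩ := hno
    have hj : ξ (FreeGroup.of j) = true := by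
      cases h : ξ (FreeGroup.of j)
      · exact absurd h hj
      · rfl
    refine ⟨j, hj, fun x => ?_⟩
    have h4 := hCK.2.2.2 1 hCK.1 j (by rwa [one_mul]) x
    rw [one_mul] at h4
    cases hAx : A x j
    · rw [hAx] at h4
      simp only [Bool.false_eq_true, iff_false, Bool.not_eq_true] at h4
      exact h4
    · rw [hAx] at h4
      simpa using h4

theorem sigma1_eq {A : G → G → Bool} {ξ : FreeGroup G → Bool} (hCK : IsCK A ξ) {j : G}
    (hj : ξ (FreeGroup.of j) = true) : sigma1 ξ = (j : OnePoint G) := by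
  have h : ∃ x : G, ξ (FreeGroup.of x) = true := ⟨j, hj⟩
  rw [sigma1, dif_pos h]
  have hch : h.choose = j :=
    hCK.2.2.1 1 hCK.1 h.choose j (by rw [one_mul]; exact h.choose_spec) (by rwa [one_mul])
  rw [hch]

theorem sigma1_infty {ξ : FreeGroup G → Bool} (h : ∀ x : G, ξ (FreeGroup.of x) = false) :
    sigma1 ξ = ∞ := by
  rw [sigma1, dif_neg]
  rintro ⟨x, hx⟩
  rw [h x] at hx
  exact Bool.false_ne_true hx

end CKOAux

namespace CKOAux

open FreeGroup List CKO

variable {G : Type*} [DecidableEq G] (A : G → G → Bool) (y : ℕ → G)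

def stemW (k : ℕ) : List (G × Bool) := (List.range k).map fun i => (y i, true)

theorem stemW_length (k : ℕ) : (stemW y k).length = k := by simp [stemW]

theorem stemW_succ (k : ℕ) : stemW y (k + 1) = stemW y k ++ [(y k, true)] := by
  simp [stemW, List.range_succ]

theorem stemW_snd {k : ℕ} {l : G × Bool} (h : l ∈ stemW y k) : l.2 = true := by
  simp only [stemW, List.mem_map] at h
  obtain ⟨i, _, rfl⟩ := h
  rfl

def negW (q : List G) : List (G × Bool) := q.map fun x => (x, false)

theorem negW_concat (q : List G) (x : G) : negW (q ++ [x]) = negW q ++ [(x, false)] := by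
  simp [negW]

theorem negW_snd {q : List G} {l : G × Bool} (h : l ∈ negW q) : l.2 = false := by
  simp only [negW, List.mem_map] at h
  obtain ⟨x, _, rfl⟩ := h
  rfl

def NegOK : G → List G → Prop
  | _, [] => True
  | c, x :: q => A x c = true ∧ NegOK x q

theorem negOK_take : ∀ (c : G) (q : List G) (m : ℕ), NegOK A c q → NegOK A c (q.take m) := by
  intro c q
  induction q generalizing c with
  | nil => intro m h; simpa using h
  | cons u r ih =>
    intro m h
    cases m with
    | zero => exact trivial
    | succ i => exact ⟨h.1, ih u i h.2⟩

theorem negOK_concat (c : G) (q : List G) (x : G) :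
    NegOK A c (q ++ [x]) ↔ NegOK A c q ∧ A x (q.getLastD c) = true := by
  induction q generalizing c with
  | nil =>
    show (A x c = true ∧ True) ↔ (True ∧ A x c = true)
    tauto
  | cons u r ih =>
    show (A u c = true ∧ NegOK A u (r ++ [x])) ↔ (A u c = true ∧ NegOK A u r) ∧ _
    rw [ih u, List.getLastD_cons]
    tauto

def HeadOK (k : ℕ) (q : List G) : Prop :=
  ∀ x, q.head? = Option.some x → ∀ m, k = m + 1 → x ≠ y m

def GoodP (w : List (G × Bool)) : Prop :=
  ∃ k q, w = stemW y k ++ negW q ∧ NegOK A (y k) q ∧ HeadOK y k q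

theorem goodP_nil : GoodP A y [] :=
  ⟨0, [], by simp [stemW, negW], trivial, fun x hx => by simp at hx⟩

theorem goodP_stem (k : ℕ) : GoodP A y (stemW y k) :=
  ⟨k, [], by simp [negW], trivial, fun x hx => by simp at hx⟩

theorem goodP_reduced {w : List (G × Bool)} (hG : GoodP A y w) : FreeGroup.reduce w = w := by
  obtain ⟨k, q, rfl, hneg, hhead⟩ := hG
  refine reduced_iff_chain'.mpr (List.isChain_append.mpr ⟨?_, ?_, ?_⟩)
  · exact List.Pairwise.isChain (List.pairwise_of_forall_mem_list fun a ha b hb => by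
      simp [RedRel, stemW_snd y ha, stemW_snd y hb])
  · exact List.Pairwise.isChain (List.pairwise_of_forall_mem_list fun a ha b hb => by
      simp [RedRel, negW_snd ha, negW_snd hb])
  · intro a ha b hb
    cases k with
    | zero => simp [stemW] at ha
    | succ m =>
      rw [stemW_succ, List.getLast?_concat] at ha
      cases q with
      | nil => simp [negW] at hb
      | cons u r =>
        simp only [negW, List.map_cons, List.head?_cons, Option.mem_def,
          Option.some.injEq] at hb ha
        rw [← ha, ← hb]
        rintro ⟨h1, _⟩
        exact hhead u rfl m rfl h1.symm

theorem split_unique : ∀ (a : List (G × Bool)) (a' b b' : List (G × Bool)),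
    a ++ b = a' ++ b' → (∀ l ∈ a, l.2 = true) → (∀ l ∈ a', l.2 = true) →
    (∀ l, b.head? = Option.some l → l.2 = false) →
    (∀ l, b'.head? = Option.some l → l.2 = false) → a = a' ∧ b = b' := by
  intro a
  induction a with
  | nil =>
    intro a' b b' h ha ha' hb hb'
    cases a' with
    | nil => exact ⟨rfl, h⟩
    | cons u t =>
      exfalso
      simp only [List.nil_append, List.cons_append] at h
      have h1 := hb u (by rw [h]; rfl)
      have h2 := ha' u List.mem_cons_self
      rw [h2] at h1
      simp at h1
  | cons l t ih =>
    intro a' b b' h ha ha' hb hb'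
    cases a' with
    | nil =>
      exfalso
      simp only [List.nil_append, List.cons_append] at h
      have h1 := hb' l (by rw [← h]; rfl)
      have h2 := ha l List.mem_cons_self
      rw [h2] at h1
      simp at h1
    | cons u t' =>
      simp only [List.cons_append, List.cons.injEq] at h
      obtain ⟨rfl, h2⟩ := h
      obtain ⟨h3, h4⟩ := ih t' b b' h2 (fun x hx => ha x (List.mem_cons_of_mem _ hx))
        (fun x hx => ha' x (List.mem_cons_of_mem _ hx)) hb hb'
      exact ⟨by rw [h3], h4⟩

theorem negW_head_snd {q : List G} : ∀ l, (negW q).head? = Option.some l → l.2 = false :=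
  fun l hl => negW_snd (List.mem_of_mem_head? hl)

theorem decomp_unique {k k' : ℕ} {q q' : List G}
    (h : stemW y k ++ negW q = stemW y k' ++ negW q') : k = k' ∧ q = q' := by
  obtain ⟨h1, h2⟩ := split_unique _ _ _ _ h (fun l hl => stemW_snd y hl)
    (fun l hl => stemW_snd y hl) negW_head_snd negW_head_snd
  constructor
  · have := congrArg List.length h1
    simpa [stemW_length] using this
  · have hinj : Function.Injective (fun x : G => (x, false)) := fun a b hab => by
      simpa using hab
    exact List.map_injective_iff.mpr hinj h2

theorem goodP_last_true {w : List (G × Bool)} {a : G} (hG : GoodP A y w)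
    (hlast : w.getLast? = Option.some (a, true)) : ∀ l ∈ w, l.2 = true := by
  obtain ⟨k, q, rfl, _, _⟩ := hG
  cases q with
  | nil =>
    intro l hl
    simp only [negW, List.map_nil, List.append_nil] at hl
    exact stemW_snd y hl
  | cons u r =>
    exfalso
    have hne : negW (u :: r) ≠ [] := by simp [negW]
    rw [List.getLast?_append_of_ne_nil _ hne, List.getLast?_eq_getLast hne] at hlast
    have hsnd := negW_snd (List.getLast_mem hne)
    injection hlast with hl
    rw [hl] at hsnd
    simp at hsnd

open scoped Classical in
noncomputable def xi : FreeGroup G → Bool := fun ω => decide (GoodP A y ω.toWord)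

theorem xi_iff {ω : FreeGroup G} : xi A y ω = true ↔ GoodP A y ω.toWord := by
  simp [xi]

theorem goodP_toWord_mk {w : List (G × Bool)} (h : GoodP A y w) :
    (FreeGroup.mk w).toWord = w := by
  rw [FreeGroup.toWord_mk, goodP_reduced A y h]

theorem xi_mk {w : List (G × Bool)} (h : GoodP A y w) : xi A y (FreeGroup.mk w) = true := by
  rw [xi_iff, goodP_toWord_mk A y h]; exact h

theorem succ_unique {ω : FreeGroup G} {k : ℕ} {q : List G}
    (hw : ω.toWord = stemW y k ++ negW q) (hhead : HeadOK y k q) {c : G}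
    (hc : xi A y (ω * FreeGroup.of c) = true) : c = q.getLastD (y k) := by
  have hωmk : FreeGroup.mk ω.toWord = ω := FreeGroup.mk_toWord
  rcases List.eq_nil_or_concat q with rfl | ⟨q₀, xm, rfl⟩
  · have hw' : ω = FreeGroup.mk (stemW y k) := by
      rw [← hωmk, hw]; simp [negW]
    have hmul : ω * FreeGroup.of c = FreeGroup.mk (stemW y k ++ [(c, true)]) := by
      rw [hw', ← mk_concat_true]
    rw [hmul, xi_iff] at hc
    have hred : FreeGroup.reduce (stemW y k ++ [(c, true)]) = stemW y k ++ [(c, true)] := by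
      refine reduced_of_forall_snd true ?_
      intro l hl
      rcases List.mem_append.mp hl with h | h
      · exact stemW_snd y h
      · rw [List.mem_singleton.mp h]
    rw [FreeGroup.toWord_mk, hred] at hc
    obtain ⟨k'', q'', heq, hneg'', hhead''⟩ := hc
    have hq'' : q'' = [] := by
      cases q'' with
      | nil => rfl
      | cons u r =>
        exfalso
        have hlast := congrArg List.getLast? heq
        rw [List.getLast?_concat] at hlast
        have hne : negW (u :: r) ≠ [] := by simp [negW]
        rw [List.getLast?_append_of_ne_nil _ hne, List.getLast?_eq_getLast hne] at hlast
        have hsnd := negW_snd (List.getLast_mem hne)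
        injection hlast with hl
        rw [← hl] at hsnd
        simp at hsnd
    subst hq''
    simp only [negW, List.map_nil, List.append_nil] at heq
    have hk'' : k'' = k + 1 := by
      have hlen := congrArg List.length heq
      simp only [List.length_append, stemW_length, List.length_cons, List.length_nil] at hlen
      omega
    subst hk''
    rw [stemW_succ] at heq
    have hcc := List.append_cancel_left heq
    simp only [List.cons.injEq, Prod.mk.injEq, and_true] at hcc
    simpa using hcc
  · simp only [List.concat_eq_append] at hw hhead ⊢
    rw [List.getLastD_concat]
    by_cases hcx : c = xm
    · exact hcx
    · exfalso
      have hwne : ω.toWord = (stemW y k ++ negW q₀) ++ [(xm, false)] := by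
        rw [hw, negW_concat, List.append_assoc]
      have hmul : ω * FreeGroup.of c = FreeGroup.mk (ω.toWord ++ [(c, true)]) := by
        conv_lhs => rw [← hωmk]
        rw [mk_concat_true]
      rw [hmul, xi_iff] at hc
      have hred : FreeGroup.reduce (ω.toWord ++ [(c, true)]) = ω.toWord ++ [(c, true)] := by
        refine reduced_concat (FreeGroup.reduce_toWord ω) ?_
        intro a ha
        rw [hwne, List.getLast?_concat] at ha
        injection ha with ha'
        rw [← ha']
        rintro ⟨h1, _⟩
        exact hcx h1.symm
      rw [FreeGroup.toWord_mk, hred] at hc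
      have hall := goodP_last_true A y hc (by rw [List.getLast?_concat])
      have hmem : (xm, false) ∈ ω.toWord ++ [(c, true)] := by
        rw [hwne]
        simp
      have := hall _ hmem
      simp at this

theorem head?_concat_of_ne_nil {α : Type*} (q : List α) (x : α) (h : q ≠ []) :
    (q ++ [x]).head? = q.head? := by
  cases q with
  | nil => exact absurd rfl h
  | cons u r => rfl

theorem xi_isCK (hy : ∀ n, A (y n) (y (n + 1)) = true) : IsCK A (xi A y) := by
  refine ⟨?_, ?_, ?_, ?_⟩
  · rw [xi_iff, FreeGroup.toWord_one]
    exact goodP_nil A y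
  · intro ω hω p hp
    rw [xi_iff] at hω ⊢
    obtain ⟨k, q, hw, hneg, hhead⟩ := hω
    have hpred : FreeGroup.reduce p = p := reduced_of_prefix (FreeGroup.reduce_toWord ω) hp
    rw [FreeGroup.toWord_mk, hpred]
    have hpt := List.prefix_iff_eq_take.mp hp
    rw [hw, List.take_append] at hpt
    set n := p.length with hn
    have hstem : (stemW y k).take n = stemW y (min n k) := by
      rw [stemW, ← List.map_take, List.take_range]
      rfl
    have hlen : (stemW y k).length = k := stemW_length y k
    have hnegt : (negW q).take (n - (stemW y k).length) = negW (q.take (n - k)) := by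
      rw [hlen, negW, ← List.map_take]
      rfl
    rw [hstem, hnegt] at hpt
    refine ⟨min n k, q.take (n - k), hpt, ?_, ?_⟩
    · rcases le_or_gt k n with h | h
      · rw [min_eq_right h]
        exact negOK_take A _ _ _ hneg
      · have h0 : n - k = 0 := by omega
        rw [h0, List.take_zero]
        exact trivial
    · intro x hx m hm
      have hq : q.head? = Option.some x ∧ 0 < n - k := by
        cases q with
        | nil => simp at hx
        | cons u r =>
          cases hnk : n - k with
          | zero => rw [hnk] at hx; simp at hx
          | succ i =>
            rw [hnk] at hx
            simp only [List.take_succ_cons, List.head?_cons, Option.some.injEq] at hx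
            exact ⟨by simp [hx], by omega⟩
      have hmin : min n k = k := by omega
      rw [hmin] at hm
      exact hhead x hq.1 m hm
  · intro ω hω c c' hc hc'
    rw [xi_iff] at hω
    obtain ⟨k, q, hw, hneg, hhead⟩ := hω
    exact (succ_unique A y hw hhead hc).trans (succ_unique A y hw hhead hc').symm
  · intro ω hω c hc x
    rw [xi_iff] at hω
    obtain ⟨k, q, hw, hneg, hhead⟩ := hω
    have hceq : c = q.getLastD (y k) := succ_unique A y hw hhead hc
    have hωmk : FreeGroup.mk ω.toWord = ω := FreeGroup.mk_toWord
    have hmul : ω * (FreeGroup.of x)⁻¹ = FreeGroup.mk (ω.toWord ++ [(x, false)]) := by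
      conv_lhs => rw [← hωmk]
      rw [mk_concat_false]
    rcases List.eq_nil_or_concat q with rfl | ⟨q₀, xm, rfl⟩
    · rw [List.getLastD_nil] at hceq
      subst hceq
      cases k with
      | zero =>
        have hw0 : ω.toWord = [] := by rw [hw]; simp [stemW, negW]
        rw [hmul, hw0, List.nil_append, xi_iff, FreeGroup.toWord_mk,
          FreeGroup.reduce_singleton]
        constructor
        · rintro ⟨k'', q'', heq, hneg'', hhead''⟩
          have hs0 : stemW y 0 ++ negW [x] = ([(x, false)] : List (G × Bool)) := by
            simp [stemW, negW]
          rw [← hs0] at heq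
          obtain ⟨hk, hq⟩ := decomp_unique y heq
          rw [← hq, ← hk] at hneg''
          exact hneg''.1
        · intro hAx
          exact ⟨0, [x], by simp [stemW, negW], ⟨hAx, trivial⟩,
            fun x' hx' m hm => absurd hm (by omega)⟩
      | succ m =>
        by_cases hxm : x = y m
        · subst hxm
          have hcalc : ω * (FreeGroup.of (y m))⁻¹ = FreeGroup.mk (stemW y m) := by
            conv_lhs => rw [← hωmk]
            rw [hw]
            simp only [negW, List.map_nil, List.append_nil]
            rw [stemW_succ]
            exact mk_concat_true_cancel _ _
          rw [hcalc, xi_mk A y (goodP_stem A y m)]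
          simp [hy m]
        · have hwst : ω.toWord = stemW y (m + 1) := by
            rw [hw]; simp [negW]
          rw [hmul, xi_iff]
          have hred : FreeGroup.reduce (ω.toWord ++ [(x, false)]) = ω.toWord ++ [(x, false)] := by
            refine reduced_concat (FreeGroup.reduce_toWord ω) ?_
            intro a ha
            rw [hwst, stemW_succ, List.getLast?_concat] at ha
            injection ha with ha'
            rw [← ha']
            rintro ⟨h1, _⟩
            exact hxm h1.symm
          rw [FreeGroup.toWord_mk, hred]
          have hform : ω.toWord ++ [(x, false)] = stemW y (m + 1) ++ negW [x] := by
            rw [hwst]; simp [negW]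
          rw [hform]
          constructor
          · rintro ⟨k'', q'', heq, hneg'', _⟩
            obtain ⟨hk, hq⟩ := decomp_unique y heq
            rw [← hq, ← hk] at hneg''
            exact hneg''.1
          · intro hAx
            refine ⟨m + 1, [x], rfl, ⟨hAx, trivial⟩, ?_⟩
            intro x' hx' m' hm'
            simp only [List.head?_cons, Option.some.injEq] at hx'
            have hmm : m' = m := by omega
            rw [← hx', hmm]
            exact hxm
    · simp only [List.concat_eq_append] at hw hhead hneg hceq ⊢
      rw [List.getLastD_concat] at hceq
      subst hceq
      have hform : ω.toWord ++ [(x, false)] = stemW y k ++ negW ((q₀ ++ [c]) ++ [x]) := by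
        rw [negW_concat, ← List.append_assoc, ← hw]
      have hred : FreeGroup.reduce (ω.toWord ++ [(x, false)]) = ω.toWord ++ [(x, false)] := by
        refine reduced_concat (FreeGroup.reduce_toWord ω) ?_
        intro a ha
        have hwlast : ω.toWord.getLast? = Option.some (c, false) := by
          rw [hw, negW_concat, ← List.append_assoc, List.getLast?_concat]
        rw [hwlast] at ha
        injection ha with ha'
        rw [← ha']
        rintro ⟨_, h2⟩
        simp at h2
      rw [hmul, xi_iff, FreeGroup.toWord_mk, hred, hform]
      constructor
      · rintro ⟨k'', q'', heq, hneg'', _⟩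
        obtain ⟨hk, hq⟩ := decomp_unique y heq
        rw [← hq, ← hk] at hneg''
        rw [negOK_concat, List.getLastD_concat] at hneg''
        exact hneg''.2
      · intro hAx
        refine ⟨k, (q₀ ++ [c]) ++ [x], rfl, ?_, ?_⟩
        · rw [negOK_concat, List.getLastD_concat]
          exact ⟨hneg, hAx⟩
        · intro x' hx' m hm
          rw [head?_concat_of_ne_nil _ _ (by simp)] at hx'
          exact hhead x' hx' m hm

theorem xi_unbounded : Unbounded (xi A y) := by
  rintro ⟨t, ht⟩
  set n := t.toWord.length + 1 with hn
  have hs : xi A y (FreeGroup.mk (stemW y n)) = true := xi_mk A y (goodP_stem A y n)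
  have hp := ht _ hs
  set u := (FreeGroup.mk (stemW y n))⁻¹ * t with hu
  have hut : ∀ l ∈ u.toWord, l.2 = true := mem_pos_iff.mp hp
  have htu : t = FreeGroup.mk (stemW y n ++ u.toWord) := by
    rw [← FreeGroup.mul_mk, FreeGroup.mk_toWord, hu, mul_inv_cancel_left]
  have hall : ∀ l ∈ stemW y n ++ u.toWord, l.2 = true := by
    intro l hl
    rcases List.mem_append.mp hl with h | h
    · exact stemW_snd y h
    · exact hut l h
  have hlen : t.toWord = stemW y n ++ u.toWord := by
    rw [htu, FreeGroup.toWord_mk, reduced_of_forall_snd true hall]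
  have hfin := congrArg List.length hlen
  simp only [List.length_append, stemW_length] at hfin
  omega

theorem xi_of0 : xi A y (FreeGroup.of (y 0)) = true := by
  have h1 : stemW y 1 = [(y 0, true)] := by simp [stemW, List.range_succ]
  have h2 : FreeGroup.of (y 0) = FreeGroup.mk (stemW y 1) := by rw [h1]; rfl
  rw [h2]
  exact xi_mk A y (goodP_stem A y 1)

end CKOAux

/-- The map `π(ξ) = (σ(ξ)₁, R_ξ(e))` is continuous on `Ω̃_A`, has range
exactly `Γ̃_A`, and maps `Ω_A = Ω̃_A \ {{e}}` onto `Γ_A = Γ̃_A \ {(⋆, 𝟎)}`. -/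
theorem stmt_5 {G : Type*} [Nonempty G] [DecidableEq G]
    [TopologicalSpace G] [DiscreteTopology G]
    (A : G → G → Bool) (hA : ∀ i : G, ∃ j : G, A i j = true) :
    Continuous (CKO.piMap A) ∧
    Set.range (CKO.piMap A) = CKO.GammaT A ∧
    CKO.piMap A '' {ξ : CKO.OmegaT A | (ξ : FreeGroup G → Bool) ≠ CKO.chiE} =
      CKO.GammaT A \ {((∞ : OnePoint G), fun _ => false)} := by
  classical
  set S : Set (FreeGroup G → Bool) := {ξ | CKO.IsCK A ξ ∧ CKO.Unbounded ξ} with hSdef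
  have stem : ∀ j : G, ∃ y : ℕ → G, y 0 = j ∧ ∀ n, A (y n) (y (n + 1)) = true := by
    intro j
    refine ⟨fun n => Nat.rec j (fun _ p => (hA p).choose) n, rfl, fun n => ?_⟩
    exact (hA _).choose_spec
  -- continuity
  have h2cont : Continuous fun ξ : CKO.OmegaT A => (fun x => ξ.1 ((FreeGroup.of x)⁻¹) : G → Bool) :=
    continuous_pi fun x => (continuous_apply _).comp continuous_subtype_val
  have h1cont : Continuous fun ξ : CKO.OmegaT A => CKO.sigma1 ξ.1 := by
    rw [continuous_iff_continuousAt]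
    intro ξ
    by_cases h : ∃ j : G, ξ.1 (FreeGroup.of j) = true
    · obtain ⟨j, hj⟩ := h
      have hcj : Continuous (fun η : CKO.OmegaT A => η.1 (FreeGroup.of j)) :=
        (continuous_apply (FreeGroup.of j)).comp continuous_subtype_val
      have hU : IsOpen {η : CKO.OmegaT A | η.1 (FreeGroup.of j) = true} := by
        show IsOpen ((fun η : CKO.OmegaT A => η.1 (FreeGroup.of j)) ⁻¹' {true})
        exact hcj.isOpen_preimage _ (isOpen_discrete _)
      have heq : Set.EqOn (fun _ : CKO.OmegaT A => ((j : OnePoint G)))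
          (fun η : CKO.OmegaT A => CKO.sigma1 η.1) {η : CKO.OmegaT A | η.1 (FreeGroup.of j) = true} :=
        fun η hη => (CKOAux.sigma1_eq (CKOAux.isCK_of_mem_omegaT η.2) hη).symm
      exact ContinuousAt.congr continuousAt_const
        (Filter.eventuallyEq_of_mem (hU.mem_nhds hj) heq)
    · push_neg at h
      have h' : ∀ x : G, ξ.1 (FreeGroup.of x) = false := by
        intro x
        cases hx : ξ.1 (FreeGroup.of x)
        · rfl
        · exact absurd hx (h x)
      have hfξ : CKO.sigma1 ξ.1 = ∞ := CKOAux.sigma1_infty h'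
      intro s hs
      rw [Filter.mem_map]
      change s ∈ nhds (CKO.sigma1 ξ.1) at hs
      rw [hfξ] at hs
      obtain ⟨V, hVs, hVopen, hVinf⟩ := mem_nhds_iff.mp hs
      obtain ⟨hVclosed, hVcpt⟩ := (OnePoint.isOpen_iff_of_mem hVinf).mp hVopen
      have hKfin : Set.Finite ((OnePoint.some ⁻¹' V : Set G)ᶜ) := hVcpt.finite_of_discrete
      have hWopen : IsOpen (⋂ x ∈ ((OnePoint.some ⁻¹' V : Set G)ᶜ),
          {η : CKO.OmegaT A | η.1 (FreeGroup.of x) = false}) :=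
        hKfin.isOpen_biInter fun x _ => by
          have hcx : Continuous (fun η : CKO.OmegaT A => η.1 (FreeGroup.of x)) :=
            (continuous_apply (FreeGroup.of x)).comp continuous_subtype_val
          show IsOpen ((fun η : CKO.OmegaT A => η.1 (FreeGroup.of x)) ⁻¹' {false})
          exact hcx.isOpen_preimage _ (isOpen_discrete _)
      have hξW : ξ ∈ ⋂ x ∈ ((OnePoint.some ⁻¹' V : Set G)ᶜ),
          {η : CKO.OmegaT A | η.1 (FreeGroup.of x) = false} :=
        Set.mem_iInter₂.mpr fun x _ => h' x
      refine Filter.mem_of_superset (hWopen.mem_nhds hξW) ?_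
      intro η hη
      simp only [Set.mem_preimage]
      by_cases hex : ∃ x : G, η.1 (FreeGroup.of x) = true
      · obtain ⟨x, hx⟩ := hex
        rw [CKOAux.sigma1_eq (CKOAux.isCK_of_mem_omegaT η.2) hx]
        apply hVs
        by_contra hxV
        have hcon : (η : FreeGroup G → Bool) (FreeGroup.of x) = false :=
          Set.mem_iInter₂.mp hη x hxV
        rw [hx] at hcon
        simp at hcon
      · push_neg at hex
        have hex' : ∀ x : G, η.1 (FreeGroup.of x) = false := by
          intro x
          cases hx : η.1 (FreeGroup.of x)
          · rfl
          · exact absurd hx (hex x)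
        rw [CKOAux.sigma1_infty hex']
        exact hVs hVinf
  have hcont : Continuous (CKO.piMap A) := h1cont.prodMk h2cont
  -- value of piMap on the nice set
  have hPiS : ∀ η : CKO.OmegaT A, η.1 ∈ S → ∃ j : G,
      CKO.piMap A η = ((j : OnePoint G), CKO.col A j) := by
    intro η hη
    obtain ⟨j, hj, hR⟩ := CKOAux.stem_exists hη.1 hη.2
    have h1 : CKO.sigma1 η.1 = (j : OnePoint G) := CKOAux.sigma1_eq hη.1 hj
    have h2 : (fun x => η.1 ((FreeGroup.of x)⁻¹)) = CKO.col A j := funext fun x => hR x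
    refine ⟨j, ?_⟩
    show (CKO.sigma1 η.1, fun x => η.1 ((FreeGroup.of x)⁻¹)) = _
    rw [h1, h2]
  have hrange : Set.range (CKO.piMap A) = CKO.GammaT A := by
    apply Set.Subset.antisymm
    · rintro p ⟨ξ, rfl⟩
      have hcl : ξ ∈ closure ((Subtype.val) ⁻¹' S : Set (CKO.OmegaT A)) := by
        rw [closure_subtype]
        have himg : (Subtype.val : CKO.OmegaT A → _) '' (Subtype.val ⁻¹' S) = S := by
          rw [Set.image_preimage_eq_inter_range, Subtype.range_coe_subtype]
          exact Set.inter_eq_self_of_subset_left subset_closure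
        rw [himg]
        exact ξ.2
      refine map_mem_closure hcont hcl ?_
      intro η hη
      obtain ⟨j, hj⟩ := hPiS η hη
      exact ⟨j, hj⟩
    · haveI : CompactSpace (CKO.OmegaT A) :=
        isCompact_iff_compactSpace.mp (IsClosed.isCompact isClosed_closure)
      have hclosed : IsClosed (Set.range (CKO.piMap A)) := (isCompact_range hcont).isClosed
      refine closure_minimal ?_ hclosed
      rintro p ⟨j, rfl⟩
      obtain ⟨y, hy0, hy⟩ := stem j
      have hCK : CKO.IsCK A (CKOAux.xi A y) := CKOAux.xi_isCK A y hy
      have hUB : CKO.Unbounded (CKOAux.xi A y) := CKOAux.xi_unbounded A y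
      have hmem : CKOAux.xi A y ∈ CKO.OmegaT A := subset_closure ⟨hCK, hUB⟩
      have hj0 : CKOAux.xi A y (FreeGroup.of j) = true := by
        rw [← hy0]
        exact CKOAux.xi_of0 A y
      refine ⟨⟨CKOAux.xi A y, hmem⟩, ?_⟩
      obtain ⟨j', hj', hR⟩ := CKOAux.stem_exists hCK hUB
      have hjj : j' = j := hCK.2.2.1 1 hCK.1 j' j (by rwa [one_mul]) (by rwa [one_mul])
      rw [hjj] at hR
      have h1 : CKO.sigma1 (CKOAux.xi A y) = (j : OnePoint G) := CKOAux.sigma1_eq hCK hj0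
      have h2 : (fun x => CKOAux.xi A y ((FreeGroup.of x)⁻¹)) = CKO.col A j :=
        funext fun x => hR x
      show (CKO.sigma1 (CKOAux.xi A y), fun x => CKOAux.xi A y ((FreeGroup.of x)⁻¹)) = _
      rw [h1, h2]
  -- characterization of chiE
  have hchiE : ∀ ξ : CKO.OmegaT A,
      CKO.piMap A ξ = ((∞ : OnePoint G), fun _ => false) → ξ.1 = CKO.chiE := by
    intro ξ hπ
    have hCK := CKOAux.isCK_of_mem_omegaT ξ.2
    have h1 : CKO.sigma1 ξ.1 = ∞ := congrArg Prod.fst hπ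
    have h2 : ∀ x : G, ξ.1 ((FreeGroup.of x)⁻¹) = false := fun x =>
      congrFun (congrArg Prod.snd hπ) x
    have h0 : ∀ x : G, ξ.1 (FreeGroup.of x) = false := by
      intro x
      cases hx : ξ.1 (FreeGroup.of x)
      · rfl
      · exfalso
        rw [CKOAux.sigma1_eq hCK hx] at h1
        exact OnePoint.coe_ne_infty x h1
    funext ω
    by_cases hω : ω = 1
    · subst hω
      rw [hCK.1]
      simp [CKO.chiE]
    · have hc : CKO.chiE (G := G) ω = false := by simp [CKO.chiE, hω]
      rw [hc]
      cases hval : ξ.1 ω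
      · rfl
      · exfalso
        have hwne : ω.toWord ≠ [] := fun hnil => hω (FreeGroup.toWord_eq_nil_iff.mp hnil)
        obtain ⟨l, t, hcons⟩ := List.exists_cons_of_ne_nil hwne
        obtain ⟨a, b⟩ := l
        have hpre : [(a, b)] <+: ω.toWord := by rw [hcons]; exact ⟨t, rfl⟩
        have hmem := hCK.2.1 ω hval [(a, b)] hpre
        cases b
        · rw [show FreeGroup.mk [(a, false)] = (FreeGroup.of a)⁻¹ from (CKOAux.inv_of_eq a).symm,
            h2 a] at hmem
          exact Bool.false_ne_true hmem
        · rw [show FreeGroup.mk [(a, true)] = FreeGroup.of a from rfl, h0 a] at hmem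
          exact Bool.false_ne_true hmem
  refine ⟨hcont, hrange, ?_⟩
  ext p
  constructor
  · rintro ⟨ξ, hξ, rfl⟩
    constructor
    · rw [← hrange]
      exact Set.mem_range_self ξ
    · intro hp
      rw [Set.mem_singleton_iff] at hp
      exact hξ (hchiE ξ hp)
  · rintro ⟨hp1, hp2⟩
    have hpr : p ∈ Set.range (CKO.piMap A) := by rw [hrange]; exact hp1
    obtain ⟨ξ, rfl⟩ := hpr
    refine ⟨ξ, ?_, rfl⟩
    intro hc
    apply hp2
    rw [Set.mem_singleton_iff]
    have h0 : ∀ x : G, CKO.chiE (G := G) (FreeGroup.of x) = false := fun x => by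
      simp [CKO.chiE, FreeGroup.of_ne_one]
    have h1 : CKO.sigma1 ξ.1 = ∞ := by
      rw [hc]
      exact CKOAux.sigma1_infty h0
    have h2 : (fun x => ξ.1 ((FreeGroup.of x)⁻¹)) = fun _ : G => false := by
      funext x
      rw [hc]
      have hne : (FreeGroup.of x)⁻¹ ≠ (1 : FreeGroup G) := by
        rw [Ne, inv_eq_one]
        exact FreeGroup.of_ne_one x
      simp [CKO.chiE, hne]
    show (CKO.sigma1 ξ.1, fun x => ξ.1 ((FreeGroup.of x)⁻¹)) = _
    rw [h1, h2]
end
end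

section
/- There exists an injective unital *-algebra homomorphism ψ : R̃_A → C(Ω̃_A, ℂ) such that for every i ∈ 𝒢, ψ(δ_i) is the characteristic function of Δ_i = {ξ ∈ Ω̃_A : i ∈ ξ} and ψ(ρ_i) is the characteristic function of Δ_{i⁻¹} = {ξ ∈ Ω̃_A : i⁻¹ ∈ ξ}. Consequently R̃_A is isomorphic to the closed unital *-subalgebra of C(Ω̃_A, ℂ) generated by the characteristic functions of the sets Δ_i and Δ_{i⁻¹}, i ∈ 𝒢. -/
open scoped BoundedContinuousFunction
open OnePoint

noncomputable section

namespace CKO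

variable {G : Type*} [DecidableEq G]

instance OmegaT.compactSpace (A : G → G → Bool) : CompactSpace (OmegaT A) :=
  isCompact_iff_compactSpace.mp (isClosed_closure).isCompact

/-- The characteristic function of `Δ_i = {ξ ∈ Ω̃_A : i ∈ ξ}` as a continuous function. -/
def indDelta (A : G → G → Bool) (i : G) : C(OmegaT A, ℂ) :=
  ⟨fun ξ => if (ξ : FreeGroup G → Bool) (FreeGroup.of i) = true then 1 else 0,
    (continuous_of_discreteTopology
        (f := fun b : Bool => if b = true then (1 : ℂ) else 0)).comp
      ((continuous_apply (FreeGroup.of i)).comp continuous_subtype_val)⟩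

/-- The characteristic function of `Δ_{i⁻¹} = {ξ ∈ Ω̃_A : i⁻¹ ∈ ξ}` as a continuous
function. -/
def indQ (A : G → G → Bool) (i : G) : C(OmegaT A, ℂ) :=
  ⟨fun ξ => if (ξ : FreeGroup G → Bool) ((FreeGroup.of i)⁻¹) = true then 1 else 0,
    (continuous_of_discreteTopology
        (f := fun b : Bool => if b = true then (1 : ℂ) else 0)).comp
      ((continuous_apply ((FreeGroup.of i)⁻¹)).comp continuous_subtype_val)⟩

end CKO

namespace CKAux

open FreeGroup List

variable {G : Type*} [DecidableEq G]

/-- A word is reduced iff no adjacent pair cancels. -/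
def Reduced (L : List (G × Bool)) : Prop :=
  List.Chain' (fun p q : G × Bool => ¬(p.1 = q.1 ∧ p.2 = !q.2)) L

theorem reduce_eq_self {L : List (G × Bool)} (h : Reduced L) : FreeGroup.reduce L = L := by
  induction L with
  | nil => rfl
  | cons x t ih =>
    have ht : FreeGroup.reduce t = t := ih h.tail
    rw [FreeGroup.reduce.cons, ht]
    cases t with
    | nil => rfl
    | cons hd tl =>
      have : ¬(x.1 = hd.1 ∧ x.2 = !hd.2) := (List.isChain_cons_cons.mp h).1
      simp [this]

theorem reduced_reduce (L : List (G × Bool)) : Reduced (FreeGroup.reduce L) := by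
  induction L with
  | nil => exact List.isChain_nil
  | cons x t ih =>
    rw [FreeGroup.reduce.cons]
    rcases h : FreeGroup.reduce t with _ | ⟨hd, tl⟩
    · exact List.isChain_singleton x
    · rw [h] at ih
      by_cases hc : x.1 = hd.1 ∧ x.2 = !hd.2
      · simp only [hc, if_true, and_self]
        exact ih.tail
      · simp only [hc, if_false]
        exact List.isChain_cons_cons.mpr ⟨hc, ih⟩

theorem reduced_toWord (x : FreeGroup G) : Reduced x.toWord := by
  rw [← FreeGroup.reduce_toWord]; exact reduced_reduce _

theorem toWord_mk_reduced {L : List (G × Bool)} (h : Reduced L) :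
    (FreeGroup.mk L).toWord = L := by
  rw [FreeGroup.toWord_mk, reduce_eq_self h]

theorem mk_toWord' {x : FreeGroup G} {L : List (G × Bool)} (h : x.toWord = L) :
    x = FreeGroup.mk L := by
  rw [← h, FreeGroup.mk_toWord]

theorem inv_of_eq (x : G) : (FreeGroup.of x)⁻¹ = FreeGroup.mk [(x, false)] := by
  have : FreeGroup.of x = FreeGroup.mk [(x, true)] := rfl
  rw [this, FreeGroup.inv_mk]
  simp [FreeGroup.invRev]

theorem mul_of_eq (x : FreeGroup G) (y : G) :
    x * FreeGroup.of y = FreeGroup.mk (x.toWord ++ [(y, true)]) := by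
  conv_lhs => rw [← FreeGroup.mk_toWord (x := x)]
  rw [show FreeGroup.of y = FreeGroup.mk [(y, true)] from rfl, FreeGroup.mul_mk]

theorem mul_inv_of_eq (x : FreeGroup G) (y : G) :
    x * (FreeGroup.of y)⁻¹ = FreeGroup.mk (x.toWord ++ [(y, false)]) := by
  conv_lhs => rw [← FreeGroup.mk_toWord (x := x)]
  rw [inv_of_eq, FreeGroup.mul_mk]

theorem cancel_up (L : List (G × Bool)) (a : G) :
    FreeGroup.mk (L ++ [(a, false), (a, true)]) = FreeGroup.mk L := by
  have : L ++ [(a, false), (a, true)] = (L ++ [(a, false)]) ++ [(a, true)] := by simp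
  rw [this, ← FreeGroup.mul_mk, ← FreeGroup.mul_mk, ← inv_of_eq,
    show FreeGroup.mk [(a, true)] = FreeGroup.of a from rfl]
  group

theorem cancel_down (L : List (G × Bool)) (a : G) :
    FreeGroup.mk (L ++ [(a, true), (a, false)]) = FreeGroup.mk L := by
  have : L ++ [(a, true), (a, false)] = (L ++ [(a, true)]) ++ [(a, false)] := by simp
  rw [this, ← FreeGroup.mul_mk, ← FreeGroup.mul_mk, ← inv_of_eq,
    show FreeGroup.mk [(a, true)] = FreeGroup.of a from rfl]
  group

theorem reduced_append {L₁ L₂ : List (G × Bool)} (h₁ : Reduced L₁) (h₂ : Reduced L₂)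
    (h : ∀ p ∈ L₁.getLast?, ∀ q ∈ L₂.head?, ¬(p.1 = q.1 ∧ p.2 = !q.2)) :
    Reduced (L₁ ++ L₂) :=
  List.isChain_append.mpr ⟨h₁, h₂, h⟩

theorem reduced_of_const_snd {L : List (G × Bool)} (b : Bool) (h : ∀ q ∈ L, q.2 = b) :
    Reduced L := by
  induction L with
  | nil => exact List.isChain_nil
  | cons x t ih =>
    cases t with
    | nil => exact List.isChain_singleton x
    | cons y s =>
      refine List.isChain_cons_cons.mpr ⟨?_, ih fun q hq => h q (List.mem_cons_of_mem _ hq)⟩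
      rintro ⟨-, h2⟩
      have hx : x.2 = b := h x (by simp)
      have hy : y.2 = b := h y (by simp)
      rw [hx, hy] at h2
      simp at h2

theorem chain_take {α : Type*} {r : α → α → Prop} :
    ∀ {l : List α} {a : α} (m : ℕ), List.Chain r a l → List.Chain r a (l.take m) := by
  intro l
  induction l with
  | nil => intro a m _; simpa using List.Chain.nil
  | cons b t ih =>
    intro a m h
    cases m with
    | zero => simpa using List.Chain.nil
    | succ m =>
      rw [List.take_succ_cons]
      rcases List.chain_cons.mp h with ⟨hab, ht⟩
      exact List.chain_cons.mpr ⟨hab, ih m ht⟩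

theorem chain_concat {α : Type*} {r : α → α → Prop} :
    ∀ {t : List α} {a z : α}, List.Chain r a (t ++ [z]) ↔ List.Chain r a t ∧ r (t.getLastD a) z := by
  intro t
  induction t with
  | nil => intro a z; simp [List.Chain]
  | cons w t' ih =>
    intro a z
    simp only [List.Chain, List.cons_append, List.isChain_cons_cons] at ih ⊢
    rw [ih, List.getLastD_cons, and_assoc]



variable (σ : G → G) (j : G)

/-- the positive chain word of length `k` -/
def posW (k : ℕ) : List (G × Bool) := (List.range k).map (fun i => (σ^[i] j, true))

/-- a descending word -/
def negW (xs : List G) : List (G × Bool) := xs.map (fun x => (x, false))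

@[simp] theorem posW_zero : posW σ j 0 = [] := rfl
@[simp] theorem negW_nil : negW (G := G) [] = [] := rfl

theorem posW_succ (k : ℕ) : posW σ j (k + 1) = posW σ j k ++ [(σ^[k] j, true)] := by
  rw [posW, List.range_succ, List.map_append]; rfl

@[simp] theorem posW_length (k : ℕ) : (posW σ j k).length = k := by simp [posW]

theorem mem_posW_snd {q : G × Bool} {k : ℕ} (h : q ∈ posW σ j k) : q.2 = true := by
  simp only [posW, List.mem_map] at h
  obtain ⟨i, -, rfl⟩ := h; rfl

theorem mem_negW_snd {q : G × Bool} {xs : List G} (h : q ∈ negW xs) : q.2 = false := by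
  simp only [negW, List.mem_map] at h
  obtain ⟨x, -, rfl⟩ := h; rfl

theorem negW_append (xs ys : List G) : negW (xs ++ ys) = negW xs ++ negW ys := by
  simp [negW]

theorem negW_inj {xs ys : List G} (h : negW xs = negW ys) : xs = ys := by
  have : Function.Injective (fun x : G => (x, false)) := fun a b hab => by
    simpa using hab
  exact List.map_injective_iff.mpr this h

theorem posW_k_inj {k k' : ℕ} (h : posW σ j k = posW σ j k') : k = k' := by
  have := congrArg List.length h
  simpa using this

theorem two_sided {l₁ l₂ m₁ m₂ : List (G × Bool)}
    (hl₁ : ∀ q ∈ l₁, q.2 = true) (hl₂ : ∀ q ∈ l₂, q.2 = true)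
    (hm₁ : ∀ q ∈ m₁, q.2 = false) (hm₂ : ∀ q ∈ m₂, q.2 = false)
    (h : l₁ ++ m₁ = l₂ ++ m₂) : l₁ = l₂ ∧ m₁ = m₂ := by
  induction l₁ generalizing l₂ with
  | nil =>
    cases l₂ with
    | nil => simpa using h
    | cons b t =>
      exfalso
      have hb : b ∈ m₁ := by
        rw [List.nil_append] at h
        rw [h]; simp
      have := hm₁ b hb
      have := hl₂ b (by simp)
      simp_all
  | cons a t ih =>
    cases l₂ with
    | nil =>
      exfalso
      have ha : a ∈ m₂ := by
        rw [List.nil_append] at h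
        rw [← h]; simp
      have := hm₂ a ha
      have := hl₁ a (by simp)
      simp_all
    | cons b t₂ =>
      simp only [List.cons_append, List.cons.injEq] at h
      obtain ⟨rfl, h⟩ := h
      obtain ⟨h1, h2⟩ := ih (fun q hq => hl₁ q (by simp [hq]))
        (fun q hq => hl₂ q (by simp [hq])) h
      exact ⟨by rw [h1], h2⟩

theorem split_unique {k k' : ℕ} {xs xs' : List G}
    (h : posW σ j k ++ negW xs = posW σ j k' ++ negW xs') : k = k' ∧ xs = xs' := by
  obtain ⟨h1, h2⟩ := two_sided (fun q hq => mem_posW_snd σ j hq) (fun q hq => mem_posW_snd σ j hq)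
    (fun q hq => mem_negW_snd hq) (fun q hq => mem_negW_snd hq) h
  exact ⟨posW_k_inj σ j h1, negW_inj h2⟩

variable (A : G → G → Bool)

/-- membership condition for the model point -/
def Good (L : List (G × Bool)) : Prop :=
  ∃ (k : ℕ) (xs : List G), L = posW σ j k ++ negW xs ∧
    List.Chain (fun a b => A b a = true) (σ^[k] j) xs

/-- the model point of `Ω_A`, an unbounded Cuntz-Krieger subset whose positive chain is
the `σ`-orbit of `j`. -/
def xi (ω : FreeGroup G) : Bool := @decide (Good σ j A ω.toWord) (Classical.propDecidable _)

theorem xi_eq_true {ω : FreeGroup G} : xi σ j A ω = true ↔ Good σ j A ω.toWord := by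
  rw [xi]; exact @decide_eq_true_iff _ (Classical.propDecidable _)


/-! ### Reducedness of canonical words -/

theorem reduced_pn_iff {k : ℕ} {xs : List G} :
    Reduced (posW σ j k ++ negW xs) ↔
      (∀ k₀ x xs₀, k = k₀ + 1 → xs = x :: xs₀ → x ≠ σ^[k₀] j) := by
  constructor
  · rintro h k₀ x xs₀ rfl rfl rfl
    obtain ⟨-, -, hjunc⟩ := List.isChain_append.mp h
    exact hjunc (σ^[k₀] j, true)
      (by rw [posW_succ, List.getLast?_concat]; rfl)
      (σ^[k₀] j, false) (by simp [negW]) ⟨rfl, rfl⟩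
  · intro h
    refine List.isChain_append.mpr ⟨reduced_of_const_snd true (fun q hq => mem_posW_snd σ j hq),
      reduced_of_const_snd false (fun q hq => mem_negW_snd hq), ?_⟩
    intro p hp q hq
    cases k with
    | zero => simp [posW] at hp
    | succ k₀ =>
      rw [posW_succ, List.getLast?_concat] at hp
      obtain rfl : p = (σ^[k₀] j, true) := by simpa using hp.symm
      cases xs with
      | nil => simp [negW] at hq
      | cons x xs₀ =>
        obtain rfl : q = (x, false) := by simpa [negW] using hq.symm
        rintro ⟨h1, -⟩
        exact h k₀ x xs₀ rfl rfl h1.symm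

theorem getLast?_pn {k : ℕ} {xs l : List G} {b : G} (h : xs = l ++ [b]) :
    (posW σ j k ++ negW xs).getLast? = Option.some (b, false) := by
  subst h
  rw [negW_append, ← List.append_assoc]
  exact List.getLast?_concat

/-! ### `Good` analysis -/

theorem good_gen {k : ℕ} {xs : List G} :
    Good σ j A (posW σ j k ++ negW xs) ↔
      List.Chain (fun a b => A b a = true) (σ^[k] j) xs := by
  constructor
  · rintro ⟨k', xs', heq, hch⟩
    obtain ⟨rfl, rfl⟩ := split_unique σ j heq
    exact hch
  · intro h
    exact ⟨k, xs, rfl, h⟩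

theorem xs_nil_of_all_true {k' : ℕ} {xs' : List G} {L : List (G × Bool)}
    (h : posW σ j k' ++ negW xs' = L) (hT : ∀ q ∈ L, q.2 = true) : xs' = [] := by
  cases xs' with
  | nil => rfl
  | cons x t =>
    exfalso
    have : ((x, false) : G × Bool) ∈ L := by
      rw [← h]
      exact List.mem_append_right _ (by simp [negW])
    simpa using hT _ this

theorem good_pos_concat_iff {k : ℕ} {y : G} :
    Good σ j A (posW σ j k ++ [(y, true)]) ↔ y = σ^[k] j := by
  constructor
  · rintro ⟨k', xs', heq, -⟩
    have hT : ∀ q ∈ posW σ j k ++ [(y, true)], q.2 = true := by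
      intro q hq
      rcases List.mem_append.mp hq with h | h
      · exact mem_posW_snd σ j h
      · simp at h; rw [h]
    have hnil : xs' = [] := xs_nil_of_all_true σ j heq.symm hT
    subst hnil
    rw [negW_nil, List.append_nil] at heq
    have hk : k' = k + 1 := by
      have := congrArg List.length heq
      simp at this
      omega
    subst hk
    rw [posW_succ] at heq
    have h2 := List.append_cancel_left heq
    simp at h2
    exact h2
  · rintro rfl
    exact ⟨k + 1, [], by rw [posW_succ]; simp, List.Chain.nil⟩

theorem not_good_valley {k : ℕ} {xs l : List G} {b y : G} (hxs : xs = l ++ [b]) :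
    ¬ Good σ j A (posW σ j k ++ negW xs ++ [(y, true)]) := by
  rintro ⟨k', xs', heq, -⟩
  rcases List.eq_nil_or_concat xs' with rfl | ⟨l', b', rfl⟩
  · rw [negW_nil, List.append_nil] at heq
    have : ((b, false) : G × Bool) ∈ posW σ j k' := by
      rw [← heq]
      exact List.mem_append_left _ (List.mem_append_right _ (by simp [hxs, negW]))
    simpa using mem_posW_snd σ j this
  · simp only [List.concat_eq_append] at heq
    have h1 : (posW σ j k ++ negW xs ++ [(y, true)]).getLast? = Option.some (y, true) :=
      List.getLast?_concat
    have h2 : (posW σ j k' ++ negW (l' ++ [b'])).getLast? = Option.some (b', false) :=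
      getLast?_pn σ j rfl
    rw [heq] at h1
    rw [h1] at h2
    simp at h2


/-! ### `xi` basic values -/

theorem xi_one : xi σ j A 1 = true := by
  rw [xi_eq_true, FreeGroup.toWord_one]
  exact ⟨0, [], rfl, List.Chain.nil⟩

theorem reduced_posW_concat (k : ℕ) (y : G) : Reduced (posW σ j k ++ [(y, true)]) := by
  refine reduced_of_const_snd true ?_
  intro q hq
  rcases List.mem_append.mp hq with h | h
  · exact mem_posW_snd σ j h
  · simp at h; rw [h]

theorem xi_mk_posW (k : ℕ) : xi σ j A (FreeGroup.mk (posW σ j k)) = true := by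
  rw [xi_eq_true, toWord_mk_reduced (reduced_of_const_snd true (fun q hq => mem_posW_snd σ j hq))]
  exact ⟨k, [], by simp, List.Chain.nil⟩

theorem xi_succ_nil {ω : FreeGroup G} {k : ℕ} (hL : ω.toWord = posW σ j k) :
    ∀ y : G, xi σ j A (ω * FreeGroup.of y) = true → y = σ^[k] j := by
  intro y hy
  rw [xi_eq_true, mul_of_eq, hL, toWord_mk_reduced (reduced_posW_concat σ j k y)] at hy
  exact (good_pos_concat_iff σ j A).mp hy

theorem xi_succ_concat {ω : FreeGroup G} {k : ℕ} {l : List G} {b : G}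
    (hL : ω.toWord = posW σ j k ++ negW (l ++ [b])) :
    ∀ y : G, xi σ j A (ω * FreeGroup.of y) = true → y = b := by
  intro y hy
  by_contra hne
  have hred0 : Reduced (posW σ j k ++ negW (l ++ [b])) := hL ▸ reduced_toWord ω
  have hred : Reduced ((posW σ j k ++ negW (l ++ [b])) ++ [(y, true)]) := by
    refine reduced_append hred0 (List.isChain_singleton _) ?_
    intro p hp q hq
    rw [getLast?_pn σ j rfl] at hp
    obtain rfl : p = (b, false) := by simpa using hp.symm
    obtain rfl : q = (y, true) := by simpa using hq.symm
    rintro ⟨h1, -⟩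
    exact hne h1.symm
  rw [xi_eq_true, mul_of_eq, hL, toWord_mk_reduced hred] at hy
  exact not_good_valley σ j A rfl hy

theorem xi_down_nil (hσ : ∀ i, A i (σ i) = true) {ω : FreeGroup G} {k : ℕ}
    (hL : ω.toWord = posW σ j k) (x : G) :
    xi σ j A (ω * (FreeGroup.of x)⁻¹) = true ↔ A x (σ^[k] j) = true := by
  by_cases hx : ∃ k₀, k = k₀ + 1 ∧ x = σ^[k₀] j
  · obtain ⟨k₀, rfl, rfl⟩ := hx
    have hω : ω * (FreeGroup.of (σ^[k₀] j))⁻¹ = FreeGroup.mk (posW σ j k₀) := by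
      rw [mul_inv_of_eq, hL, posW_succ, List.append_assoc]
      exact cancel_down _ _
    rw [hω, xi_mk_posW]
    simp only [true_iff]
    rw [Function.iterate_succ_apply']
    exact hσ _
  · push_neg at hx
    have hred : Reduced (posW σ j k ++ negW [x]) := by
      refine (reduced_pn_iff σ j).mpr ?_
      rintro k₀ x' xs₀ rfl hx'
      obtain ⟨rfl, -⟩ : x' = x ∧ xs₀ = ([] : List G) := by
        constructor <;> [skip; skip] <;> injection hx' with h1 h2 <;> simp_all
      exact hx k₀ rfl
    have hw : (ω * (FreeGroup.of x)⁻¹).toWord = posW σ j k ++ negW [x] := by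
      rw [mul_inv_of_eq, hL]
      exact toWord_mk_reduced hred
    rw [xi_eq_true, hw, good_gen]
    simp only [List.Chain, List.isChain_cons_cons, List.isChain_singleton, and_true]

theorem xi_down_concat {ω : FreeGroup G} {k : ℕ} {l : List G} {b : G}
    (hL : ω.toWord = posW σ j k ++ negW (l ++ [b]))
    (hch : List.Chain (fun a c => A c a = true) (σ^[k] j) (l ++ [b])) (x : G) :
    xi σ j A (ω * (FreeGroup.of x)⁻¹) = true ↔ A x b = true := by
  have hred0 : Reduced (posW σ j k ++ negW (l ++ [b])) := hL ▸ reduced_toWord ω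
  have hred : Reduced ((posW σ j k ++ negW (l ++ [b])) ++ [(x, false)]) := by
    refine reduced_append hred0 (List.isChain_singleton _) ?_
    intro p hp q hq
    rw [getLast?_pn σ j rfl] at hp
    obtain rfl : p = (b, false) := by simpa using hp.symm
    obtain rfl : q = (x, false) := by simpa using hq.symm
    rintro ⟨-, h2⟩
    simp at h2
  have hw : (ω * (FreeGroup.of x)⁻¹).toWord = posW σ j k ++ negW ((l ++ [b]) ++ [x]) := by
    rw [mul_inv_of_eq, hL, toWord_mk_reduced hred]
    simp [negW, List.append_assoc]
  rw [xi_eq_true, hw, good_gen, chain_concat, List.getLastD_concat]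
  simp [hch]

/-! ### `xi` is an unbounded Cuntz–Krieger set -/

theorem xi_isCK (hσ : ∀ i, A i (σ i) = true) : CKO.IsCK A (xi σ j A) := by
  refine ⟨xi_one σ j A, ?_, ?_, ?_⟩
  · -- prefix condition
    intro ω hω p hp
    obtain ⟨k, xs, hL, hch⟩ := (xi_eq_true σ j A).mp hω
    have hpred : Reduced p := (reduced_toWord ω).prefix hp
    rw [xi_eq_true, toWord_mk_reduced hpred]
    rw [hL] at hp
    have hp' := List.prefix_iff_eq_take.mp hp
    rw [List.take_append, posW_length] at hp'
    have h1 : List.take p.length (posW σ j k) = posW σ j (min p.length k) := by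
      rw [posW, ← List.map_take, List.take_range]
      rfl
    have h2 : List.take (p.length - k) (negW xs) = negW (List.take (p.length - k) xs) := by
      rw [negW, ← List.map_take]
      rfl
    rw [h1, h2] at hp'
    rcases le_or_gt k p.length with hkn | hkn
    · have hmin : min p.length k = k := min_eq_right hkn
      rw [hmin] at hp'
      exact ⟨k, List.take (p.length - k) xs, hp', chain_take _ hch⟩
    · have : p.length - k = 0 := by omega
      rw [this] at hp'
      simp only [List.take_zero] at hp'
      exact ⟨min p.length k, [], by simpa using hp', List.Chain.nil⟩
  · -- unique successor
    intro ω hω y z hy hz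
    obtain ⟨k, xs, hL, -⟩ := (xi_eq_true σ j A).mp hω
    rcases List.eq_nil_or_concat xs with rfl | ⟨l, b, rfl⟩
    · rw [negW_nil, List.append_nil] at hL
      rw [xi_succ_nil σ j A hL y hy, xi_succ_nil σ j A hL z hz]
    · rw [List.concat_eq_append] at hL
      rw [xi_succ_concat σ j A hL y hy, xi_succ_concat σ j A hL z hz]
  · -- Cuntz–Krieger condition
    intro ω hω y hy x
    obtain ⟨k, xs, hL, hch⟩ := (xi_eq_true σ j A).mp hω
    rcases List.eq_nil_or_concat xs with rfl | ⟨l, b, rfl⟩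
    · rw [negW_nil, List.append_nil] at hL
      obtain rfl := xi_succ_nil σ j A hL y hy
      exact xi_down_nil σ j A hσ hL x
    · rw [List.concat_eq_append] at hL hch
      obtain rfl := xi_succ_concat σ j A hL y hy
      exact xi_down_concat σ j A hL hch x

theorem xi_unbounded : CKO.Unbounded (xi σ j A) := by
  rintro ⟨t, ht⟩
  set ℓ : FreeGroup G →* Multiplicative ℤ :=
    FreeGroup.lift (fun _ : G => Multiplicative.ofAdd (1 : ℤ)) with hℓ
  have hof : ∀ g : G, ℓ (FreeGroup.of g) = Multiplicative.ofAdd (1 : ℤ) := fun g => by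
    rw [hℓ, FreeGroup.lift_apply_of]
  have hpos : ∀ p ∈ CKO.pos G, (0 : ℤ) ≤ Multiplicative.toAdd (ℓ p) := by
    intro p hp
    induction hp using Submonoid.closure_induction with
    | mem x hx =>
      obtain ⟨g, rfl⟩ := hx
      rw [hof]
      simp
    | one => simp
    | mul x y hx hy ihx ihy =>
      rw [_root_.map_mul]
      simpa using add_nonneg ihx ihy
  have hposW : ∀ k : ℕ, ℓ (FreeGroup.mk (posW σ j k)) = Multiplicative.ofAdd (k : ℤ) := by
    intro k
    induction k with
    | zero => rw [posW_zero, ← FreeGroup.one_eq_mk, _root_.map_one]; rfl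
    | succ k ih =>
      have hstep : FreeGroup.mk (posW σ j (k + 1)) =
          FreeGroup.mk (posW σ j k) * FreeGroup.of (σ^[k] j) := by
        rw [posW_succ, show FreeGroup.of (σ^[k] j) = FreeGroup.mk [(σ^[k] j, true)] from rfl,
          FreeGroup.mul_mk]
      rw [hstep, _root_.map_mul, ih, hof, ← ofAdd_add]
      push_cast
      ring_nf
  set K := (Multiplicative.toAdd (ℓ t)).toNat + 1 with hK
  have hmem := ht (FreeGroup.mk (posW σ j K)) (xi_mk_posW σ j A K)
  have h0 := hpos _ hmem
  rw [_root_.map_mul, _root_.map_inv, hposW] at h0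
  rw [show ((Multiplicative.ofAdd (K : ℤ))⁻¹ * ℓ t) =
    Multiplicative.ofAdd (-(K : ℤ) + Multiplicative.toAdd (ℓ t)) by simp] at h0
  rw [toAdd_ofAdd] at h0
  have hle := Int.self_le_toNat (Multiplicative.toAdd (ℓ t))
  omega

/-! ### Level-one values of `xi` -/

theorem xi_of_iff (i : G) : xi σ j A (FreeGroup.of i) = true ↔ i = j := by
  rw [xi_eq_true, FreeGroup.toWord_of]
  constructor
  · rintro ⟨k', xs', heq, -⟩
    have hnil : xs' = [] := xs_nil_of_all_true σ j heq.symm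
      (by intro q hq; simp at hq; rw [hq])
    subst hnil
    rw [negW_nil, List.append_nil] at heq
    have hk : k' = 1 := by
      have := congrArg List.length heq
      simpa using this.symm
    subst hk
    have : posW σ j 1 = [(j, true)] := by simp [posW, List.range_succ]
    rw [this] at heq
    simpa using heq
  · rintro rfl
    exact ⟨1, [], by simp [posW, List.range_succ], List.Chain.nil⟩

theorem xi_inv_of_iff (i : G) : xi σ j A ((FreeGroup.of i)⁻¹) = true ↔ A i j = true := by
  have hw : ((FreeGroup.of i)⁻¹ : FreeGroup G).toWord = [(i, false)] := by
    rw [inv_of_eq]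
    exact toWord_mk_reduced (List.isChain_singleton _)
  rw [xi_eq_true, hw]
  have hform : ([(i, false)] : List (G × Bool)) = posW σ j 0 ++ negW [i] := rfl
  rw [hform, good_gen]
  simp only [List.Chain, List.isChain_cons_cons, List.isChain_singleton, and_true]
  simp

/-! ### Abstract lemmas about unbounded CK sets -/

section Abstract

variable {A : G → G → Bool}

theorem allFalse_of_no_pos {ξ : FreeGroup G → Bool} (hCK : CKO.IsCK A ξ)
    (h0 : ∀ y : G, ¬ ξ (FreeGroup.of y) = true) :
    ∀ (n : ℕ) (s : FreeGroup G), ξ s = true → s.toWord.length = n →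
      ∀ q ∈ s.toWord, q.2 = false := by
  obtain ⟨hone, hpre, hb, hc⟩ := hCK
  intro n
  induction n with
  | zero =>
    intro s hs hlen q hq
    rw [List.length_eq_zero_iff] at hlen
    rw [hlen] at hq
    simp at hq
  | succ n ih =>
    intro s hs hlen q hq
    rcases List.eq_nil_or_concat s.toWord with hnil | ⟨L₀, e, hL⟩
    · rw [hnil] at hq; simp at hq
    · rw [List.concat_eq_append] at hL
      have hL₀pre : L₀ <+: s.toWord := ⟨[e], hL.symm⟩
      have hs₀ : ξ (FreeGroup.mk L₀) = true := hpre s hs L₀ hL₀pre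
      have hL₀red : Reduced L₀ := (reduced_toWord s).prefix hL₀pre
      have hL₀w : (FreeGroup.mk L₀).toWord = L₀ := toWord_mk_reduced hL₀red
      have hlen' : L₀.length = n := by
        have := congrArg List.length hL
        rw [hlen] at this
        simp at this
        omega
      have ihL₀ : ∀ q ∈ L₀, q.2 = false := by
        intro q hq
        exact ih (FreeGroup.mk L₀) hs₀ (by rw [hL₀w, hlen']) q (by rw [hL₀w]; exact hq)
      rw [hL] at hq
      rcases List.mem_append.mp hq with hq1 | hq2
      · exact ihL₀ q hq1
      · simp only [List.mem_singleton] at hq2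
        subst hq2
        obtain ⟨a, bb⟩ := q
        by_contra hbb
        simp only [Bool.not_eq_false] at hbb
        subst hbb
        rcases List.eq_nil_or_concat L₀ with rfl | ⟨M, f, hM⟩
        · refine h0 a ?_
          have h2 := FreeGroup.mk_toWord (x := s)
          rw [hL] at h2
          simp only [List.nil_append] at h2
          rw [show FreeGroup.of a = FreeGroup.mk [(a, true)] from rfl, h2]
          exact hs
        · rw [List.concat_eq_append] at hM
          obtain ⟨x, fb⟩ := f
          have hfb : fb = false := by
            have : (x, fb) ∈ L₀ := by rw [hM]; simp
            simpa using ihL₀ _ this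
          subst hfb
          have hν : FreeGroup.mk L₀ * FreeGroup.of x = FreeGroup.mk M := by
            rw [mul_of_eq, hL₀w, hM, List.append_assoc]
            exact cancel_up _ _
          have hMpre : M <+: s.toWord := by
            rw [hL, hM]
            exact ⟨[(x, false), (a, true)], by simp⟩
          have hsM : ξ (FreeGroup.mk M) = true := hpre s hs M hMpre
          have hsa : FreeGroup.mk L₀ * FreeGroup.of a = s := by
            rw [mul_of_eq, hL₀w, ← hL, FreeGroup.mk_toWord]
          have hax : x = a := hb (FreeGroup.mk L₀) hs₀ x a
            (by rw [hν]; exact hsM) (by rw [hsa]; exact hs)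
          have hred := reduced_toWord s
          rw [hL, hM] at hred
          obtain ⟨-, -, hjunc⟩ := List.isChain_append.mp hred
          exact hjunc (x, false) (by rw [List.getLast?_concat]; rfl) (a, true) rfl ⟨hax, rfl⟩

theorem inv_mem_pos :
    ∀ (n : ℕ) (s : FreeGroup G), s.toWord.length = n → (∀ q ∈ s.toWord, q.2 = false) →
      s⁻¹ ∈ CKO.pos G := by
  intro n
  induction n with
  | zero =>
    intro s hlen _
    have hnil : s.toWord = [] := List.length_eq_zero_iff.mp hlen
    rw [FreeGroup.toWord_eq_nil_iff] at hnil
    subst hnil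
    simpa using one_mem (CKO.pos G)
  | succ n ih =>
    intro s hlen hAF
    rcases List.eq_nil_or_concat s.toWord with hnil | ⟨L₀, e, hL⟩
    · rw [hnil] at hlen; simp at hlen
    · rw [List.concat_eq_append] at hL
      obtain ⟨x, fb⟩ := e
      have hfb : fb = false := hAF (x, fb) (by rw [hL]; simp)
      subst hfb
      have hL₀red : Reduced L₀ := (reduced_toWord s).prefix ⟨[(x, false)], hL.symm⟩
      have hL₀w : (FreeGroup.mk L₀).toWord = L₀ := toWord_mk_reduced hL₀red
      have hdec : s = FreeGroup.mk L₀ * (FreeGroup.of x)⁻¹ := by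
        rw [mul_inv_of_eq, hL₀w, ← hL, FreeGroup.mk_toWord]
      have hlen' : (FreeGroup.mk L₀).toWord.length = n := by
        rw [hL₀w]
        have := congrArg List.length hL
        rw [hlen] at this
        simp at this
        omega
      have hmem : (FreeGroup.mk L₀)⁻¹ ∈ CKO.pos G := by
        refine ih (FreeGroup.mk L₀) hlen' ?_
        intro q hq
        rw [hL₀w] at hq
        exact hAF q (by rw [hL]; exact List.mem_append_left _ hq)
      rw [hdec, mul_inv_rev, inv_inv]
      exact mul_mem (Submonoid.subset_closure ⟨x, rfl⟩) hmem

theorem exists_pos_of_unbounded {ξ : FreeGroup G → Bool} (hCK : CKO.IsCK A ξ)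
    (hub : CKO.Unbounded ξ) : ∃ y, ξ (FreeGroup.of y) = true := by
  by_contra h
  push_neg at h
  refine hub ⟨1, fun s hs => ?_⟩
  rw [mul_one]
  exact inv_mem_pos s.toWord.length s rfl
    (allFalse_of_no_pos ⟨hCK.1, hCK.2.1, hCK.2.2.1, hCK.2.2.2⟩
      (fun y hy => h y hy) s.toWord.length s hs rfl)

theorem level_one {ξ : FreeGroup G → Bool} (hCK : CKO.IsCK A ξ) {y : G}
    (hy : ξ (FreeGroup.of y) = true) :
    (∀ i, (ξ (FreeGroup.of i) = true ↔ i = y)) ∧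
      (∀ i, (ξ ((FreeGroup.of i)⁻¹) = true ↔ A i y = true)) := by
  obtain ⟨hone, hpre, hb, hc⟩ := hCK
  constructor
  · intro i
    constructor
    · intro hi
      exact hb 1 hone i y (by rw [one_mul]; exact hi) (by rw [one_mul]; exact hy)
    · rintro rfl; exact hy
  · intro i
    have := hc 1 hone y (by rw [one_mul]; exact hy) i
    rw [one_mul] at this
    exact this

end Abstract

section Analytic

variable [Nonempty G] [TopologicalSpace G] [DiscreteTopology G]
variable (A : G → G → Bool) (σ : G → G) (hσ : ∀ i, A i (σ i) = true)

/-- The model point of `Ω̃_A` associated to `j ∈ G`. -/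
def XiPt (j : G) : ↥(CKO.OmegaT A) :=
  ⟨xi σ j A, subset_closure ⟨xi_isCK σ j A hσ, xi_unbounded σ j A⟩⟩

/-- Restriction to the model points, as a star algebra homomorphism. -/
def Emap : C(↥(CKO.OmegaT A), ℂ) →⋆ₐ[ℂ] (G →ᵇ ℂ) where
  toFun f := BoundedContinuousFunction.ofNormedAddCommGroupDiscrete
    (fun j => f (XiPt A σ hσ j)) ‖f‖ (fun j => f.norm_coe_le_norm _)
  map_one' := by ext j; simp
  map_mul' f g := by ext j; simp
  map_zero' := by ext j; simp
  map_add' f g := by ext j; simp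
  commutes' c := by ext j; simp
  map_star' f := by ext j; simp

theorem Emap_apply (f : C(↥(CKO.OmegaT A), ℂ)) (j : G) :
    Emap A σ hσ f j = f (XiPt A σ hσ j) := rfl

theorem Emap_norm_le (f : C(↥(CKO.OmegaT A), ℂ)) : ‖Emap A σ hσ f‖ ≤ ‖f‖ :=
  (BoundedContinuousFunction.norm_le (norm_nonneg f)).mpr
    (fun j => f.norm_coe_le_norm (XiPt A σ hσ j))

theorem Emap_indDelta (i : G) : Emap A σ hσ (CKO.indDelta A i) = CK.delB i := by
  ext j
  show (if xi σ j A (FreeGroup.of i) = true then (1 : ℂ) else 0) = (if j = i then 1 else 0)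
  by_cases h : i = j
  · rw [if_pos ((xi_of_iff σ j A i).mpr h), if_pos h.symm]
  · rw [if_neg (fun hc => h ((xi_of_iff σ j A i).mp hc)), if_neg (fun hc => h hc.symm)]

theorem Emap_indQ (i : G) : Emap A σ hσ (CKO.indQ A i) = CK.rhoB A i := by
  ext j
  show (if xi σ j A ((FreeGroup.of i)⁻¹) = true then (1 : ℂ) else 0)
      = (if A i j then 1 else 0)
  by_cases h : A i j = true
  · rw [if_pos ((xi_inv_of_iff σ j A i).mpr h), if_pos h]
  · rw [if_neg (fun hc => h ((xi_inv_of_iff σ j A i).mp hc)), if_neg h]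

theorem boolext {a b : Bool} (h : a = true ↔ b = true) : a = b := by
  cases a <;> cases b <;> simp_all

theorem adjoin_dep {f : C(↥(CKO.OmegaT A), ℂ)}
    (hf : f ∈ StarAlgebra.adjoin ℂ (Set.range (CKO.indDelta A) ∪ Set.range (CKO.indQ A)))
    {ξ ζ : ↥(CKO.OmegaT A)}
    (h : ∀ i : G,
      (ξ : FreeGroup G → Bool) (FreeGroup.of i) = (ζ : FreeGroup G → Bool) (FreeGroup.of i) ∧
      (ξ : FreeGroup G → Bool) ((FreeGroup.of i)⁻¹) =
        (ζ : FreeGroup G → Bool) ((FreeGroup.of i)⁻¹)) :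
    f ξ = f ζ := by
  induction hf using StarAlgebra.adjoin_induction with
  | mem x hx =>
    rcases hx with ⟨i, rfl⟩ | ⟨i, rfl⟩
    · simp only [CKO.indDelta, ContinuousMap.coe_mk, (h i).1]
    · simp only [CKO.indQ, ContinuousMap.coe_mk, (h i).2]
  | algebraMap r => simp
  | add x y hx hy ihx ihy => simp [ihx, ihy]
  | mul x y hx hy ihx ihy => simp [ihx, ihy]
  | star x hx ihx => simp [ihx]

theorem norm_le_Emap {f : C(↥(CKO.OmegaT A), ℂ)}
    (hf : f ∈ StarAlgebra.adjoin ℂ (Set.range (CKO.indDelta A) ∪ Set.range (CKO.indQ A))) :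
    ‖f‖ ≤ ‖Emap A σ hσ f‖ := by
  refine (ContinuousMap.norm_le f (norm_nonneg _)).mpr ?_
  intro ξ
  refine le_of_forall_pos_le_add ?_
  intro ε hε
  have hUopen : IsOpen {ζ : ↥(CKO.OmegaT A) | ‖f ζ - f ξ‖ < ε} :=
    isOpen_lt ((f.continuous.sub continuous_const).norm) continuous_const
  obtain ⟨V, hVopen, hVU⟩ := isOpen_induced_iff.mp hUopen
  have hξV : (ξ : FreeGroup G → Bool) ∈ V := by
    have hmem : ξ ∈ {ζ : ↥(CKO.OmegaT A) | ‖f ζ - f ξ‖ < ε} := by simp [hε]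
    rw [← hVU] at hmem
    exact hmem
  have hξcl : (ξ : FreeGroup G → Bool) ∈
      closure {ξ' : FreeGroup G → Bool | CKO.IsCK A ξ' ∧ CKO.Unbounded ξ'} := ξ.2
  obtain ⟨ξ'₀, hξ'V, hξ'S⟩ := _root_.mem_closure_iff.mp hξcl V hVopen hξV
  obtain ⟨hCK, hub⟩ := id hξ'S
  obtain ⟨y, hy⟩ := exists_pos_of_unbounded hCK hub
  obtain ⟨hlvl1, hlvl2⟩ := level_one hCK hy
  set ζ : ↥(CKO.OmegaT A) := ⟨ξ'₀, subset_closure hξ'S⟩ with hζ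
  have hζU : ‖f ζ - f ξ‖ < ε := by
    have hmem : ζ ∈ {ζ : ↥(CKO.OmegaT A) | ‖f ζ - f ξ‖ < ε} := by
      rw [← hVU]
      exact hξ'V
    exact hmem
  have hmatch : ∀ i : G,
      (ζ : FreeGroup G → Bool) (FreeGroup.of i) =
        ((XiPt A σ hσ y : ↥(CKO.OmegaT A)) : FreeGroup G → Bool) (FreeGroup.of i) ∧
      (ζ : FreeGroup G → Bool) ((FreeGroup.of i)⁻¹) =
        ((XiPt A σ hσ y : ↥(CKO.OmegaT A)) : FreeGroup G → Bool) ((FreeGroup.of i)⁻¹) := by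
    intro i
    constructor
    · refine boolext ?_
      show ξ'₀ (FreeGroup.of i) = true ↔ xi σ y A (FreeGroup.of i) = true
      rw [hlvl1 i, xi_of_iff]
    · refine boolext ?_
      show ξ'₀ ((FreeGroup.of i)⁻¹) = true ↔ xi σ y A ((FreeGroup.of i)⁻¹) = true
      rw [hlvl2 i, xi_inv_of_iff]
  have hfζ : f ζ = f (XiPt A σ hσ y) := adjoin_dep A hf hmatch
  have h1 : ‖f ξ‖ - ‖f ζ‖ ≤ ‖f ζ - f ξ‖ := by
    rw [norm_sub_rev]
    exact norm_sub_norm_le _ _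
  have h2 : ‖f (XiPt A σ hσ y)‖ ≤ ‖Emap A σ hσ f‖ :=
    (Emap_apply A σ hσ f y) ▸ (Emap A σ hσ f).norm_coe_le_norm y
  rw [hfζ] at hζU h1
  linarith

end Analytic

end CKAux

set_option maxHeartbeats 1000000 in
set_option synthInstance.maxHeartbeats 1000000 in
/-- There is an injective unital *-algebra homomorphism
`ψ : R̃_A → C(Ω̃_A, ℂ)` sending `δ_i` to the characteristic function of `Δ_i` and `ρ_i` to
the characteristic function of `Δ_{i⁻¹}`; consequently `R̃_A` is isomorphic to the closed
unital *-subalgebra of `C(Ω̃_A, ℂ)` generated by these characteristic functions. -/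
theorem stmt_6 {G : Type*} [Nonempty G] [DecidableEq G]
    [TopologicalSpace G] [DiscreteTopology G]
    (A : G → G → Bool) (hA : ∀ i : G, ∃ j : G, A i j = true) :
    ∃ ψ : CK.RtA A →⋆ₐ[ℂ] C(CKO.OmegaT A, ℂ),
      Function.Injective ψ ∧
      (∀ (i : G) (h : CK.delB i ∈ CK.RtA A), ψ ⟨CK.delB i, h⟩ = CKO.indDelta A i) ∧
      (∀ (i : G) (h : CK.rhoB A i ∈ CK.RtA A), ψ ⟨CK.rhoB A i, h⟩ = CKO.indQ A i) ∧
      Set.range ψ = ((StarAlgebra.adjoin ℂ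
          (Set.range (CKO.indDelta A) ∪ Set.range (CKO.indQ A))).topologicalClosure :
        Set C(CKO.OmegaT A, ℂ)) := by
  classical
  set σ : G → G := fun i => (hA i).choose with hσdef
  have hσ : ∀ i, A i (σ i) = true := fun i => (hA i).choose_spec
  set gensΩ : Set C(CKO.OmegaT A, ℂ) :=
    Set.range (CKO.indDelta A) ∪ Set.range (CKO.indQ A) with hgensΩ
  set B : StarSubalgebra ℂ C(CKO.OmegaT A, ℂ) :=
    (StarAlgebra.adjoin ℂ gensΩ).topologicalClosure with hBdef
  set E := CKAux.Emap A σ hσ with hEdef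
  have hED : ∀ i, E (CKO.indDelta A i) = CK.delB i := CKAux.Emap_indDelta A σ hσ
  have hEQ : ∀ i, E (CKO.indQ A i) = CK.rhoB A i := CKAux.Emap_indQ A σ hσ
  have hle : ∀ f, ‖E f‖ ≤ ‖f‖ := CKAux.Emap_norm_le A σ hσ
  have hcontE : Continuous fun g : C(CKO.OmegaT A, ℂ) => E g := by
    have hlip : LipschitzWith 1 (fun g : C(CKO.OmegaT A, ℂ) => E g) := by
      refine LipschitzWith.of_dist_le_mul ?_
      intro g₁ g₂
      rw [NNReal.coe_one, one_mul, dist_eq_norm, dist_eq_norm, ← map_sub]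
      exact hle _
    exact hlip.continuous
  have hge : ∀ f ∈ B, ‖f‖ ≤ ‖E f‖ := by
    intro f hf
    have hclosed : IsClosed {g : C(CKO.OmegaT A, ℂ) | ‖g‖ ≤ ‖E g‖} :=
      isClosed_le continuous_norm hcontE.norm
    have hsub : (StarAlgebra.adjoin ℂ gensΩ : Set _) ⊆ {g | ‖g‖ ≤ ‖E g‖} :=
      fun g hg => CKAux.norm_le_Emap A σ hσ hg
    exact closure_minimal hsub hclosed hf
  have hiso : ∀ f ∈ B, ‖E f‖ = ‖f‖ := fun f hf => le_antisymm (hle f) (hge f hf)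
  have himgset : ⇑E '' gensΩ = CK.gens A := by
    rw [hgensΩ, Set.image_union, ← Set.range_comp, ← Set.range_comp,
      show ((⇑E) ∘ CKO.indDelta A) = CK.delB (G := G) from funext hED,
      show ((⇑E) ∘ CKO.indQ A) = CK.rhoB A from funext hEQ,
      CK.gens, Set.union_comm]
  have himg : ⇑E '' (StarAlgebra.adjoin ℂ gensΩ : Set _) =
      (StarAlgebra.adjoin ℂ (CK.gens A) : Set _) := by
    rw [← himgset, ← StarAlgHom.map_adjoin, StarSubalgebra.coe_map]
  have hEinRtA : ∀ f ∈ B, E f ∈ CK.RtA A := by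
    intro f hf
    have hmem : E f ∈ closure (⇑E '' (StarAlgebra.adjoin ℂ gensΩ : Set _)) :=
      image_closure_subset_closure_image hcontE ⟨f, hf, rfl⟩
    rw [himg] at hmem
    exact hmem
  have hmemB : ∀ i, CKO.indDelta A i ∈ B := fun i =>
    (StarSubalgebra.le_topologicalClosure _) (StarAlgebra.subset_adjoin ℂ _ (Or.inl ⟨i, rfl⟩))
  have hmemBQ : ∀ i, CKO.indQ A i ∈ B := fun i =>
    (StarSubalgebra.le_topologicalClosure _) (StarAlgebra.subset_adjoin ℂ _ (Or.inr ⟨i, rfl⟩))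
  let E' : ↥B →⋆ₐ[ℂ] ↥(CK.RtA A) :=
    (E.comp B.subtype).codRestrict (CK.RtA A) (fun b => hEinRtA b.1 b.2)
  have hE'val : ∀ b : ↥B, (E' b : G →ᵇ ℂ) = E b.1 := fun b => rfl
  have hE'inj : Function.Injective E' := by
    intro b₁ b₂ h
    have hval : E b₁.1 = E b₂.1 := congrArg Subtype.val h
    have hsubm : (b₁ : C(CKO.OmegaT A, ℂ)) - b₂ ∈ B := sub_mem b₁.2 b₂.2
    have hzero : ‖(b₁ : C(CKO.OmegaT A, ℂ)) - (b₂ : C(CKO.OmegaT A, ℂ))‖ = 0 := by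
      rw [← hiso _ hsubm, map_sub, hval, sub_self, norm_zero]
    exact Subtype.ext (by rwa [norm_eq_zero, sub_eq_zero] at hzero)
  have hE'surj : Function.Surjective E' := by
    have hisoB : Isometry (fun b : ↥B => E b.1) := by
      refine Isometry.of_dist_eq ?_
      intro b₁ b₂
      rw [dist_eq_norm, ← map_sub, Subtype.dist_eq, dist_eq_norm]
      exact hiso _ (sub_mem b₁.2 b₂.2)
    have hBclosed : IsClosed (B : Set C(CKO.OmegaT A, ℂ)) :=
      StarSubalgebra.isClosed_topologicalClosure _
    haveI : CompleteSpace ↥B := hBclosed.completeSpace_coe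
    have hrangeclosed : IsClosed (Set.range fun b : ↥B => E b.1) :=
      hisoB.isClosedEmbedding.isClosed_range
    have hsub2 : (StarAlgebra.adjoin ℂ (CK.gens A) : Set _) ⊆
        Set.range fun b : ↥B => E b.1 := by
      intro g hg
      rw [← himg] at hg
      obtain ⟨f, hf, rfl⟩ := hg
      exact ⟨⟨f, (StarSubalgebra.le_topologicalClosure _) hf⟩, rfl⟩
    have hRtAsub : (CK.RtA A : Set _) ⊆ Set.range fun b : ↥B => E b.1 :=
      closure_minimal hsub2 hrangeclosed
    intro r
    obtain ⟨b, hb⟩ := hRtAsub r.2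
    exact ⟨b, Subtype.ext hb⟩
  let eqv : ↥B ≃⋆ₐ[ℂ] ↥(CK.RtA A) := StarAlgEquiv.ofBijective E' ⟨hE'inj, hE'surj⟩
  have heqv : ∀ b : ↥B, eqv b = E' b := fun b => StarAlgEquiv.ofBijective_apply _ b
  refine ⟨B.subtype.comp (eqv.symm : ↥(CK.RtA A) →⋆ₐ[ℂ] ↥B), ?_, ?_, ?_, ?_⟩
  · have : ⇑(B.subtype.comp (eqv.symm : ↥(CK.RtA A) →⋆ₐ[ℂ] ↥B)) =
        Subtype.val ∘ ⇑eqv.symm := rfl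
    rw [this]
    exact Subtype.val_injective.comp eqv.symm.injective
  · intro i h
    have h1 : eqv ⟨CKO.indDelta A i, hmemB i⟩ = ⟨CK.delB i, h⟩ := by
      rw [heqv]
      exact Subtype.ext (hED i)
    have h2 : eqv.symm ⟨CK.delB i, h⟩ = ⟨CKO.indDelta A i, hmemB i⟩ := by
      rw [← h1, StarAlgEquiv.symm_apply_apply]
    show B.subtype (eqv.symm ⟨CK.delB i, h⟩) = _
    rw [h2]
    rfl
  · intro i h
    have h1 : eqv ⟨CKO.indQ A i, hmemBQ i⟩ = ⟨CK.rhoB A i, h⟩ := by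
      rw [heqv]
      exact Subtype.ext (hEQ i)
    have h2 : eqv.symm ⟨CK.rhoB A i, h⟩ = ⟨CKO.indQ A i, hmemBQ i⟩ := by
      rw [← h1, StarAlgEquiv.symm_apply_apply]
    show B.subtype (eqv.symm ⟨CK.rhoB A i, h⟩) = _
    rw [h2]
    rfl
  · have hco : ⇑(B.subtype.comp (eqv.symm : ↥(CK.RtA A) →⋆ₐ[ℂ] ↥B)) =
        Subtype.val ∘ ⇑eqv.symm := rfl
    rw [hco, Set.range_comp]
    have hsur : Set.range ⇑eqv.symm = Set.univ := eqv.symm.surjective.range_eq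
    rw [hsur, Set.image_univ, Subtype.range_coe]
end
end

section
/- Let B be a unital C*-algebra and {P_i : i ∈ 𝒢} ∪ {Q_i : i ∈ 𝒢} ⊆ B a family of projections (self-adjoint idempotents) satisfying: (i) Q_i Q_j = Q_j Q_i for all i, j ∈ 𝒢; (ii) P_i P_j = 0 for i ≠ j; (iii) Q_i P_j = A(i,j) P_j for all i, j ∈ 𝒢; (iv) for all finite subsets X, Y ⊆ 𝒢 such that the set S(X,Y) := {j ∈ 𝒢 : A(x,j) = 1 for all x ∈ X and A(y,j) = 0 for all y ∈ Y} is finite, one has ∏_{x∈X} Q_x · ∏_{y∈Y} (1 − Q_y) = Σ_{j ∈ S(X,Y)} P_j (empty products being 1 ∈ B). Then there exists a unital *-algebra homomorphism Φ : R̃_A → B with Φ(δ_i) = P_i and Φ(ρ_i) = Q_i for every i ∈ 𝒢. -/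
open scoped BoundedContinuousFunction
open OnePoint

noncomputable section

namespace CKAux
open CK

/-- indicator of a clopen set is continuous -/
lemma continuous_ite {X : Type*} [TopologicalSpace X] {p : X → Prop} [DecidablePred p]
    (hp : IsClopen {x | p x}) : Continuous fun x => if p x then (1 : ℂ) else 0 := by
  refine Continuous.if ?_ continuous_const continuous_const
  intro a ha
  rw [hp.frontier_eq] at ha
  exact absurd ha (Set.notMem_empty a)

variable {G : Type*} [TopologicalSpace G] [DiscreteTopology G] [DecidableEq G]

/-- the base point of `Γ̃_A` at `j`. -/
def base (A : G → G → Bool) (j : G) : GammaT A :=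
  ⟨((j : OnePoint G), col A j), subset_closure ⟨j, rfl⟩⟩

lemma denseRange_base (A : G → G → Bool) : DenseRange (base A) := by
  rw [DenseRange, dense_iff_closure_eq]
  have hval : Subtype.val '' Set.range (base A) =
      {p : OnePoint G × (G → Bool) | ∃ j : G, p = ((j : OnePoint G), col A j)} := by
    ext p
    constructor
    · rintro ⟨x, ⟨j, rfl⟩, rfl⟩; exact ⟨j, rfl⟩
    · rintro ⟨j, rfl⟩; exact ⟨base A j, ⟨j, rfl⟩, rfl⟩
  have hce : Topology.IsClosedEmbedding (Subtype.val : GammaT A → _) :=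
    Topology.IsClosedEmbedding.subtypeVal isClosed_closure
  have h1 : Subtype.val '' closure (Set.range (base A)) = Set.range (Subtype.val : GammaT A → _) := by
    rw [← hce.closure_image_eq, hval]
    rw [Subtype.range_coe_subtype]
    rfl
  have h2 : Subtype.val '' (Set.univ : Set (GammaT A)) =
      Set.range (Subtype.val : GammaT A → _) := Set.image_univ
  exact Set.image_injective.mpr Subtype.val_injective (h1.trans h2.symm)

/-- `q_i` as a continuous function on `Γ̃_A`. -/
def qC (A : G → G → Bool) (i : G) : C(GammaT A, ℂ) where
  toFun := fun x => if x.1.2 i = true then 1 else 0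
  continuous_toFun := by
    apply continuous_ite
    have : Continuous fun x : GammaT A => x.1.2 i :=
      (continuous_apply i).comp (continuous_snd.comp continuous_subtype_val)
    exact (isClopen_discrete {true}).preimage this

open scoped Classical in
/-- `p_j` as a continuous function on `Γ̃_A`. -/
def pC (A : G → G → Bool) (j : G) : C(GammaT A, ℂ) where
  toFun := fun x => if x.1.1 = (j : OnePoint G) then 1 else 0
  continuous_toFun := by
    apply continuous_ite
    have hc : Continuous fun x : GammaT A => x.1.1 :=
      continuous_fst.comp continuous_subtype_val
    have : IsClopen {y : OnePoint G | y = (j : OnePoint G)} := by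
      constructor
      · have : {y : OnePoint G | y = (j : OnePoint G)} = {((j : G) : OnePoint G)} := by
          ext y; simp [Set.mem_singleton_iff]
        rw [this]
        exact isClosed_singleton
      · have : {y : OnePoint G | y = (j : OnePoint G)} = (fun x : G => (x : OnePoint G)) '' {j} := by
          ext y
          simp only [Set.mem_setOf_eq, Set.image_singleton, Set.mem_singleton_iff]
        rw [this]
        exact OnePoint.isOpen_image_coe.2 (isOpen_discrete _)
    exact this.preimage hc

@[simp] lemma phi_apply (A : G → G → Bool) (f : C(GammaT A, ℂ)) (j : G) :
    Phi A f j = f (base A j) := rfl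

@[simp] lemma qC_apply (A : G → G → Bool) (i : G) (x : GammaT A) :
    qC A i x = if x.1.2 i = true then 1 else 0 := rfl

open scoped Classical in
@[simp] lemma pC_apply (A : G → G → Bool) (j : G) (x : GammaT A) :
    pC A j x = if x.1.1 = (j : OnePoint G) then 1 else 0 := rfl

/-- `Phi` as a star algebra homomorphism. -/
def PhiHom (A : G → G → Bool) : C(GammaT A, ℂ) →⋆ₐ[ℂ] (G →ᵇ ℂ) where
  toFun := Phi A
  map_one' := by ext j; simp [Phi]
  map_mul' f g := by ext j; simp [Phi]
  map_zero' := by ext j; simp [Phi]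
  map_add' f g := by ext j; simp [Phi]
  commutes' c := by ext j; simp [Phi, BoundedContinuousFunction.algebraMap_apply]
  map_star' f := by ext j; simp [Phi]

lemma phiHom_isometry (A : G → G → Bool) : Isometry (PhiHom A) := by
  refine AddMonoidHomClass.isometry_of_norm _ fun f => ?_
  refine le_antisymm ?_ ?_
  · exact BoundedContinuousFunction.norm_ofNormedAddCommGroup_le _ (norm_nonneg f)
      (fun j => f.norm_coe_le_norm _)
  · refine (f.norm_le (norm_nonneg _)).2 fun x => ?_
    refine (denseRange_base A).induction_on x ?_ fun j => ?_
    · exact isClosed_le (by continuity) continuous_const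
    · exact (PhiHom A f).norm_coe_le_norm j

lemma phiHom_qC (A : G → G → Bool) (i : G) : PhiHom A (qC A i) = rhoB A i := by
  ext j
  show Phi A (qC A i) j = rhoB A i j
  simp [Phi, qC, rhoB, rho, col, base, BoundedContinuousFunction.ofNormedAddCommGroupDiscrete]
  exact if_congr Iff.rfl rfl rfl

open scoped Classical in
lemma phiHom_pC (A : G → G → Bool) (j : G) : PhiHom A (pC A j) = delB j := by
  ext k
  show Phi A (pC A j) k = delB j k
  simp only [Phi, pC, delB, del, base]
  simp only [BoundedContinuousFunction.ofNormedAddCommGroupDiscrete,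
    BoundedContinuousFunction.ofNormedAddCommGroup]
  show (if ((k : OnePoint G) = (j : OnePoint G)) then (1:ℂ) else 0) = if k = j then 1 else 0
  by_cases h : k = j
  · simp [h]
  · rw [if_neg (by simpa [OnePoint.coe_eq_coe] using h), if_neg h]

end CKAux

namespace CKAux
open CK

variable {G : Type*} [TopologicalSpace G] [DiscreteTopology G] [DecidableEq G]

/-- The dense subalgebra of `C(Γ̃_A, ℂ)` generated by the `q_i` and `p_j`. -/
def SGamma (A : G → G → Bool) : StarSubalgebra ℂ C(GammaT A, ℂ) :=
  StarAlgebra.adjoin ℂ (Set.range (qC A) ∪ Set.range (pC A))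

lemma sGamma_dense (A : G → G → Bool) : (SGamma A).topologicalClosure = ⊤ := by
  apply ContinuousMap.starSubalgebra_topologicalClosure_eq_top_of_separatesPoints
  intro x y hxy
  by_cases hc : x.1.2 = y.1.2
  · -- second coordinates agree, first must differ
    have h1 : x.1.1 ≠ y.1.1 := by
      intro h
      exact hxy (Subtype.ext (Prod.ext h hc))
    -- one of them is a point of `G`
    have : (∃ j : G, x.1.1 = (j : OnePoint G)) ∨ (∃ j : G, y.1.1 = (j : OnePoint G)) := by
      rcases hx : x.1.1 with _ | j
      · rcases hy : y.1.1 with _ | j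
        · exact absurd (hx.trans hy.symm) h1
        · exact Or.inr ⟨j, rfl⟩
      · exact Or.inl ⟨j, rfl⟩
    rcases this with ⟨j, hj⟩ | ⟨j, hj⟩
    · refine ⟨_, ⟨pC A j, StarAlgebra.subset_adjoin ℂ _ (Or.inr ⟨j, rfl⟩), rfl⟩, ?_⟩
      have hy : ¬ ((y : OnePoint G × (G → Bool)).1 = (j : OnePoint G)) :=
        fun hy => h1 (hj.trans hy.symm)
      simp [hj, hy]
    · refine ⟨_, ⟨pC A j, StarAlgebra.subset_adjoin ℂ _ (Or.inr ⟨j, rfl⟩), rfl⟩, ?_⟩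
      have hx : ¬ ((x : OnePoint G × (G → Bool)).1 = (j : OnePoint G)) :=
        fun hx => h1 (hx.trans hj.symm)
      simp [hj, hx]
  · obtain ⟨i, hi⟩ : ∃ i, x.1.2 i ≠ y.1.2 i := Function.ne_iff.mp hc
    refine ⟨_, ⟨qC A i, StarAlgebra.subset_adjoin ℂ _ (Or.inl ⟨i, rfl⟩), rfl⟩, ?_⟩
    simp only [qC_apply]
    rcases hb : x.1.2 i with _ | _ <;> rcases hb' : y.1.2 i with _ | _ <;>
      simp_all

lemma phiHom_mem_RtA (A : G → G → Bool) (f : C(GammaT A, ℂ)) : PhiHom A f ∈ RtA A := by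
  have hf : f ∈ ((SGamma A).topologicalClosure : Set C(GammaT A, ℂ)) := by
    rw [sGamma_dense A]; trivial
  rw [StarSubalgebra.topologicalClosure_coe] at hf
  have hcont : Continuous (PhiHom A) := (phiHom_isometry A).continuous
  have himg : PhiHom A f ∈ closure (PhiHom A '' (SGamma A : Set C(GammaT A, ℂ))) :=
    Set.MapsTo.closure (Set.mapsTo_image _ _) hcont hf
  refine closure_mono ?_ himg
  intro g hg
  obtain ⟨f', hf', rfl⟩ := hg
  show PhiHom A f' ∈ (StarAlgebra.adjoin ℂ (gens A) : Set (G →ᵇ ℂ))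
  have : PhiHom A f' ∈ StarSubalgebra.map (PhiHom A) (SGamma A) := ⟨f', hf', rfl⟩
  rw [SGamma, StarAlgHom.map_adjoin] at this
  refine StarAlgebra.adjoin_le ?_ this
  rintro g ⟨f'', (⟨i, rfl⟩ | ⟨j, rfl⟩), rfl⟩
  · rw [phiHom_qC]; exact StarAlgebra.subset_adjoin ℂ _ (Or.inl ⟨i, rfl⟩)
  · rw [phiHom_pC]; exact StarAlgebra.subset_adjoin ℂ _ (Or.inr ⟨j, rfl⟩)

lemma RtA_le_range (A : G → G → Bool) {g : G →ᵇ ℂ} (hg : g ∈ RtA A) :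
    ∃ f : C(GammaT A, ℂ), PhiHom A f = g := by
  have hclosed : IsClosed (Set.range (PhiHom A)) :=
    ((phiHom_isometry A).isClosedEmbedding).isClosed_range
  have hrange : (RtA A : Set (G →ᵇ ℂ)) ⊆ Set.range (PhiHom A) := by
    rw [RtA, StarSubalgebra.topologicalClosure_coe]
    refine closure_minimal ?_ hclosed
    have : StarAlgebra.adjoin ℂ (gens A) ≤ ((PhiHom A).range : StarSubalgebra ℂ (G →ᵇ ℂ)) := by
      apply StarAlgebra.adjoin_le
      rintro g (⟨i, rfl⟩ | ⟨i, rfl⟩)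
      · exact ⟨qC A i, phiHom_qC A i⟩
      · exact ⟨pC A i, phiHom_pC A i⟩
    intro x hx
    obtain ⟨f, hf⟩ := this hx
    exact ⟨f, hf⟩
  exact hrange hg

set_option synthInstance.maxHeartbeats 1000000 in
set_option maxHeartbeats 1000000 in
/-- The isomorphism between `C(Γ̃_A, ℂ)` and `R̃_A`. -/
def eRtA (A : G → G → Bool) : C(GammaT A, ℂ) ≃⋆ₐ[ℂ] RtA A :=
  StarAlgEquiv.ofBijective ((PhiHom A).codRestrict (RtA A) (phiHom_mem_RtA A))
    ⟨(StarAlgHom.injective_codRestrict _ _ _).mpr (phiHom_isometry A).injective,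
      fun g => by
        obtain ⟨f, hf⟩ := RtA_le_range A g.2
        exact ⟨f, Subtype.ext hf⟩⟩

lemma eRtA_symm_delB (A : G → G → Bool) (i : G) (h : delB i ∈ RtA A) :
    (eRtA A).symm ⟨delB i, h⟩ = pC A i := by
  apply (eRtA A).injective
  show (eRtA A) ((eRtA A).symm ⟨delB i, h⟩) = (eRtA A) (pC A i)
  rw [(eRtA A).apply_symm_apply]
  exact Subtype.ext (phiHom_pC A i).symm

lemma eRtA_symm_rhoB (A : G → G → Bool) (i : G) (h : rhoB A i ∈ RtA A) :
    (eRtA A).symm ⟨rhoB A i, h⟩ = qC A i := by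
  apply (eRtA A).injective
  show (eRtA A) ((eRtA A).symm ⟨rhoB A i, h⟩) = (eRtA A) (qC A i)
  rw [(eRtA A).apply_symm_apply]
  exact Subtype.ext (phiHom_qC A i).symm

end CKAux

section BSide
open CK CKAux WeakDual

lemma CKAux.complex_idem {z : ℂ} (h : z * z = z) : z = 0 ∨ z = 1 := by
  have h0 : z * (z - 1) = 0 := by rw [mul_sub, h, mul_one, sub_self]
  rcases mul_eq_zero.mp h0 with h1 | h1
  · exact Or.inl h1
  · exact Or.inr (sub_eq_zero.mp h1)

namespace CKAux

variable {G : Type*} {B : Type*} [NormedRing B] [StarRing B] [CStarRing B] [CompleteSpace B]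
  [NormedAlgebra ℂ B] [StarModule ℂ B]

/-- The closed star subalgebra of `B` generated by the projections. -/
def Dalg (P Q : G → B) : StarSubalgebra ℂ B :=
  (StarAlgebra.adjoin ℂ (Set.range P ∪ Set.range Q)).topologicalClosure

lemma isClosed_Dalg (P Q : G → B) : IsClosed (Dalg P Q : Set B) :=
  StarSubalgebra.isClosed_topologicalClosure _

lemma Pmem (P Q : G → B) (j : G) : P j ∈ Dalg P Q :=
  StarSubalgebra.le_topologicalClosure _
    (StarAlgebra.subset_adjoin ℂ _ (Or.inl ⟨j, rfl⟩))

lemma Qmem (P Q : G → B) (i : G) : Q i ∈ Dalg P Q :=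
  StarSubalgebra.le_topologicalClosure _
    (StarAlgebra.subset_adjoin ℂ _ (Or.inr ⟨i, rfl⟩))

def PD (P Q : G → B) (j : G) : Dalg P Q := ⟨P j, Pmem P Q j⟩
def QD (P Q : G → B) (i : G) : Dalg P Q := ⟨Q i, Qmem P Q i⟩

@[simp] lemma coe_PD (P Q : G → B) (j : G) : (PD P Q j : B) = P j := rfl
@[simp] lemma coe_QD (P Q : G → B) (i : G) : (QD P Q i : B) = Q i := rfl

/-- commutativity of `Dalg`. -/
lemma dalg_comm (A : G → G → Bool) (P Q : G → B)
    (hPsa : ∀ i, IsSelfAdjoint (P i)) (hQsa : ∀ i, IsSelfAdjoint (Q i))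
    (hQc : ∀ i j, Commute (Q i) (Q j)) (hPo : ∀ i j, i ≠ j → P i * P j = 0)
    (hQP : ∀ i j, Q i * P j = if A i j = true then P j else 0) :
    ∀ a ∈ Dalg P Q, ∀ b ∈ Dalg P Q, a * b = b * a := by
  set s : Set B := Set.range P ∪ Set.range Q with hs
  have hsa : ∀ x ∈ s, IsSelfAdjoint x := by
    rintro x (⟨j, rfl⟩ | ⟨i, rfl⟩)
    exacts [hPsa j, hQsa i]
  have hQPc : ∀ i j, Commute (Q i) (P j) := by
    intro i j
    have h1 : IsSelfAdjoint (Q i * P j) := by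
      rw [hQP i j]
      split
      · exact hPsa j
      · simp [IsSelfAdjoint]
    show Q i * P j = P j * Q i
    conv_lhs => rw [← h1]
    rw [star_mul, (hPsa j), (hQsa i)]
  have hgens : ∀ a ∈ s, ∀ b ∈ s, Commute a b := by
    rintro a (⟨j, rfl⟩ | ⟨i, rfl⟩) b (⟨j', rfl⟩ | ⟨i', rfl⟩)
    · by_cases h : j = j'
      · subst h; exact Commute.refl _
      · show P j * P j' = P j' * P j
        rw [hPo j j' h, hPo j' j (Ne.symm h)]
    · exact (hQPc i' j).symm
    · exact hQPc i j'
    · exact hQc i i'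
  -- the adjoin is commutative
  have hstar : s ∪ star s = s := by
    apply Set.union_eq_self_of_subset_right
    intro x hx
    rw [Set.mem_star] at hx
    have h1 := hsa _ hx
    have h2 : x = star x := (star_star x).symm.trans h1
    rw [h2]; exact hx
  have hadj : ∀ a ∈ StarAlgebra.adjoin ℂ s, ∀ b ∈ StarAlgebra.adjoin ℂ s, Commute a b := by
    have hmem : ∀ x, x ∈ StarAlgebra.adjoin ℂ s ↔ x ∈ Algebra.adjoin ℂ s := by
      intro x
      rw [← StarSubalgebra.mem_toSubalgebra, StarAlgebra.adjoin_toSubalgebra, hstar]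
    intro a ha b hb
    rw [hmem] at ha hb
    exact Algebra.adjoin_induction₂
      (fun x y hx hy => hgens x hx y hy)
      (fun r₁ r₂ => Algebra.commutes r₁ _)
      (fun r x _ => (Algebra.commutes r x))
      (fun r x _ => (Algebra.commutes r x).symm)
      (fun x y z _ _ _ h₁ h₂ => h₁.add_left h₂)
      (fun x y z _ _ _ h₁ h₂ => h₁.add_right h₂)
      (fun x y z _ _ _ h₁ h₂ => h₁.mul_left h₂)
      (fun x y z _ _ _ h₁ h₂ => h₁.mul_right h₂)
      ha hb
  -- pass to the closure
  intro a ha b hb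
  rw [Dalg] at ha hb
  replace ha : a ∈ closure (StarAlgebra.adjoin ℂ s : Set B) := by
    rw [← StarSubalgebra.topologicalClosure_coe]; exact ha
  replace hb : b ∈ closure (StarAlgebra.adjoin ℂ s : Set B) := by
    rw [← StarSubalgebra.topologicalClosure_coe]; exact hb
  have step1 : ∀ y ∈ (StarAlgebra.adjoin ℂ s : Set B), ∀ x ∈
      closure (StarAlgebra.adjoin ℂ s : Set B), x * y = y * x := by
    intro y hy x hx
    have : closure (StarAlgebra.adjoin ℂ s : Set B) ⊆ {x | x * y = y * x} :=
      closure_minimal (fun z hz => hadj z hz y hy)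
        (isClosed_eq (continuous_id.mul continuous_const) (continuous_const.mul continuous_id))
    exact this hx
  have : closure (StarAlgebra.adjoin ℂ s : Set B) ⊆ {x | a * x = x * a} :=
    closure_minimal (fun z hz => step1 z hz a ha)
      (isClosed_eq (continuous_const.mul continuous_id) (continuous_id.mul continuous_const))
  exact this hb

end CKAux
end BSide

section BSide2
open CK CKAux WeakDual

namespace CKAux

variable {G : Type*} {B : Type*} [NormedRing B] [StarRing B] [CStarRing B] [CompleteSpace B]
  [NormedAlgebra ℂ B] [StarModule ℂ B]

variable (P Q : G → B)

open scoped Classical in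
/-- second coordinate of the map `θ`. -/
noncomputable def cfunD (χ : characterSpace ℂ (Dalg P Q)) : G → Bool :=
  fun i => decide (χ (QD P Q i) = 1)

open scoped Classical in
/-- first coordinate of the map `θ`. -/
noncomputable def omegaD (χ : characterSpace ℂ (Dalg P Q)) : OnePoint G :=
  if h : ∃ j, χ (PD P Q j) = 1 then ((h.choose : G) : OnePoint G) else OnePoint.infty

variable {P Q}

lemma chiQ01 (hQ : ∀ i, IsIdempotentElem (Q i)) (χ : characterSpace ℂ (Dalg P Q)) (i : G) :
    χ (QD P Q i) = 0 ∨ χ (QD P Q i) = 1 :=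
  complex_idem (by rw [← map_mul]; exact congrArg χ (Subtype.ext (hQ i)))

lemma chiP01 (hP : ∀ i, IsIdempotentElem (P i)) (χ : characterSpace ℂ (Dalg P Q)) (j : G) :
    χ (PD P Q j) = 0 ∨ χ (PD P Q j) = 1 :=
  complex_idem (by rw [← map_mul]; exact congrArg χ (Subtype.ext (hP j)))

lemma chiP_unique (hPo : ∀ i j : G, i ≠ j → P i * P j = 0) (χ : characterSpace ℂ (Dalg P Q))
    {j j' : G} (hj : χ (PD P Q j) = 1) (hj' : χ (PD P Q j') = 1) : j = j' := by
  by_contra hne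
  have h0 : χ (PD P Q j) * χ (PD P Q j') = 0 := by
    rw [← map_mul]
    have : (PD P Q j) * (PD P Q j') = 0 := Subtype.ext (hPo j j' hne)
    rw [this, map_zero]
  rw [hj, hj', mul_one] at h0
  exact one_ne_zero h0

lemma omegaD_eq_coe_iff (hPo : ∀ i j : G, i ≠ j → P i * P j = 0)
    (χ : characterSpace ℂ (Dalg P Q)) (j : G) :
    omegaD P Q χ = (j : OnePoint G) ↔ χ (PD P Q j) = 1 := by
  unfold omegaD
  split_ifs with h
  · constructor
    · intro he
      rw [OnePoint.coe_eq_coe] at he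
      rw [← he]
      exact h.choose_spec
    · intro hj
      rw [OnePoint.coe_eq_coe]
      exact chiP_unique hPo χ h.choose_spec hj
  · constructor
    · intro he; exact absurd he.symm (OnePoint.coe_ne_infty j)
    · intro hj; exact absurd ⟨j, hj⟩ h

lemma chiQ_of_P {A : G → G → Bool} (hQP : ∀ i j, Q i * P j = if A i j = true then P j else 0)
    (χ : characterSpace ℂ (Dalg P Q)) {j : G} (hj : χ (PD P Q j) = 1) (i : G) :
    χ (QD P Q i) = if A i j then 1 else 0 := by
  have hD : QD P Q i * PD P Q j = if A i j = true then PD P Q j else 0 := by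
    apply Subtype.ext
    show Q i * P j = _
    rw [hQP i j]
    split <;> rfl
  have h2 := congrArg χ hD
  rw [map_mul, hj, mul_one] at h2
  rw [h2]
  split
  · exact hj
  · exact map_zero χ

open scoped Classical in
lemma cfunD_of_P {A : G → G → Bool} (hQP : ∀ i j, Q i * P j = if A i j = true then P j else 0)
    (χ : characterSpace ℂ (Dalg P Q)) {j : G} (hj : χ (PD P Q j) = 1) :
    cfunD P Q χ = col A j := by
  funext i
  rw [cfunD, col]
  rw [chiQ_of_P hQP χ hj i]
  cases hA : A i j
  · simp
  · simp

lemma continuous_eval_chi (x : Dalg P Q) :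
    Continuous fun χ : characterSpace ℂ (Dalg P Q) => χ x :=
  (WeakDual.eval_continuous x).comp continuous_subtype_val

lemma isClosed_eqone (x : Dalg P Q) :
    IsClosed {χ : characterSpace ℂ (Dalg P Q) | χ x = 1} :=
  isClosed_eq (continuous_eval_chi x) continuous_const

lemma isOpen_eqone (x : Dalg P Q) (h01 : ∀ χ : characterSpace ℂ (Dalg P Q), χ x = 0 ∨ χ x = 1) :
    IsOpen {χ : characterSpace ℂ (Dalg P Q) | χ x = 1} := by
  rw [← isClosed_compl_iff]
  have : {χ : characterSpace ℂ (Dalg P Q) | χ x = 1}ᶜ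
      = {χ : characterSpace ℂ (Dalg P Q) | χ x = 0} := by
    ext χ
    simp only [Set.mem_compl_iff, Set.mem_setOf_eq]
    rcases h01 χ with h | h <;> simp [h]
  rw [this]
  exact isClosed_eq (continuous_eval_chi x) continuous_const

variable [TopologicalSpace G] [DiscreteTopology G]

open scoped Classical in
lemma thetaD_cont (hPidem : ∀ i, IsIdempotentElem (P i)) (hQidem : ∀ i, IsIdempotentElem (Q i))
    (hPo : ∀ i j : G, i ≠ j → P i * P j = 0) :
    Continuous fun χ : characterSpace ℂ (Dalg P Q) =>
      ((omegaD P Q χ, cfunD P Q χ) : OnePoint G × (G → Bool)) := by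
  apply Continuous.prodMk
  · -- omegaD is continuous
    rw [continuous_def]
    intro U hU
    by_cases hinf : OnePoint.infty ∈ U
    · have hcompact := (OnePoint.isOpen_iff_of_mem' hinf).mp hU
      have hfinK : ((((↑) : G → OnePoint G) ⁻¹' U)ᶜ : Set G).Finite :=
        hcompact.1.finite_of_discrete
      have hset : (fun χ : characterSpace ℂ (Dalg P Q) => omegaD P Q χ) ⁻¹' U =
          ⋂ j ∈ ((((↑) : G → OnePoint G) ⁻¹' U)ᶜ : Set G),
            {χ : characterSpace ℂ (Dalg P Q) | χ (PD P Q j) = 1}ᶜ := by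
        ext χ
        simp only [Set.mem_preimage, Set.mem_iInter, Set.mem_compl_iff, Set.mem_setOf_eq]
        constructor
        · intro hm j hj h1
          exact hj ((omegaD_eq_coe_iff hPo χ j).mpr h1 ▸ hm)
        · intro hall
          rcases ho : omegaD P Q χ with _ | j
          · exact hinf
          · have h1 := (omegaD_eq_coe_iff hPo χ j).mp ho
            by_contra hU'
            exact hall j (fun hj => hU' hj) h1
      rw [hset]
      exact hfinK.isOpen_biInter fun j _ => (isClosed_eqone (PD P Q j)).isOpen_compl
    · have hset : (fun χ : characterSpace ℂ (Dalg P Q) => omegaD P Q χ) ⁻¹' U =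
          ⋃ j ∈ (((↑) : G → OnePoint G) ⁻¹' U : Set G),
            {χ : characterSpace ℂ (Dalg P Q) | χ (PD P Q j) = 1} := by
        ext χ
        simp only [Set.mem_preimage, Set.mem_iUnion, Set.mem_setOf_eq]
        constructor
        · intro hm
          rcases ho : omegaD P Q χ with _ | j
          · rw [ho] at hm; exact absurd hm hinf
          · exact ⟨j, by rw [ho] at hm; exact hm, (omegaD_eq_coe_iff hPo χ j).mp ho⟩
        · rintro ⟨j, hjU, h1⟩
          rw [(omegaD_eq_coe_iff hPo χ j).mpr h1]
          exact hjU
      rw [hset]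
      exact isOpen_biUnion fun j _ =>
        isOpen_eqone (PD P Q j) (fun χ => chiP01 hPidem χ j)
  · -- cfunD is continuous
    apply continuous_pi
    intro i
    rw [continuous_bool_rng true]
    have : (fun χ : characterSpace ℂ (Dalg P Q) => cfunD P Q χ i) ⁻¹' {true} =
        {χ : characterSpace ℂ (Dalg P Q) | χ (QD P Q i) = 1} := by
      ext χ
      simp [cfunD]
    rw [this]
    exact ⟨isClosed_eqone _, isOpen_eqone _ (fun χ => chiQ01 hQidem χ i)⟩

end CKAux
end BSide2

section BSide3
open CK CKAux WeakDual

namespace CKAux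

variable {G : Type*} {B : Type*} [NormedRing B] [StarRing B] [CStarRing B] [CompleteSpace B]
  [NormedAlgebra ℂ B] [StarModule ℂ B] {P Q : G → B}
variable [TopologicalSpace G] [DiscreteTopology G]

open scoped Classical in
lemma thetaD_mem (A : G → G → Bool)
    (hPidem : ∀ i, IsIdempotentElem (P i))
    (hQidem : ∀ i, IsIdempotentElem (Q i))
    (hPo : ∀ i j : G, i ≠ j → P i * P j = 0)
    (hQc : ∀ i j, Commute (Q i) (Q j))
    (hQP : ∀ i j, Q i * P j = if A i j = true then P j else 0)
    (hCK : ∀ (X Y : Finset G)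
      (hfin : {j : G | (∀ x ∈ X, A x j = true) ∧ ∀ y ∈ Y, A y j = false}.Finite),
      X.noncommProd Q (fun a _ b _ _ => hQc a b) *
        Y.noncommProd (fun y => 1 - Q y)
          (fun a _ b _ _ => (Commute.one_left (1 - Q b)).sub_left
            (((Commute.one_right (Q a)).sub_right (hQc a b)))) =
      ∑ j ∈ hfin.toFinset, P j)
    (χ : characterSpace ℂ (Dalg P Q)) :
    ((omegaD P Q χ, cfunD P Q χ) : OnePoint G × (G → Bool)) ∈ GammaT A := by
  by_cases h : ∃ j, χ (PD P Q j) = 1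
  · obtain ⟨j, hj⟩ := h
    have ho : omegaD P Q χ = (j : OnePoint G) := (omegaD_eq_coe_iff hPo χ j).mpr hj
    have hc : cfunD P Q χ = col A j := cfunD_of_P hQP χ hj
    rw [ho, hc]
    exact subset_closure ⟨j, rfl⟩
  · have hP0 : ∀ j, χ (PD P Q j) = 0 :=
      fun j => (chiP01 hPidem χ j).resolve_right (fun h1 => h ⟨j, h1⟩)
    have ho : omegaD P Q χ = OnePoint.infty := by rw [omegaD, dif_neg h]
    rw [ho, GammaT, mem_closure_iff]
    intro o ho' hmem
    obtain ⟨U, V, hU, hV, hmemU, hmemV, hsub⟩ := isOpen_prod_iff.mp ho' _ _ hmem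
    obtain ⟨I, u, hu, hpi⟩ := isOpen_pi_iff.mp hV _ hmemV
    set X : Finset G := I.filter (fun i => cfunD P Q χ i = true) with hX
    set Y : Finset G := I.filter (fun i => ¬(cfunD P Q χ i = true)) with hY
    have hSinf : {j : G | (∀ x ∈ X, A x j = true) ∧ ∀ y ∈ Y, A y j = false}.Infinite := by
      by_contra hfin'
      rw [Set.not_infinite] at hfin'
      have heq := hCK X Y hfin'
      -- lift the equation into `Dalg P Q`
      have hQcD : ∀ a b : G, Commute (QD P Q a) (QD P Q b) :=
        fun a b => Subtype.ext (hQc a b)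
      have hcommX : (X : Set G).Pairwise fun a b => Commute (QD P Q a) (QD P Q b) :=
        fun a _ b _ _ => hQcD a b
      have hcommY : (Y : Set G).Pairwise fun a b =>
          Commute ((1 : Dalg P Q) - QD P Q a) (1 - QD P Q b) :=
        fun a _ b _ _ => (Commute.one_left (1 - QD P Q b)).sub_left
          (((Commute.one_right (QD P Q a)).sub_right (hQcD a b)))
      set ι : Dalg P Q →⋆ₐ[ℂ] B := (Dalg P Q).subtype with hι
      have hxX : ι (X.noncommProd (QD P Q) hcommX) =
          X.noncommProd Q (fun a _ b _ _ => hQc a b) := by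
        rw [Finset.map_noncommProd]
        rfl
      have hyY : ι (Y.noncommProd (fun y => (1 : Dalg P Q) - QD P Q y) hcommY) =
          Y.noncommProd (fun y => 1 - Q y)
            (fun a _ b _ _ => (Commute.one_left (1 - Q b)).sub_left
              (((Commute.one_right (Q a)).sub_right (hQc a b)))) := by
        rw [Finset.map_noncommProd]
        rfl
      have hsum : ι (∑ j ∈ hfin'.toFinset, PD P Q j) = ∑ j ∈ hfin'.toFinset, P j := by
        rw [map_sum]
        rfl
      have heqD : X.noncommProd (QD P Q) hcommX *
          Y.noncommProd (fun y => (1 : Dalg P Q) - QD P Q y) hcommY =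
          ∑ j ∈ hfin'.toFinset, PD P Q j := by
        apply Subtype.coe_injective
        show ι (_ * _) = ι _
        rw [map_mul, hxX, hyY, hsum]
        exact heq
      have hchi := congrArg χ heqD
      rw [map_mul, map_sum] at hchi
      have hXval : χ (X.noncommProd (QD P Q) hcommX) = 1 := by
        rw [Finset.map_noncommProd, Finset.noncommProd_eq_prod]
        apply Finset.prod_eq_one
        intro x hx
        exact of_decide_eq_true (Finset.mem_filter.mp hx).2
      have hYval : χ (Y.noncommProd (fun y => (1 : Dalg P Q) - QD P Q y) hcommY) = 1 := by
        rw [Finset.map_noncommProd, Finset.noncommProd_eq_prod]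
        apply Finset.prod_eq_one
        intro y hy
        have hy2 := (Finset.mem_filter.mp hy).2
        have h0 : χ (QD P Q y) = 0 :=
          (chiQ01 hQidem χ y).resolve_right (fun h1 => hy2 (decide_eq_true h1))
        rw [map_sub, map_one, h0, sub_zero]
      rw [hXval, hYval, one_mul] at hchi
      have hzero : (1 : ℂ) = 0 := by
        rw [hchi]
        exact Finset.sum_eq_zero fun j _ => hP0 j
      exact one_ne_zero hzero
    have hKfin : ((((↑) : G → OnePoint G) ⁻¹' U)ᶜ : Set G).Finite :=
      ((OnePoint.isOpen_iff_of_mem' hmemU).mp hU).1.finite_of_discrete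
    obtain ⟨j, hjS, hjK⟩ := (hSinf.diff hKfin).nonempty
    have hjU : (j : OnePoint G) ∈ U := by
      by_contra hc
      exact hjK hc
    refine ⟨((j : OnePoint G), col A j), hsub ⟨hjU, hpi (Set.mem_pi.mpr fun i hi => ?_)⟩,
      ⟨j, rfl⟩⟩
    have hcol : col A j i = cfunD P Q χ i := by
      by_cases hci : cfunD P Q χ i = true
      · have hiX : i ∈ X := Finset.mem_filter.mpr ⟨hi, hci⟩
        show A i j = _
        rw [hjS.1 i hiX, hci]
      · have hiY : i ∈ Y := Finset.mem_filter.mpr ⟨hi, hci⟩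
        have hcf : cfunD P Q χ i = false := by simpa using hci
        show A i j = _
        rw [hjS.2 i hiY, hcf]
    have hui := (hu i hi).2
    rw [← hcol] at hui
    exact hui

end CKAux
end BSide3



/-- If `{P_i}, {Q_i}` are projections in a unital C*-algebra `B` satisfying
the (generalized Cuntz–Krieger) relations (i)–(iv), then `δ_i ↦ P_i`, `ρ_i ↦ Q_i` extends to
a unital *-algebra homomorphism `R̃_A → B`. -/
theorem stmt_7 {G : Type*} [Nonempty G] [TopologicalSpace G] [DiscreteTopology G]
    [DecidableEq G] (A : G → G → Bool) (hA : ∀ i : G, ∃ j : G, A i j = true)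
    {B : Type*} [NormedRing B] [StarRing B] [CStarRing B] [CompleteSpace B]
    [NormedAlgebra ℂ B] [StarModule ℂ B]
    (P Q : G → B)
    (hPproj : ∀ i : G, IsSelfAdjoint (P i) ∧ IsIdempotentElem (P i))
    (hQproj : ∀ i : G, IsSelfAdjoint (Q i) ∧ IsIdempotentElem (Q i))
    -- (i) the `Q_i` commute
    (hQc : ∀ i j : G, Commute (Q i) (Q j))
    -- (ii) the `P_i` are mutually orthogonal
    (hPo : ∀ i j : G, i ≠ j → P i * P j = 0)
    -- (iii) `Q_i P_j = A(i,j) P_j`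
    (hQP : ∀ i j : G, Q i * P j = if A i j = true then P j else 0)
    -- (iv) the Cuntz–Krieger relation for pairs of finite sets `X`, `Y` for which the
    -- function `j ↦ A(X,Y,j)` is finitely supported
    (hCK : ∀ (X Y : Finset G)
      (hfin : {j : G | (∀ x ∈ X, A x j = true) ∧ ∀ y ∈ Y, A y j = false}.Finite),
      X.noncommProd Q (fun a _ b _ _ => hQc a b) *
        Y.noncommProd (fun y => 1 - Q y)
          (fun a _ b _ _ => (Commute.one_left (1 - Q b)).sub_left
            (((Commute.one_right (Q a)).sub_right (hQc a b)))) =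
      ∑ j ∈ hfin.toFinset, P j) :
    ∃ Φ : CK.RtA A →⋆ₐ[ℂ] B,
      (∀ (i : G) (h : CK.delB i ∈ CK.RtA A), Φ ⟨CK.delB i, h⟩ = P i) ∧
      (∀ (i : G) (h : CK.rhoB A i ∈ CK.RtA A), Φ ⟨CK.rhoB A i, h⟩ = Q i) := by

  classical
  letI : CStarAlgebra B :=
    { ‹NormedRing B›, ‹StarRing B›, ‹CStarRing B›, ‹CompleteSpace B›,
      ‹NormedAlgebra ℂ B›, ‹StarModule ℂ B› with }
  haveI hDc : IsClosed ((CKAux.Dalg P Q : Set B)) := CKAux.isClosed_Dalg P Q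
  letI : CommCStarAlgebra ↥(CKAux.Dalg P Q) :=
    { (inferInstance : CStarAlgebra ↥(CKAux.Dalg P Q)) with
      mul_comm := fun x y => Subtype.ext
        (CKAux.dalg_comm A P Q (fun i => (hPproj i).1) (fun i => (hQproj i).1) hQc hPo hQP
          x.1 x.2 y.1 y.2) }
  -- the continuous map θ from the character space of `D` to `Γ̃_A`
  let θ : C(WeakDual.characterSpace ℂ ↥(CKAux.Dalg P Q), CK.GammaT A) :=
    ⟨fun χ => ⟨(CKAux.omegaD P Q χ, CKAux.cfunD P Q χ),
        CKAux.thetaD_mem A (fun i => (hPproj i).2) (fun i => (hQproj i).2) hPo hQc hQP hCK χ⟩,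
      Continuous.subtype_mk
        (CKAux.thetaD_cont (fun i => (hPproj i).2) (fun i => (hQproj i).2) hPo) _⟩
  -- the star algebra homomorphism ψ : C(Γ̃_A, ℂ) → B
  let gel := gelfandStarTransform ↥(CKAux.Dalg P Q)
  let ψ : C(CK.GammaT A, ℂ) →⋆ₐ[ℂ] B :=
    (CKAux.Dalg P Q).subtype.comp
      ((StarAlgHomClass.toStarAlgHom gel.symm).comp
        (θ.compStarAlgHom' ℂ ℂ))
  have hψp : ∀ j : G, ψ (CKAux.pC A j) = P j := by
    intro j
    show (CKAux.Dalg P Q).subtype (gel.symm ((CKAux.pC A j).comp θ)) = P j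
    have hkey : gel.symm ((CKAux.pC A j).comp θ) = CKAux.PD P Q j := by
      have hs := gel.symm_apply_apply (CKAux.PD P Q j)
      rw [← hs]
      congr 1
      ext χ
      show CKAux.pC A j (θ χ) = gel (CKAux.PD P Q j) χ
      have hg : gel (CKAux.PD P Q j) χ = χ (CKAux.PD P Q j) := rfl
      rw [hg]
      show (if CKAux.omegaD P Q χ = (j : OnePoint G) then (1:ℂ) else 0) = χ (CKAux.PD P Q j)
      rcases CKAux.chiP01 (fun i => (hPproj i).2) χ j with h0 | h1
      · rw [if_neg, h0]
        intro he
        rw [(CKAux.omegaD_eq_coe_iff hPo χ j).mp he] at h0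
        exact one_ne_zero h0
      · rw [if_pos ((CKAux.omegaD_eq_coe_iff hPo χ j).mpr h1), h1]
    rw [hkey]
    rfl
  have hψq : ∀ i : G, ψ (CKAux.qC A i) = Q i := by
    intro i
    show (CKAux.Dalg P Q).subtype (gel.symm ((CKAux.qC A i).comp θ)) = Q i
    have hkey : gel.symm ((CKAux.qC A i).comp θ) = CKAux.QD P Q i := by
      have hs := gel.symm_apply_apply (CKAux.QD P Q i)
      rw [← hs]
      congr 1
      ext χ
      show CKAux.qC A i (θ χ) = gel (CKAux.QD P Q i) χ
      have hg : gel (CKAux.QD P Q i) χ = χ (CKAux.QD P Q i) := rfl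
      rw [hg]
      show (if decide (χ (CKAux.QD P Q i) = 1) = true then (1:ℂ) else 0) = χ (CKAux.QD P Q i)
      rcases CKAux.chiQ01 (fun k => (hQproj k).2) χ i with h0 | h1
      · rw [if_neg, h0]
        intro he
        have h2 := of_decide_eq_true he
        rw [h0] at h2
        exact zero_ne_one h2
      · rw [if_pos (decide_eq_true h1), h1]
    rw [hkey]
    rfl
  refine ⟨ψ.comp (StarAlgHomClass.toStarAlgHom (CKAux.eRtA A).symm), fun i h => ?_, fun i h => ?_⟩
  · show ψ ((CKAux.eRtA A).symm ⟨CK.delB i, h⟩) = P i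
    rw [CKAux.eRtA_symm_delB A i h]
    exact hψp i
  · show ψ ((CKAux.eRtA A).symm ⟨CK.rhoB A i, h⟩) = Q i
    rw [CKAux.eRtA_symm_rhoB A i h]
    exact hψq i
end
end

section
/- Let X be a locally compact Hausdorff space and {E_i}_{i∈Λ} a family of idempotent elements of C₀(X, ℂ) (so each E_i is a continuous {0,1}-valued function vanishing at infinity), and suppose the smallest closed subalgebra of C₀(X, ℂ) containing every E_i is all of C₀(X, ℂ). Then a function f ∈ C₀(X, ℂ) takes all its values in ℤ if and only if f belongs to the subring of C₀(X, ℂ) generated by {E_i : i ∈ Λ}. (In other words, C₀(X; ℤ) equals the ring generated by the E_i.) -/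
open scoped ZeroAtInfty

private lemma c0_sum_apply {X : Type*} [TopologicalSpace X] {ι : Type*} (s : Finset ι)
    (h : ι → C₀(X, ℂ)) (x : X) : (∑ i ∈ s, h i) x = ∑ i ∈ s, h i x := by
  let ev : C₀(X, ℂ) →+ ℂ :=
    { toFun := fun u => u x, map_zero' := rfl, map_add' := fun a b => rfl }
  exact map_sum ev h s

/-- If `X` is locally compact Hausdorff and `{E_i}` is a family of idempotents
of `C₀(X, ℂ)` generating `C₀(X, ℂ)` as a closed subalgebra, then the integer-valued functions
in `C₀(X, ℂ)` are exactly the members of the subring generated by the `E_i`. -/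
theorem stmt_8 {X : Type*} [TopologicalSpace X] [LocallyCompactSpace X] [T2Space X]
    {Λ : Type*} (E : Λ → C₀(X, ℂ))
    (hidem : ∀ i : Λ, E i * E i = E i)
    (hgen : closure ((NonUnitalAlgebra.adjoin ℂ (Set.range E) :
        NonUnitalSubalgebra ℂ C₀(X, ℂ)) : Set C₀(X, ℂ)) = Set.univ) :
    ∀ f : C₀(X, ℂ), (∀ x : X, ∃ n : ℤ, f x = (n : ℂ)) ↔
      f ∈ NonUnitalSubring.closure (Set.range E) := by
  classical
  set R : NonUnitalSubring C₀(X, ℂ) := NonUnitalSubring.closure (Set.range E) with hRdef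
  -- every element of the subsemigroup closure is idempotent
  have hidem' : ∀ p ∈ Subsemigroup.closure (Set.range E), p * p = p := by
    intro p hp
    induction hp using Subsemigroup.closure_induction with
    | mem q hq => obtain ⟨i, rfl⟩ := hq; exact hidem i
    | mul a b _ _ ha hb =>
        calc a * b * (a * b) = a * a * (b * b) := by
              rw [mul_assoc, mul_assoc, mul_comm b (a * b), mul_assoc]
          _ = a * b := by rw [ha, hb]
  -- pointwise values of such idempotents are 0 or 1
  have hval : ∀ p ∈ Subsemigroup.closure (Set.range E), ∀ x : X, p x = 0 ∨ p x = 1 := by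
    intro p hp x
    have h1 : p x * p x = p x := by
      have := congrFun (ZeroAtInftyContinuousMap.coe_mul p p) x
      rw [hidem' p hp] at this
      simpa using this.symm
    have h2 : p x * (p x - 1) = 0 := by linear_combination h1
    rcases mul_eq_zero.mp h2 with h | h
    · exact Or.inl h
    · exact Or.inr (sub_eq_zero.mp h)
  -- every element of the subsemigroup closure is in R
  have hmem : ∀ p ∈ Subsemigroup.closure (Set.range E), p ∈ R := by
    intro p hp
    induction hp using Subsemigroup.closure_induction with
    | mem q hq => exact NonUnitalSubring.subset_closure hq
    | mul a b _ _ ha hb => exact mul_mem ha hb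
  intro f
  constructor
  · -- forward direction: integer-valued ⇒ in the ring
    intro hf
    -- get an approximant `g` within 1/2 from the dense subalgebra
    have hfc : f ∈ closure ((NonUnitalAlgebra.adjoin ℂ (Set.range E) :
        NonUnitalSubalgebra ℂ C₀(X, ℂ)) : Set C₀(X, ℂ)) := by
      rw [hgen]; exact Set.mem_univ f
    obtain ⟨g, hgS, hdist⟩ := Metric.mem_closure_iff.mp hfc (1/2) (by norm_num)
    have hg' : g ∈ Submodule.span ℂ ((Subsemigroup.closure (Set.range E) : Subsemigroup C₀(X, ℂ)) :
        Set C₀(X, ℂ)) := by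
      rw [← NonUnitalAlgebra.adjoin_eq_span]
      exact hgS
    obtain ⟨c, hcsupp, hcsum⟩ := Submodule.mem_span_set.mp hg'
    set F : Finset C₀(X, ℂ) := c.support with hFdef
    have hFsub : ∀ p ∈ F, p ∈ Subsemigroup.closure (Set.range E) := fun p hp => hcsupp hp
    -- pointwise distance bound
    have hpt : ∀ x : X, ‖f x - g x‖ < 1/2 := by
      intro x
      have h1 : ‖(f - g) x‖ ≤ ‖f - g‖ := by
        have h2 := BoundedContinuousFunction.norm_coe_le_norm (f - g).toBCF x
        rwa [ZeroAtInftyContinuousMap.norm_toBCF_eq_norm] at h2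
      have h3 : ‖f x - g x‖ ≤ ‖f - g‖ := by simpa using h1
      calc ‖f x - g x‖ ≤ ‖f - g‖ := h3
        _ = dist f g := (dist_eq_norm f g).symm
        _ < 1/2 := hdist
    -- pointwise formula for g
    have hgx : ∀ x : X, g x = ∑ p ∈ F, c p * p x := by
      intro x
      rw [← hcsum, Finsupp.sum, c0_sum_apply]
      exact Finset.sum_congr rfl fun p _ => rfl
    -- the "cell" of a point
    set Tx : X → Finset C₀(X, ℂ) := fun x => F.filter (fun p => p x = 1) with hTxdef
    have hgTx : ∀ x : X, g x = ∑ p ∈ Tx x, c p := by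
      intro x
      rw [hgx x, ← Finset.sum_filter_add_sum_filter_not F (fun p => p x = 1)]
      have h1 : ∑ p ∈ F.filter (fun p => p x = 1), c p * p x = ∑ p ∈ Tx x, c p :=
        Finset.sum_congr rfl fun p hp => by
          rw [(Finset.mem_filter.mp hp).2, mul_one]
      have h2 : ∑ p ∈ F.filter (fun p => ¬ p x = 1), c p * p x = 0 :=
        Finset.sum_eq_zero fun p hp => by
          obtain ⟨hpF, hpx⟩ := Finset.mem_filter.mp hp
          rcases hval p (hFsub p hpF) x with h | h
          · rw [h, mul_zero]
          · exact absurd h hpx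
      rw [h1, h2, add_zero]
    -- integer coefficients
    set N : Finset C₀(X, ℂ) → ℤ := fun T => round (∑ p ∈ T, c p).re with hNdef
    have hround : ∀ (n : ℤ) (r : ℝ), |r - n| < 1/2 → round r = n := by
      intro n r h
      rcases abs_lt.mp h with ⟨h1, h2⟩
      rw [round_eq, Int.floor_eq_iff]
      constructor
      · linarith
      · linarith
    have hfx : ∀ x : X, f x = (N (Tx x) : ℂ) := by
      intro x
      obtain ⟨n, hn⟩ := hf x
      rw [hn]
      norm_cast
      have hb : ‖(n : ℂ) - g x‖ < 1/2 := by rw [← hn]; exact hpt x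
      have hre : |(∑ p ∈ Tx x, c p).re - (n : ℝ)| < 1/2 := by
        have h4 := Complex.abs_re_le_norm ((n : ℂ) - g x)
        have h5 : ((n : ℂ) - g x).re = (n : ℝ) - (g x).re := by simp
        rw [h5] at h4
        have h6 : |(g x).re - (n : ℝ)| < 1/2 := by
          rw [abs_sub_comm]; exact lt_of_le_of_lt h4 hb
        rw [← hgTx x]
        exact h6
      exact (hround n _ hre).symm
    -- nonempty products of elements of R, evaluated pointwise
    have hprod : ∀ T : Finset C₀(X, ℂ), (∀ p ∈ T, p ∈ R) → T.Nonempty →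
        ∃ b ∈ R, ∀ x : X, b x = ∏ p ∈ T, p x := by
      intro T
      induction T using Finset.induction with
      | empty => exact fun _ h => absurd h (by simp)
      | @insert a s has ih =>
        intro hmem' _
        by_cases hs : s.Nonempty
        · obtain ⟨b, hbR, hbx⟩ := ih (fun p hp => hmem' p (Finset.mem_insert_of_mem hp)) hs
          refine ⟨a * b, mul_mem (hmem' a (Finset.mem_insert_self a s)) hbR, fun x => ?_⟩
          rw [Finset.prod_insert has, ← hbx x]
          exact congrFun (ZeroAtInftyContinuousMap.coe_mul a b) x
        · rw [Finset.not_nonempty_iff_eq_empty] at hs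
          subst hs
          exact ⟨a, hmem' a (Finset.mem_insert_self a _), fun x => by simp⟩
    -- multiplying by `(1 - p)` for `p` in a finset, staying in R
    have hmask : ∀ s : Finset C₀(X, ℂ), (∀ p ∈ s, p ∈ R) → ∀ a : C₀(X, ℂ), a ∈ R →
        ∃ b ∈ R, ∀ x : X, b x = a x * ∏ p ∈ s, (1 - p x) := by
      intro s
      induction s using Finset.induction with
      | empty => exact fun _ a ha => ⟨a, ha, fun x => by simp⟩
      | @insert q s hqs ih =>
        intro hsR a ha
        obtain ⟨b, hbR, hbx⟩ := ih (fun p hp => hsR p (Finset.mem_insert_of_mem hp)) a ha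
        refine ⟨b - b * q, sub_mem hbR (mul_mem hbR (hsR q (Finset.mem_insert_self q s))),
          fun x => ?_⟩
        have h1 : (b - b * q) x = b x - b x * q x := by
          rw [ZeroAtInftyContinuousMap.coe_sub, Pi.sub_apply,
            ZeroAtInftyContinuousMap.coe_mul, Pi.mul_apply]
        rw [h1, hbx x, Finset.prod_insert hqs]
        ring
    -- the indicator of each cell lies in R
    set P : Finset (Finset C₀(X, ℂ)) := F.powerset.filter (fun T => T.Nonempty) with hPdef
    have hcell : ∀ T ∈ P, ∃ b ∈ R, ∀ x : X,
        b x = (∏ p ∈ T, p x) * ∏ p ∈ F \ T, (1 - p x) := by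
      intro T hT
      rw [hPdef, Finset.mem_filter, Finset.mem_powerset] at hT
      obtain ⟨hTF, hTne⟩ := hT
      obtain ⟨a, haR, hax⟩ := hprod T (fun p hp => hmem p (hFsub p (hTF hp))) hTne
      obtain ⟨b, hbR, hbx⟩ := hmask (F \ T)
        (fun p hp => hmem p (hFsub p (Finset.mem_sdiff.mp hp).1)) a haR
      exact ⟨b, hbR, fun x => by rw [hbx x, hax x]⟩
    choose! b hbR hbx using hcell
    -- vanishing of off-cell indicators
    have hchi0 : ∀ x : X, ∀ T ∈ P, T ≠ Tx x →
        (∏ p ∈ T, p x) * ∏ p ∈ F \ T, (1 - p x) = 0 := by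
      intro x T hT hne
      rw [hPdef, Finset.mem_filter, Finset.mem_powerset] at hT
      obtain ⟨hTF, -⟩ := hT
      by_cases hsub : T ⊆ Tx x
      · have hss : T ⊂ Tx x := hsub.ssubset_of_ne hne
        obtain ⟨p, hpTx, hpT⟩ := Finset.exists_of_ssubset hss
        have hpF : p ∈ F := (Finset.mem_filter.mp hpTx).1
        have hp1 : p x = 1 := (Finset.mem_filter.mp hpTx).2
        have hz : (∏ p ∈ F \ T, (1 - p x)) = 0 :=
          Finset.prod_eq_zero (Finset.mem_sdiff.mpr ⟨hpF, hpT⟩) (by rw [hp1]; ring)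
        rw [hz, mul_zero]
      · obtain ⟨p, hpT, hpTx⟩ := Finset.not_subset.mp hsub
        have hp0 : p x = 0 := by
          rcases hval p (hFsub p (hTF hpT)) x with h | h
          · exact h
          · exact absurd (Finset.mem_filter.mpr ⟨hTF hpT, h⟩) hpTx
        rw [Finset.prod_eq_zero hpT hp0, zero_mul]
    -- the indicator of the cell of x takes value 1 at x
    have hchi1 : ∀ x : X, (∏ p ∈ Tx x, p x) * ∏ p ∈ F \ Tx x, (1 - p x) = 1 := by
      intro x
      have h1 : ∏ p ∈ Tx x, p x = 1 :=
        Finset.prod_eq_one fun p hp => (Finset.mem_filter.mp hp).2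
      have h2 : ∏ p ∈ F \ Tx x, (1 - p x) = 1 :=
        Finset.prod_eq_one fun p hp => by
          obtain ⟨hpF, hpTx⟩ := Finset.mem_sdiff.mp hp
          rcases hval p (hFsub p hpF) x with h | h
          · rw [h]; ring
          · exact absurd (Finset.mem_filter.mpr ⟨hpF, h⟩) hpTx
      rw [h1, h2, mul_one]
    have hsmul_apply : ∀ (n : ℤ) (u : C₀(X, ℂ)) (x : X), (n • u) x = (n : ℂ) * u x := by
      intro n u x
      have h : (n • u) x = n • (u x) := rfl
      rw [h, zsmul_eq_mul]
    -- the decomposition of f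
    have hfinal : f = ∑ T ∈ P.attach, (N T.1) • b T.1 := by
      ext x
      have h1 : (∑ T ∈ P.attach, (N T.1) • b T.1) x
          = ∑ T ∈ P.attach, ((N T.1 : ℂ) * (b T.1) x) := by
        rw [c0_sum_apply]
        exact Finset.sum_congr rfl fun T _ => hsmul_apply _ _ _
      have h2 : ∀ T ∈ P.attach, (N T.1 : ℂ) * (b T.1) x
          = (N T.1 : ℂ) * ((∏ p ∈ T.1, p x) * ∏ p ∈ F \ T.1, (1 - p x)) :=
        fun T _ => by rw [hbx T.1 T.2 x]
      rw [h1, Finset.sum_congr rfl h2,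
        Finset.sum_attach P (fun T => (N T : ℂ) * ((∏ p ∈ T, p x) * ∏ p ∈ F \ T, (1 - p x)))]
      by_cases hne : (Tx x).Nonempty
      · have hTxP : Tx x ∈ P := Finset.mem_filter.mpr
          ⟨Finset.mem_powerset.mpr (Finset.filter_subset _ _), hne⟩
        rw [Finset.sum_eq_single_of_mem (Tx x) hTxP
          (fun T hT hTne => by rw [hchi0 x T hT hTne, mul_zero])]
        rw [hchi1 x, mul_one]
        exact hfx x
      · rw [Finset.not_nonempty_iff_eq_empty] at hne
        have hz : ∀ T ∈ P, (N T : ℂ) * ((∏ p ∈ T, p x) * ∏ p ∈ F \ T, (1 - p x)) = 0 := by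
          intro T hT
          have hTne : T ≠ Tx x := by
            rw [hne]
            exact (Finset.mem_filter.mp hT).2.ne_empty
          rw [hchi0 x T hT hTne, mul_zero]
        rw [Finset.sum_eq_zero hz, hfx x, hne]
        simp [hNdef]
    rw [hfinal]
    exact sum_mem fun T _ => zsmul_mem (hbR T.1 T.2) _
  · -- backward direction: members of the ring are integer-valued
    intro hf
    induction hf using NonUnitalSubring.closure_induction with
    | mem q hq =>
        intro x
        obtain ⟨i, rfl⟩ := hq
        rcases hval (E i) (Subsemigroup.subset_closure ⟨i, rfl⟩) x with h | h
        · exact ⟨0, by simp [h]⟩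
        · exact ⟨1, by simp [h]⟩
    | zero => intro x; exact ⟨0, by simp⟩
    | add a b _ _ ha hb =>
        intro x
        obtain ⟨n, hn⟩ := ha x
        obtain ⟨m, hm⟩ := hb x
        refine ⟨n + m, ?_⟩
        have h : (a + b) x = a x + b x := rfl
        rw [h, hn, hm]; push_cast; ring
    | neg a _ ha =>
        intro x
        obtain ⟨n, hn⟩ := ha x
        refine ⟨-n, ?_⟩
        have h : (-a) x = -(a x) := rfl
        rw [h, hn]; push_cast; ring
    | mul a b _ _ ha hb =>
        intro x
        obtain ⟨n, hn⟩ := ha x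
        obtain ⟨m, hm⟩ := hb x
        refine ⟨n * m, ?_⟩
        have h : (a * b) x = a x * b x := rfl
        rw [h, hn, hm]; push_cast; ring
end
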